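/- arXiv:1907.07250 — 3 statements merged into one kernel-verified Lean document; each statement's English description precedes it below -/
import Mathlib

section
/- Let α > 0 and let ε : ℕ → [α, ∞) be a function. Then there exists a constant K > 0 such that the following holds: let q = q(n) ≥ K·n^(1 + 1/(2·ε(n))) and let χ be a random q-colouring of the hypercube Q_n. Then with high probability every bijection f ∈ Isom^(1)(χ) satisfies f^(−1) ∈ Cluster¹_{ε(n)·n²}. -/
open MeasureTheory Filter Set Asymptotics Topology

noncomputable section

/-- Vertices of the `n`-dimensional hypercube. -/
abbrev V (n : ℕ) : Type := Fin n → Bool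

/-- The hypercube graph `Q_n`. -/
def Q (n : ℕ) : SimpleGraph (V n) :=
  SimpleGraph.fromRel (fun u v => hammingDist u v = 1)

/-- The neighbourhood of a vertex in `Q_n`. -/
def nbhd (n : ℕ) (v : V n) : Set (V n) := (Q n).neighborSet v

/-- The neighbourhood of a set of vertices. -/
def nbhdSet (n : ℕ) (A : Set (V n)) : Set (V n) := ⋃ v ∈ A, nbhd n v

/-- The set of vertices at graph distance exactly `k` from the set `A`. -/
def sphereSet (n k : ℕ) (A : Set (V n)) : Set (V n) :=
  {w | (∃ v ∈ A, (Q n).dist v w = k) ∧ ∀ v ∈ A, k ≤ (Q n).dist v w}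

/-- The ball of radius `r` about `v` (as a set of vertices). -/
def ball (n : ℕ) (v : V n) (r : ℕ) : Set (V n) := {w | (Q n).dist v w ≤ r}

/-- `χ^(r)(u) ≅ lam^(r)(w)` : the coloured `r`-balls around `u` (coloured by `χ`) and
`w` (coloured by `lam`) are isomorphic as coloured graphs. -/
def LocallyEq {C : Type} (n r : ℕ) (χ lam : V n → C) (u w : V n) : Prop :=
  ∃ φ : ((Q n).induce (ball n u r)) ≃g ((Q n).induce (ball n w r)),
    ∀ x : ball n u r, χ x.1 = lam ((φ x).1)

/-- `d(χ^(r)(u), lam^(r)(w)) ≤ m` : some isomorphism of the `r`-balls realises at most `m`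
colour disagreements. -/
def BallDistLE {C : Type} (n r : ℕ) (χ lam : V n → C) (u w : V n) (m : ℝ) : Prop :=
  ∃ φ : ((Q n).induce (ball n u r)) ≃g ((Q n).induce (ball n w r)),
    (({x : ball n u r | χ x.1 ≠ lam ((φ x).1)}.ncard : ℝ)) ≤ m

/-- A colouring is `r`-distinguishable if every `r`-locally equivalent colouring is obtained
from it by a graph automorphism. -/
def Distinguishable {C : Type} (n r : ℕ) (χ : V n → C) : Prop :=
  ∀ lam : V n → C,
    (∃ f : V n ≃ V n, ∀ v, LocallyEq n r χ lam v (f v)) →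
    ∃ g : (Q n) ≃g (Q n), lam = fun v => χ (g.symm v)

/-- `Isom^(r)(χ)` : the set of bijections `f` with `χ^(r)(v) ≅ (χ ∘ f⁻¹)^(r)(f v)` for all `v`. -/
def IsomSet {C : Type} (n r : ℕ) (χ : V n → C) : Set (V n ≃ V n) :=
  {f | ∀ v, LocallyEq n r χ (fun x => χ (f.symm x)) v (f v)}

/-- `Cluster^r_R` : bijections `h` such that `|Γ^r(h(Γ(v)))| ≤ binom(n, r+1) + R` for all `v`. -/
def ClusterSet (n r : ℕ) (R : ℝ) : Set (V n ≃ V n) :=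
  {h | ∀ v, ((sphereSet n r (⇑h '' nbhd n v)).ncard : ℝ) ≤ (n.choose (r+1) : ℝ) + R}

/-- `g` is a dual of `f` (at level `s`): `|f(Γ(v)) ∩ Γ(g(v))| ≥ n − s` for all `v`. -/
def IsDualF (n : ℕ) (s : ℝ) (f g : V n → V n) : Prop :=
  ∀ v, (n : ℝ) - s ≤ (((f '' nbhd n v) ∩ nbhd n (g v)).ncard : ℝ)

/-- `f` is `s`-approximately local: it has a dual at level `s`. -/
def ApproxLocalF (n : ℕ) (s : ℝ) (f : V n → V n) : Prop :=
  ∃ g : V n → V n, IsDualF n s f g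

/-- `Local_s` : the set of `s`-approximately local bijections. -/
def LocalSet (n : ℕ) (s : ℝ) : Set (V n ≃ V n) :=
  {f | ApproxLocalF n s ⇑f}

/-- `Mono^t_s` : bijections in `Cluster¹_s` for which, for every `v`, at most one vertex `w`
has `|f(Γ(v)) ∩ Γ(w)| > t`. -/
def MonoSet (n : ℕ) (s t : ℝ) : Set (V n ≃ V n) :=
  {f | f ∈ ClusterSet n 1 s ∧ ∀ v w₁ w₂ : V n,
      t < (((⇑f '' nbhd n v) ∩ nbhd n w₁).ncard : ℝ) →
      t < (((⇑f '' nbhd n v) ∩ nbhd n w₂).ncard : ℝ) → w₁ = w₂}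

/-- The dual `f_⋆` of `f` : for each `v`, a vertex `w` maximising `|f(Γ(v)) ∩ Γ(w)|`
(which is the unique dual vertex whenever `f` is `s`-approximately local with `s < n/2`). -/
def dualF (n : ℕ) (f : V n → V n) : V n → V n :=
  fun v => Classical.epsilon fun w =>
    ∀ w', ((f '' nbhd n v) ∩ nbhd n w').ncard ≤ ((f '' nbhd n v) ∩ nbhd n w).ncard

/-- The Bernoulli measure on `Bool`: `false` (colour 0) has probability `p`,
`true` (colour 1) has probability `1 - p`. -/
def bern (p : ℝ) : Measure Bool :=
  ENNReal.ofReal p • Measure.dirac false + ENNReal.ofReal (1 - p) • Measure.dirac true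

/-- The law of a random `(p, 1-p)`-colouring of `Q_n`: i.i.d. Bernoulli colours. -/
def colMeasure (n : ℕ) (p : ℝ) : Measure (V n → Bool) :=
  Measure.pi fun _ => bern p

/-- The uniform measure on `Fin q`. -/
def unifFin (q : ℕ) : Measure (Fin q) :=
  ((q : ENNReal))⁻¹ • Measure.count

/-- The law of a random `q`-colouring of `Q_n`: i.i.d. uniform colours. -/
def qColMeasure (n q : ℕ) : Measure (V n → Fin q) :=
  Measure.pi fun _ => unifFin q

namespace QAux

variable {n : ℕ}

/-- Flip coordinate `i`. -/
def flip (x : V n) (i : Fin n) : V n := Function.update x i (!x i)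

lemma flip_apply_self (x : V n) (i : Fin n) : flip x i i = !x i := by
  simp [flip]

lemma flip_apply_ne (x : V n) {i j : Fin n} (h : j ≠ i) : flip x i j = x j := by
  simp [flip, Function.update_apply, h]

lemma flip_flip (x : V n) (i : Fin n) : flip (flip x i) i = x := by
  funext j
  by_cases h : j = i
  · subst h; simp [flip]
  · rw [flip_apply_ne _ h, flip_apply_ne _ h]

/-- The diff-set of two vertices. -/
def diffs (x y : V n) : Finset (Fin n) := Finset.univ.filter (fun i => x i ≠ y i)

lemma hammingDist_eq_card_diffs (x y : V n) : hammingDist x y = (diffs x y).card := rfl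

lemma diffs_flip (x : V n) (i : Fin n) : diffs x (flip x i) = {i} := by
  ext j
  simp only [diffs, Finset.mem_filter, Finset.mem_univ, true_and, Finset.mem_singleton]
  constructor
  · intro hj
    by_contra hji
    exact hj (flip_apply_ne x hji).symm
  · rintro rfl
    rw [flip_apply_self]
    simp

lemma hammingDist_flip (x : V n) (i : Fin n) : hammingDist x (flip x i) = 1 := by
  rw [hammingDist_eq_card_diffs, diffs_flip]
  simp

lemma adj_iff {x y : V n} : (Q n).Adj x y ↔ hammingDist x y = 1 := by
  rw [Q, SimpleGraph.fromRel_adj]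
  constructor
  · rintro ⟨hne, h | h⟩
    · exact h
    · rwa [hammingDist_comm]
  · intro h
    refine ⟨?_, Or.inl h⟩
    intro he
    subst he
    simp at h

lemma adj_flip (x : V n) (i : Fin n) : (Q n).Adj x (flip x i) :=
  adj_iff.mpr (hammingDist_flip x i)

lemma eq_flip_of_adj {x y : V n} (h : (Q n).Adj x y) : ∃ i, y = flip x i := by
  rw [adj_iff, hammingDist_eq_card_diffs, Finset.card_eq_one] at h
  obtain ⟨i, hi⟩ := h
  refine ⟨i, ?_⟩
  funext j
  by_cases hj : j = i
  · subst hj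
    have : j ∈ diffs x y := by rw [hi]; exact Finset.mem_singleton_self j
    simp only [diffs, Finset.mem_filter] at this
    have := this.2
    rw [flip_apply_self]
    revert this
    cases x j <;> cases y j <;> simp
  · have : j ∉ diffs x y := by rw [hi]; simp [hj]
    simp only [diffs, Finset.mem_filter, Finset.mem_univ, true_and, not_not] at this
    rw [flip_apply_ne x hj, this]

lemma flip_injective (x : V n) : Function.Injective (flip x) := by
  intro i j hij
  by_contra hne
  have h1 : flip x i i = !x i := flip_apply_self x i
  have h2 : flip x j i = x i := flip_apply_ne x (fun h => hne h)
  rw [hij, h2] at h1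
  exact (Bool.not_ne_self (x i)) h1.symm

/-- Neighbors as a finset. -/
def nbrF (x : V n) : Finset (V n) := Finset.univ.image (flip x)

lemma mem_nbrF {x y : V n} : y ∈ nbrF x ↔ (Q n).Adj x y := by
  simp only [nbrF, Finset.mem_image, Finset.mem_univ, true_and]
  constructor
  · rintro ⟨i, rfl⟩
    exact adj_flip x i
  · intro h
    obtain ⟨i, rfl⟩ := eq_flip_of_adj h
    exact ⟨i, rfl⟩

lemma card_nbrF (x : V n) : (nbrF x).card = n := by
  rw [nbrF, Finset.card_image_of_injective _ (flip_injective x), Finset.card_univ, Fintype.card_fin]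

lemma nbhd_eq_nbrF (x : V n) : nbhd n x = ↑(nbrF x) := by
  ext y
  simp only [nbhd, SimpleGraph.mem_neighborSet, Finset.coe_filter, mem_nbrF, Finset.mem_coe]

/-- Two distinct neighbours of a common vertex are at Hamming distance 2 (hence non-adjacent). -/
lemma hammingDist_flip_flip {x : V n} {i j : Fin n} (h : i ≠ j) :
    hammingDist (flip x i) (flip x j) = 2 := by
  rw [hammingDist_eq_card_diffs]
  have hd : diffs (flip x i) (flip x j) = {i, j} := by
    ext k
    simp only [diffs, Finset.mem_filter, Finset.mem_univ, true_and, Finset.mem_insert,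
      Finset.mem_singleton]
    by_cases hki : k = i
    · subst hki
      rw [flip_apply_self, flip_apply_ne x h]
      simpa using Or.inl rfl
    · by_cases hkj : k = j
      · subst hkj
        rw [flip_apply_self, flip_apply_ne x (Ne.symm h)]
        simp only [ne_eq, hki, false_or, iff_true]
        intro hcon
        exact (Bool.not_ne_self (x k)) hcon.symm
      · rw [flip_apply_ne x hki, flip_apply_ne x hkj]
        simp [hki, hkj]
  rw [hd, Finset.card_insert_of_notMem (by simp [h]), Finset.card_singleton]


lemma bool_eq_not_of_ne {a b : Bool} (h : a ≠ b) : b = !a := by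
  cases a <;> cases b <;> simp_all

lemma diffs_flip_mem {x y : V n} {i : Fin n} (hi : i ∈ diffs x y) :
    diffs (flip x i) y = (diffs x y).erase i := by
  ext j
  simp only [diffs, Finset.mem_filter, Finset.mem_univ, true_and, Finset.mem_erase]
  by_cases hj : j = i
  · subst hj
    rw [flip_apply_self]
    simp only [diffs, Finset.mem_filter, Finset.mem_univ, true_and] at hi
    have : y j = !x j := bool_eq_not_of_ne hi
    simp [this]
  · rw [flip_apply_ne x hj]
    simp [hj, diffs]

lemma reachable_aux : ∀ (d : ℕ) (x y : V n), hammingDist x y = d → (Q n).Reachable x y := by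
  intro d
  induction d with
  | zero =>
    intro x y h
    rw [hammingDist_eq_zero] at h
    subst h
    rfl
  | succ d ih =>
    intro x y h
    have hne : diffs x y ≠ ∅ := by
      intro hcon
      rw [hammingDist_eq_card_diffs, hcon] at h
      simp at h
    obtain ⟨i, hi⟩ := Finset.nonempty_iff_ne_empty.mpr hne
    have hd : hammingDist (flip x i) y = d := by
      rw [hammingDist_eq_card_diffs, diffs_flip_mem hi, Finset.card_erase_of_mem hi,
        ← hammingDist_eq_card_diffs, h]
      omega
    exact ((adj_flip x i).reachable).trans (ih (flip x i) y hd)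

lemma reachable (x y : V n) : (Q n).Reachable x y := reachable_aux _ x y rfl

lemma dist_le_one_iff {x y : V n} : (Q n).dist x y ≤ 1 ↔ x = y ∨ (Q n).Adj x y := by
  constructor
  · intro h
    interval_cases hd : (Q n).dist x y
    · exact Or.inl ((reachable x y).dist_eq_zero_iff.mp hd)
    · exact Or.inr (SimpleGraph.dist_eq_one_iff_adj.mp hd)
  · rintro (rfl | h)
    · simp [SimpleGraph.dist_self]
    · exact le_of_eq (SimpleGraph.dist_eq_one_iff_adj.mpr h)

lemma mem_ball_one_iff {u y : V n} : y ∈ ball n u 1 ↔ y = u ∨ (Q n).Adj u y := by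
  rw [ball, Set.mem_setOf_eq, dist_le_one_iff]
  constructor
  · rintro (rfl | h)
    · exact Or.inl rfl
    · exact Or.inr h
  · rintro (rfl | h)
    · exact Or.inl rfl
    · exact Or.inr h

lemma adj_of_dist_eq_one {x y : V n} (h : (Q n).dist x y = 1) : (Q n).Adj x y :=
  SimpleGraph.dist_eq_one_iff_adj.mp h

/-- Common neighbours of a distance-2 pair are flips along the two differing coordinates. -/
lemma common_nbr {v z u : V n} (h2 : hammingDist v z = 2) (h1 : (Q n).Adj v u)
    (h1' : (Q n).Adj u z) : ∃ i ∈ diffs v z, u = flip v i := by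
  obtain ⟨k, rfl⟩ := eq_flip_of_adj h1
  by_cases hk : k ∈ diffs v z
  · exact ⟨k, hk, rfl⟩
  · exfalso
    have hsub : diffs v z ⊆ diffs (flip v k) z := by
      intro m hm
      have hmk : m ≠ k := fun h => hk (h ▸ hm)
      simp only [diffs, Finset.mem_filter, Finset.mem_univ, true_and] at hm ⊢
      rwa [flip_apply_ne v hmk]
    have hcard := Finset.card_le_card hsub
    rw [← hammingDist_eq_card_diffs, ← hammingDist_eq_card_diffs, h2, adj_iff.mp h1'] at hcard
    omega

lemma adj_flip_of_mem_diffs {v z : V n} {i : Fin n} (h2 : hammingDist v z = 2)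
    (hi : i ∈ diffs v z) : (Q n).Adj (flip v i) z := by
  rw [adj_iff, hammingDist_eq_card_diffs, diffs_flip_mem hi, Finset.card_erase_of_mem hi,
    ← hammingDist_eq_card_diffs, h2]

lemma hammingDist_double_flip {v : V n} {i k : Fin n} (h : i ≠ k) :
    hammingDist v (flip (flip v i) k) = 2 := by
  have hd : diffs v (flip (flip v i) k) = {i, k} := by
    ext m
    simp only [diffs, Finset.mem_filter, Finset.mem_univ, true_and, Finset.mem_insert,
      Finset.mem_singleton]
    by_cases hmi : m = i
    · subst hmi
      rw [flip_apply_ne _ (fun hc => h hc), flip_apply_self]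
      simpa using Or.inl rfl
    · by_cases hmk : m = k
      · subst hmk
        rw [flip_apply_self, flip_apply_ne v (fun hc => hmi hc)]
        simp only [hmi, false_or, iff_true]
        intro hcon
        exact (Bool.not_ne_self (v m)) hcon.symm
      · rw [flip_apply_ne _ hmk, flip_apply_ne _ hmi]
        simp [hmi, hmk]
  rw [hammingDist_eq_card_diffs, hd,
    Finset.card_insert_of_notMem (by simp [h]), Finset.card_singleton]

lemma dist_two_of_adj_adj {v u z : V n} (h1 : (Q n).Adj v u) (h2 : (Q n).Adj u z)
    (hne : z ≠ v) : hammingDist v z = 2 := by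
  obtain ⟨i, rfl⟩ := eq_flip_of_adj h1
  obtain ⟨k, rfl⟩ := eq_flip_of_adj h2
  have hik : i ≠ k := by
    rintro rfl
    exact hne (flip_flip v i)
  exact hammingDist_double_flip hik

/-- The sphere of radius 2 (Hamming), as a finset. -/
def sphere2 (v : V n) : Finset (V n) := Finset.univ.filter (fun z => hammingDist v z = 2)

lemma mem_sphere2 {v z : V n} : z ∈ sphere2 v ↔ hammingDist v z = 2 := by
  simp [sphere2]

lemma card_sphere2 (v : V n) : (sphere2 v).card ≤ n.choose 2 := by
  have := Finset.card_le_card_of_injOn (t := Finset.univ.powersetCard 2) (fun z => diffs v z)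
    (fun z hz => by
      simp only [Finset.mem_coe, Finset.mem_powersetCard]
      exact ⟨Finset.subset_univ _, by rw [← hammingDist_eq_card_diffs, mem_sphere2.mp hz]⟩)
    (fun z hz z' hz' hzz' => by
      have hzz'' : diffs v z = diffs v z' := hzz'
      funext m
      by_cases hm : m ∈ diffs v z
      · have hm' : m ∈ diffs v z' := hzz'' ▸ hm
        simp only [diffs, Finset.mem_filter, Finset.mem_univ, true_and] at hm hm'
        rw [bool_eq_not_of_ne hm, bool_eq_not_of_ne hm']
      · have hm' : m ∉ diffs v z' := fun hc => hm (hzz'' ▸ hc)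
        simp only [diffs, Finset.mem_filter, Finset.mem_univ, true_and, not_not] at hm hm'
        rw [← hm, ← hm'])
  rwa [Finset.card_powersetCard, Finset.card_univ, Fintype.card_fin] at this

end QAux

section Matching

variable {ι W : Type} [DecidableEq ι] [DecidableEq W]

/-- From any finite family of (possibly degenerate) pairs one can extract a
vertex-disjoint family of non-degenerate pairs of size at least
`#covered vertices - #pairs`. -/
lemma matching_lemma (Z : Finset ι) (a b : ι → W) :
    ∃ F ⊆ Z, (Z.biUnion (fun z => {a z, b z})).card ≤ F.card + Z.card ∧
      (∀ z ∈ F, a z ≠ b z) ∧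
      (∀ z ∈ F, ∀ w ∈ F, z ≠ w → ({a z, b z} ∩ {a w, b w} : Finset W) = ∅) := by
  classical
  induction Z using Finset.induction_on with
  | empty => exact ⟨∅, Finset.Subset.refl _, by simp, by simp, by simp⟩
  | @insert z₀ Z' hz₀ ih =>
    obtain ⟨F', hF'sub, hcard', hnd', hdisj'⟩ := ih
    have hXeq : (insert z₀ Z').biUnion (fun z => ({a z, b z} : Finset W)) =
        ({a z₀, b z₀} : Finset W) ∪ Z'.biUnion (fun z => {a z, b z}) :=
      Finset.biUnion_insert
    set X' := Z'.biUnion (fun z => ({a z, b z} : Finset W)) with hX'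
    by_cases hcase : ((insert z₀ Z').biUnion (fun z => ({a z, b z} : Finset W))).card ≤ X'.card + 1
    · refine ⟨F', hF'sub.trans (Finset.subset_insert _ _), ?_, hnd', hdisj'⟩
      rw [Finset.card_insert_of_notMem hz₀]
      omega
    · push_neg at hcase
      have ha : a z₀ ∉ X' := by
        intro h
        apply absurd ?_ (not_le.mpr hcase)
        calc ((insert z₀ Z').biUnion (fun z => ({a z, b z} : Finset W))).card
            ≤ (insert (b z₀) X').card := by
              apply Finset.card_le_card
              rw [hXeq]
              intro x hx
              rcases Finset.mem_union.mp hx with hx | hx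
              · rcases Finset.mem_insert.mp hx with rfl | hx
                · exact Finset.mem_insert_of_mem h
                · rw [Finset.mem_singleton] at hx
                  subst hx
                  exact Finset.mem_insert_self _ _
              · exact Finset.mem_insert_of_mem hx
          _ ≤ X'.card + 1 := Finset.card_insert_le _ _
      have hb : b z₀ ∉ X' := by
        intro h
        apply absurd ?_ (not_le.mpr hcase)
        calc ((insert z₀ Z').biUnion (fun z => ({a z, b z} : Finset W))).card
            ≤ (insert (a z₀) X').card := by
              apply Finset.card_le_card
              rw [hXeq]
              intro x hx
              rcases Finset.mem_union.mp hx with hx | hx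
              · rcases Finset.mem_insert.mp hx with rfl | hx
                · exact Finset.mem_insert_self _ _
                · rw [Finset.mem_singleton] at hx
                  subst hx
                  exact Finset.mem_insert_of_mem h
              · exact Finset.mem_insert_of_mem hx
          _ ≤ X'.card + 1 := Finset.card_insert_le _ _
      have hab : a z₀ ≠ b z₀ := by
        intro h
        apply absurd ?_ (not_le.mpr hcase)
        calc ((insert z₀ Z').biUnion (fun z => ({a z, b z} : Finset W))).card
            ≤ (insert (a z₀) X').card := by
              apply Finset.card_le_card
              rw [hXeq]
              intro x hx
              rcases Finset.mem_union.mp hx with hx | hx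
              · rcases Finset.mem_insert.mp hx with rfl | hx
                · exact Finset.mem_insert_self _ _
                · rw [Finset.mem_singleton] at hx
                  subst hx
                  rw [← h]
                  exact Finset.mem_insert_self _ _
              · exact Finset.mem_insert_of_mem hx
          _ ≤ X'.card + 1 := Finset.card_insert_le _ _
      have hz₀F' : z₀ ∉ F' := fun h => hz₀ (hF'sub h)
      have hpairX' : ∀ w ∈ Z', ({a w, b w} : Finset W) ⊆ X' := by
        intro w hw
        exact Finset.subset_biUnion_of_mem (fun z => ({a z, b z} : Finset W)) hw
      refine ⟨insert z₀ F', ?_, ?_, ?_, ?_⟩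
      · exact Finset.insert_subset_insert _ hF'sub
      · have h1 : ((insert z₀ Z').biUnion (fun z => ({a z, b z} : Finset W))).card ≤
            X'.card + 2 := by
          rw [hXeq]
          calc (({a z₀, b z₀} : Finset W) ∪ X').card ≤ ({a z₀, b z₀} : Finset W).card + X'.card :=
            Finset.card_union_le _ _
          _ ≤ X'.card + 2 := by
            have := Finset.card_insert_le (a z₀) ({b z₀} : Finset W)
            simp only [Finset.card_singleton] at this
            omega
        rw [Finset.card_insert_of_notMem hz₀, Finset.card_insert_of_notMem hz₀F']
        omega
      · intro z hz
        rcases Finset.mem_insert.mp hz with rfl | hz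
        · exact hab
        · exact hnd' z hz
      · intro z hz w hw hzw
        have hemp : ∀ w' ∈ F', ({a z₀, b z₀} ∩ {a w', b w'} : Finset W) = ∅ := by
          intro w' hw'
          apply Finset.eq_empty_of_forall_notMem
          intro x hx
          rw [Finset.mem_inter] at hx
          have hxX' : x ∈ X' := hpairX' w' (hF'sub hw') hx.2
          rcases Finset.mem_insert.mp hx.1 with h1 | h1
          · subst h1; exact ha hxX'
          · rw [Finset.mem_singleton] at h1
            subst h1
            exact hb hxX'
        rcases Finset.mem_insert.mp hz with hz1 | hz2
        · subst hz1
          rcases Finset.mem_insert.mp hw with hw1 | hw2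
          · exact absurd hw1.symm hzw
          · exact hemp w hw2
        · rcases Finset.mem_insert.mp hw with hw1 | hw2
          · subst hw1
            rw [Finset.inter_comm]
            exact hemp z hz2
          · exact hdisj' z hz2 w hw2 hzw

end Matching




namespace QAux
section BallIso

variable {n : ℕ}

lemma center_mem_ball (u : V n) : u ∈ ball n u 1 := by
  rw [mem_ball_one_iff]
  exact Or.inl rfl

lemma adj_mem_ball {u y : V n} (h : (Q n).Adj u y) : y ∈ ball n u 1 :=
  mem_ball_one_iff.mpr (Or.inr h)

/-- In a radius-1 ball, a non-centre vertex is adjacent (within the ball) only to the centre. -/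
lemma leaf_unique_nbr {w x y : V n} (hx : x ∈ ball n w 1) (hxw : x ≠ w)
    (hy : y ∈ ball n w 1) (hadj : (Q n).Adj x y) : y = w := by
  by_contra hyw
  have hx' : (Q n).Adj w x := (mem_ball_one_iff.mp hx).resolve_left hxw
  have hy' : (Q n).Adj w y := (mem_ball_one_iff.mp hy).resolve_left hyw
  obtain ⟨i, rfl⟩ := eq_flip_of_adj hx'
  obtain ⟨j, rfl⟩ := eq_flip_of_adj hy'
  have hij : i ≠ j := by
    rintro rfl
    exact (Q n).loopless.irrefl _ hadj
  have := adj_iff.mp hadj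
  rw [hammingDist_flip_flip hij] at this
  omega

lemma induce_adj {s : Set (V n)} {x y : ↥s} :
    ((Q n).induce s).Adj x y ↔ (Q n).Adj x.1 y.1 := by
  simp [SimpleGraph.induce]

/-- Any isomorphism of radius-1 balls maps centre to centre (when `n ≥ 2`). -/
lemma iso_center (hn : 2 ≤ n) {u w : V n}
    (φ : ((Q n).induce (ball n u 1)) ≃g ((Q n).induce (ball n w 1))) :
    (φ ⟨u, center_mem_ball u⟩).1 = w := by
  by_contra hc
  have h01 : (⟨0, by omega⟩ : Fin n) ≠ ⟨1, by omega⟩ := by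
    intro h
    have := congrArg Fin.val h
    simp at this
  set a := flip u ⟨0, by omega⟩ with ha
  set b := flip u (⟨1, by omega⟩ : Fin n) with hb
  have hab : a ≠ b := fun h => h01 (flip_injective u h)
  have haB : a ∈ ball n u 1 := adj_mem_ball (adj_flip u _)
  have hbB : b ∈ ball n u 1 := adj_mem_ball (adj_flip u _)
  have hadj_a : ((Q n).induce (ball n u 1)).Adj ⟨u, center_mem_ball u⟩ ⟨a, haB⟩ :=
    induce_adj.mpr (adj_flip u _)
  have hadj_b : ((Q n).induce (ball n u 1)).Adj ⟨u, center_mem_ball u⟩ ⟨b, hbB⟩ :=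
    induce_adj.mpr (adj_flip u _)
  have h1 : (Q n).Adj (φ ⟨u, center_mem_ball u⟩).1 (φ ⟨a, haB⟩).1 :=
    induce_adj.mp (φ.map_rel_iff.mpr hadj_a)
  have h2 : (Q n).Adj (φ ⟨u, center_mem_ball u⟩).1 (φ ⟨b, hbB⟩).1 :=
    induce_adj.mp (φ.map_rel_iff.mpr hadj_b)
  have ha' : (φ ⟨a, haB⟩).1 = w :=
    leaf_unique_nbr (φ _).2 hc (φ _).2 h1
  have hb' : (φ ⟨b, hbB⟩).1 = w :=
    leaf_unique_nbr (φ _).2 hc (φ _).2 h2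
  have : φ ⟨a, haB⟩ = φ ⟨b, hbB⟩ := Subtype.ext (ha'.trans hb'.symm)
  have := φ.injective this
  rw [Subtype.mk.injEq] at this
  exact hab this

/-- Extraction of the colour-preserving neighbourhood bijection. -/
lemma sigma_of_locallyEq (hn : 2 ≤ n) {C : Type} (χ lam : V n → C) (w u : V n)
    (h : LocallyEq n 1 χ lam w u) :
    ∃ σ : V n → V n,
      (∀ y, (Q n).Adj u y → (Q n).Adj w (σ y) ∧ lam y = χ (σ y)) ∧
      (∀ x, (Q n).Adj w x → ∃ y, (Q n).Adj u y ∧ σ y = x) := by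
  obtain ⟨φ, hφ⟩ := h
  have hcent : (φ ⟨w, center_mem_ball w⟩).1 = u := iso_center hn φ
  have hcent' : φ ⟨w, center_mem_ball w⟩ = ⟨u, center_mem_ball u⟩ := Subtype.ext hcent
  classical
  refine ⟨fun y => if hy : y ∈ ball n u 1 then (φ.symm ⟨y, hy⟩).1 else y, ?_, ?_⟩
  · intro y hy
    have hyB : y ∈ ball n u 1 := adj_mem_ball hy
    simp only [dif_pos hyB]
    have hne : (φ.symm ⟨y, hyB⟩).1 ≠ w := by
      intro hcon
      have : φ.symm ⟨y, hyB⟩ = ⟨w, center_mem_ball w⟩ := Subtype.ext hcon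
      have := congrArg φ this
      rw [RelIso.apply_symm_apply, hcent'] at this
      rw [Subtype.mk.injEq] at this
      exact (Q n).loopless.irrefl u (this ▸ hy)
    constructor
    · exact ((mem_ball_one_iff.mp (φ.symm ⟨y, hyB⟩).2).resolve_left hne)
    · have := hφ (φ.symm ⟨y, hyB⟩)
      rw [RelIso.apply_symm_apply] at this
      exact this.symm
  · intro x hx
    have hxB : x ∈ ball n w 1 := adj_mem_ball hx
    have hne : (φ ⟨x, hxB⟩).1 ≠ u := by
      intro hcon
      have : φ ⟨x, hxB⟩ = ⟨u, center_mem_ball u⟩ := Subtype.ext hcon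
      have := φ.injective (this.trans hcent'.symm)
      rw [Subtype.mk.injEq] at this
      exact (Q n).loopless.irrefl w (this ▸ hx)
    refine ⟨(φ ⟨x, hxB⟩).1, (mem_ball_one_iff.mp (φ ⟨x, hxB⟩).2).resolve_left hne, ?_⟩
    simp only [dif_pos (φ ⟨x, hxB⟩).2]
    have : (⟨(φ ⟨x, hxB⟩).1, (φ ⟨x, hxB⟩).2⟩ : ball n u 1) = φ ⟨x, hxB⟩ := rfl
    rw [this, RelIso.symm_apply_apply]

end BallIso
end QAux


namespace QAux
section Core

variable {n : ℕ}

/-- The region: union of neighbourhoods of the listed vertices. -/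
def regionF (t : Fin n → V n) : Finset (V n) := Finset.univ.biUnion (fun i => nbrF (t i))

lemma card_regionF (t : Fin n → V n) : (regionF t).card ≤ n * n := by
  calc (regionF t).card ≤ ∑ i : Fin n, (nbrF (t i)).card := Finset.card_biUnion_le
  _ = n * n := by
    simp only [card_nbrF]
    rw [Finset.sum_const, Finset.card_univ, Fintype.card_fin, smul_eq_mul]

lemma mem_two {β : Type} [LinearOrder β] {D : Finset β} (hD : D.card = 2) {k : β} (hk : k ∈ D) :
    k = D.min' ⟨k, hk⟩ ∨ k = D.max' ⟨k, hk⟩ := by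
  by_contra hcon
  push_neg at hcon
  have h1 : D.min' ⟨k, hk⟩ ∈ D := D.min'_mem _
  have h2 : D.max' ⟨k, hk⟩ ∈ D := D.max'_mem _
  have hsub : ({k, D.min' ⟨k, hk⟩, D.max' ⟨k, hk⟩} : Finset β) ⊆ D := by
    intro x hx
    rcases Finset.mem_insert.mp hx with rfl | hx
    · exact hk
    · rcases Finset.mem_insert.mp hx with rfl | hx
      · exact h1
      · rw [Finset.mem_singleton] at hx
        subst hx
        exact h2
  have hminmax : D.min' ⟨k, hk⟩ ≠ D.max' ⟨k, hk⟩ := by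
    have := Finset.min'_lt_max'_of_card D (by omega)
    exact ne_of_lt this
  have : 3 ≤ D.card := by
    apply le_trans _ (Finset.card_le_card hsub)
    rw [Finset.card_insert_of_notMem (by simp [hcon.1, hcon.2]),
      Finset.card_insert_of_notMem (by simp [hminmax]), Finset.card_singleton]
  omega

/-- Core deterministic lemma: a failure of the cluster bound for `f ∈ Isom¹(χ)` produces a
large disjoint family of monochromatic pairs inside a small region. -/
lemma core (hn : 3 ≤ n) {C : Type} (χ : V n → C) (f : V n ≃ V n) (hf : f ∈ IsomSet n 1 χ)
    (v : V n) (m : ℕ)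
    (hBAD : n.choose 2 + n + m ≤ (sphereSet n 1 (⇑f.symm '' nbhd n v)).ncard) :
    ∃ t : Fin n → V n, ∃ F : Finset (V n × V n),
      m ≤ F.card ∧
      (∀ p ∈ F, p.1 ∈ regionF t ∧ p.2 ∈ regionF t ∧ p.1 ≠ p.2 ∧ χ p.1 = χ p.2) ∧
      (∀ p ∈ F, ∀ p' ∈ F, p ≠ p' →
        p.1 ≠ p'.1 ∧ p.1 ≠ p'.2 ∧ p.2 ≠ p'.1 ∧ p.2 ≠ p'.2) := by
  classical
  -- the colour-preserving neighbourhood bijections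
  have hsig : ∀ u : V n, ∃ σ : V n → V n,
      (∀ y, (Q n).Adj u y → (Q n).Adj (f.symm u) (σ y) ∧ χ (f.symm y) = χ (σ y)) ∧
      (∀ x, (Q n).Adj (f.symm u) x → ∃ y, (Q n).Adj u y ∧ σ y = x) := by
    intro u
    have h := hf (f.symm u)
    rw [Equiv.apply_symm_apply] at h
    exact sigma_of_locallyEq (by omega) χ _ (f.symm u) u h
  choose σ hσ1 hσ2 using hsig
  -- the two distinguished coordinates of a distance-2 vertex
  have hne2 : ∀ z ∈ sphere2 v, (diffs v z).Nonempty := by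
    intro z hz
    rw [← Finset.card_pos, ← hammingDist_eq_card_diffs, mem_sphere2.mp hz]
    omega
  set idx1 : V n → Fin n := fun z =>
    if h : (diffs v z).Nonempty then (diffs v z).min' h else ⟨0, by omega⟩ with hidx1
  set idx2 : V n → Fin n := fun z =>
    if h : (diffs v z).Nonempty then (diffs v z).max' h else ⟨0, by omega⟩ with hidx2
  set u1 : V n → V n := fun z => flip v (idx1 z) with hu1
  set u2 : V n → V n := fun z => flip v (idx2 z) with hu2
  set a : V n → V n := fun z => σ (u1 z) z with ha
  set b : V n → V n := fun z => σ (u2 z) z with hb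
  set t : Fin n → V n := fun i => f.symm (flip v i) with ht
  set Z : Finset (V n) := sphere2 v with hZ
  -- basic facts for z ∈ Z
  have hz_facts : ∀ z ∈ Z, (Q n).Adj v (u1 z) ∧ (Q n).Adj v (u2 z) ∧
      (Q n).Adj (u1 z) z ∧ (Q n).Adj (u2 z) z := by
    intro z hz
    have h2 : hammingDist v z = 2 := mem_sphere2.mp hz
    have hne : (diffs v z).Nonempty := hne2 z hz
    have hmin : idx1 z ∈ diffs v z := by
      rw [hidx1]
      simp only [dif_pos hne]
      exact (diffs v z).min'_mem hne
    have hmax : idx2 z ∈ diffs v z := by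
      rw [hidx2]
      simp only [dif_pos hne]
      exact (diffs v z).max'_mem hne
    exact ⟨adj_flip v _, adj_flip v _,
      adj_flip_of_mem_diffs h2 hmin, adj_flip_of_mem_diffs h2 hmax⟩
  -- colours agree on each pair
  have hcol : ∀ z ∈ Z, χ (a z) = χ (b z) := by
    intro z hz
    obtain ⟨h1, h2, h3, h4⟩ := hz_facts z hz
    have e1 := (hσ1 (u1 z) z h3).2
    have e2 := (hσ1 (u2 z) z h4).2
    rw [ha, hb]
    exact e1.symm.trans e2
  -- pairs live in the region
  have hregion : ∀ z ∈ Z, a z ∈ regionF t ∧ b z ∈ regionF t := by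
    intro z hz
    obtain ⟨h1, h2, h3, h4⟩ := hz_facts z hz
    constructor
    · apply Finset.mem_biUnion.mpr
      exact ⟨idx1 z, Finset.mem_univ _, mem_nbrF.mpr (hσ1 (u1 z) z h3).1⟩
    · apply Finset.mem_biUnion.mpr
      exact ⟨idx2 z, Finset.mem_univ _, mem_nbrF.mpr (hσ1 (u2 z) z h4).1⟩
  -- the sphere is covered by X and the exceptional set
  set X : Finset (V n) := Z.biUnion (fun z => {a z, b z}) with hX
  set Exc : Finset (V n) := Finset.univ.image (fun i : Fin n => σ (flip v i) v) with hExc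
  have hcover : sphereSet n 1 (⇑f.symm '' nbhd n v) ⊆ ↑(X ∪ Exc) := by
    intro x hx
    obtain ⟨⟨a0, ha0, hd⟩, -⟩ := hx
    obtain ⟨u, hu, rfl⟩ := ha0
    have hadj_u : (Q n).Adj v u := hu
    have hadj_x : (Q n).Adj (f.symm u) x := adj_of_dist_eq_one hd
    obtain ⟨y, hy, hyx⟩ := hσ2 u x hadj_x
    obtain ⟨i, rfl⟩ := eq_flip_of_adj hadj_u
    by_cases hyv : y = v
    · subst hyv
      apply Finset.mem_coe.mpr
      apply Finset.mem_union_right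
      rw [hExc]
      apply Finset.mem_image.mpr
      exact ⟨i, Finset.mem_univ _, hyx⟩
    · have h2 : hammingDist v y = 2 := dist_two_of_adj_adj hadj_u hy hyv
      have hyZ : y ∈ Z := mem_sphere2.mpr h2
      obtain ⟨k, hk, huk⟩ := common_nbr h2 hadj_u hy
      have hcard2 : (diffs v y).card = 2 := by
        rw [← hammingDist_eq_card_diffs]
        exact h2
      have hne : (diffs v y).Nonempty := ⟨k, hk⟩
      apply Finset.mem_coe.mpr
      apply Finset.mem_union_left
      rw [hX]
      apply Finset.mem_biUnion.mpr
      refine ⟨y, hyZ, ?_⟩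
      rcases mem_two hcard2 hk with hkm | hkm
      · apply Finset.mem_insert.mpr
        left
        rw [← hyx, huk]
        have h1 : u1 y = flip v k := by
          simp only [hu1, hidx1, dif_pos hne]
          exact congrArg (flip v) hkm.symm
        simp only [ha]
        rw [h1]
      · apply Finset.mem_insert.mpr
        right
        rw [Finset.mem_singleton, ← hyx, huk]
        have h1 : u2 y = flip v k := by
          simp only [hu2, hidx2, dif_pos hne]
          exact congrArg (flip v) hkm.symm
        simp only [hb]
        rw [h1]
  -- cardinality chain
  have hsphere_card : (sphereSet n 1 (⇑f.symm '' nbhd n v)).ncard ≤ X.card + n := by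
    calc (sphereSet n 1 (⇑f.symm '' nbhd n v)).ncard
        ≤ (↑(X ∪ Exc) : Set (V n)).ncard := Set.ncard_le_ncard hcover (Set.toFinite _)
    _ = (X ∪ Exc).card := Set.ncard_coe_finset _
    _ ≤ X.card + Exc.card := Finset.card_union_le _ _
    _ ≤ X.card + n := by
      have : Exc.card ≤ n := by
        rw [hExc]
        calc (Finset.univ.image (fun i : Fin n => σ (flip v i) v)).card
            ≤ (Finset.univ : Finset (Fin n)).card := Finset.card_image_le
        _ = n := by rw [Finset.card_univ, Fintype.card_fin]
      omega
  obtain ⟨F₀, hF₀Z, hF₀card, hF₀nd, hF₀disj⟩ := matching_lemma Z a b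
  have hZcard : Z.card ≤ n.choose 2 := card_sphere2 v
  have hF₀big : m ≤ F₀.card := by
    have := hBAD
    have h1 : X.card ≤ F₀.card + Z.card := hF₀card
    omega
  -- final family
  refine ⟨t, F₀.image (fun z => (a z, b z)), ?_, ?_, ?_⟩
  · rw [Finset.card_image_of_injOn]
    · exact hF₀big
    · intro z hz w hw hzw
      by_contra hne
      have hd := hF₀disj z hz w hw hne
      have : a z ∈ ({a z, b z} ∩ {a w, b w} : Finset (V n)) := by
        rw [Finset.mem_inter]
        constructor
        · exact Finset.mem_insert_self _ _
        · have : a z = a w := congrArg Prod.fst hzw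
          rw [this]
          exact Finset.mem_insert_self _ _
      rw [hd] at this
      exact absurd this (Finset.notMem_empty _)
  · intro p hp
    obtain ⟨z, hz, rfl⟩ := Finset.mem_image.mp hp
    obtain ⟨h1, h2⟩ := hregion z (hF₀Z hz)
    exact ⟨h1, h2, hF₀nd z hz, hcol z (hF₀Z hz)⟩
  · intro p hp p' hp' hpp'
    obtain ⟨z, hz, rfl⟩ := Finset.mem_image.mp hp
    obtain ⟨w, hw, rfl⟩ := Finset.mem_image.mp hp'
    have hzw : z ≠ w := by
      rintro rfl
      exact hpp' rfl
    have hd := hF₀disj z hz w hw hzw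
    have hnotin : ∀ x, x ∈ ({a z, b z} : Finset (V n)) → x ∈ ({a w, b w} : Finset (V n)) → False := by
      intro x h1 h2
      have : x ∈ ({a z, b z} ∩ {a w, b w} : Finset (V n)) := Finset.mem_inter.mpr ⟨h1, h2⟩
      rw [hd] at this
      exact absurd this (Finset.notMem_empty _)
    refine ⟨fun heq => ?_, fun heq => ?_, fun heq => ?_, fun heq => ?_⟩
    · exact hnotin (a z) (Finset.mem_insert_self _ _)
        (by rw [show a z = a w from heq]; exact Finset.mem_insert_self _ _)
    · exact hnotin (a z) (Finset.mem_insert_self _ _)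
        (by rw [show a z = b w from heq]
            exact Finset.mem_insert_of_mem (Finset.mem_singleton_self _))
    · exact hnotin (b z) (Finset.mem_insert_of_mem (Finset.mem_singleton_self _))
        (by rw [show b z = a w from heq]; exact Finset.mem_insert_self _ _)
    · exact hnotin (b z) (Finset.mem_insert_of_mem (Finset.mem_singleton_self _))
        (by rw [show b z = b w from heq]
            exact Finset.mem_insert_of_mem (Finset.mem_singleton_self _))

end Core
end QAux


namespace QAux
section MeasureFacts

variable {n q : ℕ}

lemma card_V (n : ℕ) : Fintype.card (V n) = 2 ^ n := by
  rw [Fintype.card_fun, Fintype.card_bool, Fintype.card_fin]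

lemma measurable_all (S : Set (V n → Fin q)) : MeasurableSet S := by
  classical
  have hsing : ∀ χ : V n → Fin q, MeasurableSet ({χ} : Set (V n → Fin q)) := by
    intro χ
    have : ({χ} : Set (V n → Fin q)) = ⋂ v, (fun g : V n → Fin q => g v) ⁻¹' {χ v} := by
      ext g
      simp [funext_iff]
    rw [this]
    exact MeasurableSet.iInter fun v =>
      (measurable_pi_apply v) (MeasurableSet.singleton (χ v))
  have : S = ⋃ χ ∈ S, {χ} := by simp
  rw [this]
  exact MeasurableSet.biUnion (Set.to_countable S) (fun χ _ => hsing χ)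

lemma unifFin_singleton (c : Fin q) : unifFin q {c} = (q : ENNReal)⁻¹ := by
  rw [unifFin, Measure.smul_apply, Measure.count_singleton, smul_eq_mul, mul_one]

lemma unifFin_univ_le : unifFin q Set.univ ≤ 1 := by
  rw [unifFin, Measure.smul_apply, smul_eq_mul,
    Measure.count_apply_finite _ (Set.toFinite _)]
  by_cases hq : q = 0
  · subst hq
    simp
  · have : ((Set.toFinite (Set.univ : Set (Fin q))).toFinset.card : ENNReal) = (q : ENNReal) := by
      norm_cast
      simp [Set.Finite.card_toFinset]
    rw [this, ENNReal.inv_mul_cancel (by exact_mod_cast hq) (by simp)]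

instance : IsFiniteMeasure (unifFin q) :=
  ⟨lt_of_le_of_lt unifFin_univ_le ENNReal.one_lt_top⟩

lemma qCol_singleton (χ : V n → Fin q) :
    qColMeasure n q {χ} = ((q : ENNReal)⁻¹) ^ (2 ^ n) := by
  have hset : ({χ} : Set (V n → Fin q)) = Set.pi Set.univ (fun v => {χ v}) := by
    ext g
    simp [funext_iff, Set.mem_pi]
  rw [qColMeasure, hset, Measure.pi_pi]
  simp only [unifFin_singleton]
  rw [Finset.prod_const, Finset.card_univ, card_V]

lemma qCol_finset (T : Finset (V n → Fin q)) :
    qColMeasure n q ↑T = (T.card : ENNReal) * ((q : ENNReal)⁻¹) ^ (2 ^ n) := by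
  classical
  have : (↑T : Set (V n → Fin q)) = ⋃ χ ∈ T, {χ} := by
    ext g
    simp
  rw [this, measure_biUnion_finset]
  · simp only [qCol_singleton]
    rw [Finset.sum_const, nsmul_eq_mul]
  · intro x _ y _ hxy
    simp [Function.onFun, Set.disjoint_singleton, hxy]
  · exact fun χ _ => measurable_all _

lemma qCol_apply_le (S : Set (V n → Fin q)) :
    qColMeasure n q S ≤ (S.ncard : ENNReal) * ((q : ENNReal)⁻¹) ^ (2 ^ n) := by
  classical
  have hfin : S.Finite := Set.toFinite S
  have hSe : S = ↑hfin.toFinset := (Set.Finite.coe_toFinset hfin).symm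
  rw [hSe, qCol_finset, Set.ncard_coe_finset]

lemma qCol_univ (hq : q ≠ 0) : qColMeasure n q (Set.univ : Set (V n → Fin q)) = 1 := by
  classical
  have : (Set.univ : Set (V n → Fin q)) = ↑(Finset.univ : Finset (V n → Fin q)) := by simp
  rw [this, qCol_finset, Finset.card_univ, Fintype.card_fun, Fintype.card_fin, card_V]
  rw [Nat.cast_pow, ← mul_pow, ENNReal.mul_inv_cancel (by exact_mod_cast hq) (by simp), one_pow]

/-- Counting colourings that agree on a disjoint family of pairs. -/
lemma card_SF (F : Finset (V n × V n)) (M : ℕ) (hcard : F.card = M)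
    (hnd : ∀ p ∈ F, p.1 ≠ p.2)
    (hdisj : ∀ p ∈ F, ∀ p' ∈ F, p ≠ p' →
      p.1 ≠ p'.1 ∧ p.1 ≠ p'.2 ∧ p.2 ≠ p'.1 ∧ p.2 ≠ p'.2) :
    Set.ncard {χ : V n → Fin q | ∀ p ∈ F, χ p.1 = χ p.2} ≤ q ^ (2 ^ n - M) := by
  classical
  set T : Finset (V n) := F.image Prod.snd with hT
  have hTcard : T.card = M := by
    rw [hT, Finset.card_image_of_injOn, hcard]
    intro p hp p' hp' hpp'
    by_contra hne
    exact (hdisj p hp p' hp' hne).2.2.2 hpp'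
  have hfst_not : ∀ p ∈ F, p.1 ∉ T := by
    intro p hp hmem
    rw [hT] at hmem
    obtain ⟨p', hp', hp'eq⟩ := Finset.mem_image.mp hmem
    by_cases hpe : p = p'
    · subst hpe
      exact hnd p hp hp'eq.symm
    · exact (hdisj p hp p' hp' hpe).2.1 hp'eq.symm
  set S : Set (V n → Fin q) := {χ | ∀ p ∈ F, χ p.1 = χ p.2} with hS
  set g : (V n → Fin q) → ({x : V n // x ∉ T} → Fin q) := fun χ x => χ x.1 with hg
  have hinj : Set.InjOn g S := by
    intro χ hχ χ' hχ' hee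
    have heq : ∀ x : V n, x ∉ T → χ x = χ' x := fun x hx => congrFun hee ⟨x, hx⟩
    funext x
    by_cases hx : x ∈ T
    · rw [hT] at hx
      obtain ⟨p, hp, hpeq⟩ := Finset.mem_image.mp hx
      rw [← hpeq, ← (hχ p hp), ← (hχ' p hp)]
      exact heq p.1 (hfst_not p hp)
    · exact heq x hx
  have hle : S.ncard ≤ (Set.univ : Set ({x : V n // x ∉ T} → Fin q)).ncard := by
    apply Set.ncard_le_ncard_of_injOn g (fun a _ => Set.mem_univ _) hinj (Set.toFinite _)
  rw [Set.ncard_univ, Nat.card_eq_fintype_card, Fintype.card_fun, Fintype.card_fin] at hle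
  have hsub : Fintype.card {x : V n // x ∉ T} = 2 ^ n - M := by
    have h1 := Fintype.card_subtype_compl (fun x : V n => x ∈ T)
    have hT' : Fintype.card {x : V n // x ∈ T} = M := by
      rw [Fintype.card_coe, hTcard]
    rw [hT', card_V] at h1
    exact h1
  rwa [hsub] at hle

end MeasureFacts
end QAux


namespace QAux
section Numeric

open Real

lemma pow_le_exp_mul_factorial : ∀ M : ℕ, (M : ℝ) ^ M ≤ Real.exp 1 ^ M * M.factorial := by
  intro M
  induction M with
  | zero => simp
  | succ M ih =>
    have hstep : ((M + 1 : ℕ) : ℝ) ^ M ≤ Real.exp 1 * (M : ℝ) ^ M ∨ M = 0 := by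
      by_cases hM : M = 0
      · exact Or.inr hM
      · left
        have hMpos : (0:ℝ) < M := by
          have : 1 ≤ M := Nat.one_le_iff_ne_zero.mpr hM
          exact_mod_cast this
        have h1 : ((M + 1 : ℕ) : ℝ) = (M : ℝ) * (1 + 1 / M) := by
          field_simp
          push_cast; ring
        rw [h1, mul_pow]
        have h2 : (1 + 1 / (M:ℝ)) ^ M ≤ Real.exp 1 := by
          have h3 : (1 + 1 / (M:ℝ)) ≤ Real.exp (1 / M) := by
            have := Real.add_one_le_exp (1 / (M:ℝ))
            linarith
          calc (1 + 1 / (M:ℝ)) ^ M ≤ Real.exp (1 / M) ^ M := by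
                apply pow_le_pow_left₀ _ h3
                positivity
          _ = Real.exp 1 := by
                rw [← Real.exp_nat_mul]
                congr 1
                field_simp
        calc (M:ℝ) ^ M * (1 + 1 / (M:ℝ)) ^ M ≤ (M:ℝ) ^ M * Real.exp 1 := by
              apply mul_le_mul_of_nonneg_left h2 (by positivity)
        _ = Real.exp 1 * (M:ℝ) ^ M := by ring
    rcases hstep with hstep | hstep
    · have : ((M + 1 : ℕ) : ℝ) ^ (M + 1) = ((M+1 : ℕ) : ℝ) * ((M+1 : ℕ) : ℝ) ^ M := by
        ring
      rw [this]
      calc ((M+1 : ℕ) : ℝ) * ((M+1 : ℕ) : ℝ) ^ M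
          ≤ ((M+1 : ℕ) : ℝ) * (Real.exp 1 * (M : ℝ) ^ M) := by
            apply mul_le_mul_of_nonneg_left hstep (by positivity)
        _ ≤ ((M+1 : ℕ) : ℝ) * (Real.exp 1 * (Real.exp 1 ^ M * M.factorial)) := by
            apply mul_le_mul_of_nonneg_left _ (by positivity)
            apply mul_le_mul_of_nonneg_left ih (le_of_lt (Real.exp_pos 1))
        _ = Real.exp 1 ^ (M+1) * ((M+1) * M.factorial : ℕ) := by
            push_cast
            ring
        _ = Real.exp 1 ^ (M+1) * (M+1).factorial := by
            rw [Nat.factorial_succ]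
    · subst hstep
      norm_num [Nat.factorial]

lemma choose_le_real {N M : ℕ} (hM : 1 ≤ M) :
    ((N.choose M : ℕ) : ℝ) ≤ (Real.exp 1 * N / M) ^ M := by
  have h1 : ((N.choose M : ℕ) : ℝ) ≤ (N:ℝ) ^ M / M.factorial := Nat.choose_le_pow_div M N
  have hMpos : (0:ℝ) < M := by exact_mod_cast hM
  have hfac : (0:ℝ) < M.factorial := by exact_mod_cast M.factorial_pos
  have h2 : (M : ℝ) ^ M ≤ Real.exp 1 ^ M * M.factorial := pow_le_exp_mul_factorial M
  have h3 : (N:ℝ) ^ M / M.factorial ≤ (Real.exp 1 * N / M) ^ M := by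
    rw [div_pow, mul_pow]
    rw [div_le_div_iff₀ hfac (by positivity)]
    calc (N:ℝ) ^ M * (M:ℝ) ^ M ≤ (N:ℝ) ^ M * (Real.exp 1 ^ M * M.factorial) := by
          apply mul_le_mul_of_nonneg_left h2 (by positivity)
    _ = Real.exp 1 ^ M * (N:ℝ) ^ M * M.factorial := by ring
  linarith

lemma rpow_nat_inv_le_exp {n : ℕ} (hn : 1 ≤ n) :
    (n : ℝ) ^ ((1:ℝ) / (n + 1)) ≤ Real.exp 1 := by
  have hnpos : (0:ℝ) < n := by exact_mod_cast hn
  rw [← Real.exp_log (x := (n:ℝ) ^ ((1:ℝ) / (n + 1))) (by positivity)]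
  apply Real.exp_le_exp.mpr
  rw [Real.log_rpow hnpos]
  have hlog : Real.log n ≤ (n:ℝ) - 1 := Real.log_le_sub_one_of_pos hnpos
  have hpos : (0:ℝ) < (n:ℝ) + 1 := by positivity
  rw [div_mul_eq_mul_div, div_le_one hpos]
  nlinarith [Real.log_le_sub_one_of_pos hnpos]

/-- `n^{1+1/(2ε)} ≥ n²/e` when `ε < (n+1)/(2n)`. -/
lemma rpow_exponent_ge {n : ℕ} (hn : 1 ≤ n) {ε : ℝ} (hε0 : 0 < ε)
    (hεup : ε < ((n:ℝ) + 1) / (2 * n)) :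
    ((n:ℝ) ^ 2) / Real.exp 1 ≤ (n : ℝ) ^ ((1:ℝ) + 1 / (2 * ε)) := by
  have hnpos : (0:ℝ) < n := by exact_mod_cast hn
  have hn1 : (1:ℝ) ≤ n := by exact_mod_cast hn
  have h2n : (0:ℝ) < 2 * n := by positivity
  have hexp : (2:ℝ) - 1 / (n + 1) ≤ 1 + 1 / (2 * ε) := by
    have h1 : (n:ℝ) / (n + 1) < 1 / (2 * ε) := by
      rw [div_lt_div_iff₀ (by positivity) (by positivity)]
      have h := (lt_div_iff₀ h2n).mp hεup
      nlinarith
    have h2 : (n:ℝ) / (n + 1) = 1 - 1 / (n + 1) := by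
      field_simp
      ring
    nlinarith [h1, h2]
  calc ((n:ℝ) ^ 2) / Real.exp 1
      ≤ (n:ℝ) ^ ((2:ℝ) - 1 / (n + 1)) := by
        rw [Real.rpow_sub hnpos]
        have hrw : (n:ℝ) ^ (2:ℝ) = (n:ℝ) ^ (2:ℕ) := by
          rw [← Real.rpow_natCast (n:ℝ) 2]
          norm_num
        rw [hrw]
        exact div_le_div_of_nonneg_left (by positivity) (by positivity)
          (rpow_nat_inv_le_exp hn)
    _ ≤ (n : ℝ) ^ ((1:ℝ) + 1 / (2 * ε)) := Real.rpow_le_rpow_of_exponent_le hn1 hexp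

end Numeric
end QAux


namespace QAux
section MainNumeric

lemma main_numeric (α' : ℝ) (hα0 : 0 < α') (hα1 : α' ≤ 1) (n : ℕ)
    (hn3 : 3 ≤ n) (hna : (4:ℝ)/α' ≤ n)
    (ε qr : ℝ) (hε : α' ≤ ε) (hεup : ε < ((n:ℝ)+1)/(2*(n:ℝ)))
    (hq : (8 * Real.exp 2 / α' * (2:ℝ) ^ ((2:ℝ)/α')) * (n:ℝ) ^ ((1:ℝ) + 1/(2*ε)) ≤ qr) :
    (2:ℝ)^(n^2) * (((n^4).choose (Nat.ceil (α' * n^2 / 2))) : ℝ) *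
      (1/qr)^(Nat.ceil (α' * n^2 / 2)) ≤ (1/2)^n := by
  have hε0 : 0 < ε := lt_of_lt_of_le hα0 hε
  have hnpos : (0:ℝ) < n := by
    have : (3:ℝ) ≤ n := by exact_mod_cast hn3
    linarith
  set e1 : ℝ := Real.exp 1 with he1
  have he1pos : 0 < e1 := Real.exp_pos 1
  set K : ℝ := 8 * Real.exp 2 / α' * (2:ℝ) ^ ((2:ℝ)/α') with hK
  have hKpos : 0 < K := by
    apply mul_pos
    · apply div_pos (by positivity) hα0
    · exact Real.rpow_pos_of_pos (by norm_num) _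
  have hrpowpos : (0:ℝ) < (n:ℝ) ^ ((1:ℝ) + 1/(2*ε)) := Real.rpow_pos_of_pos hnpos _
  have hqpos : 0 < qr := lt_of_lt_of_le (by positivity) hq
  set M : ℕ := Nat.ceil (α' * n^2 / 2) with hM
  have hMlow : α' * n^2 / 2 ≤ M := Nat.le_ceil _
  have hMup : (M:ℝ) ≤ α' * n^2 / 2 + 1 := le_of_lt (Nat.ceil_lt_add_one (by positivity))
  have hM1 : 1 ≤ M := by
    rw [hM]
    apply Nat.one_le_ceil_iff.mpr
    positivity
  have hMn : (n:ℝ) ≤ (M:ℝ) := by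
    have h1 : (4:ℝ) ≤ α' * n := by
      rw [div_le_iff₀ hα0] at hna
      linarith [hna]
    have h2 : 2 * (n:ℝ) ≤ α' * n^2 / 2 := by nlinarith
    linarith
  have hMnn : n ≤ M := by exact_mod_cast hMn
  have hMn4 : M ≤ n^4 := by
    have h1 : (M:ℝ) ≤ (n:ℝ)^4 := by
      have : (3:ℝ) ≤ n := by exact_mod_cast hn3
      nlinarith
    exact_mod_cast h1
  -- q is at least (K/e) n²
  have hq2 : (n:ℝ)^2 / qr ≤ e1 / K := by
    have h1 : K * ((n:ℝ)^2 / e1) ≤ qr := by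
      calc K * ((n:ℝ)^2 / e1) ≤ K * ((n:ℝ) ^ ((1:ℝ) + 1/(2*ε))) := by
            apply mul_le_mul_of_nonneg_left _ (le_of_lt hKpos)
            exact rpow_exponent_ge (by omega) hε0 hεup
      _ ≤ qr := hq
    rw [div_le_div_iff₀ hqpos hKpos]
    have h2 : K * ((n:ℝ)^2 / e1) * e1 = (n:ℝ)^2 * K := by
      field_simp
    calc (n:ℝ)^2 * K = K * ((n:ℝ)^2 / e1) * e1 := h2.symm
    _ ≤ qr * e1 := by
        apply mul_le_mul_of_nonneg_right h1 (le_of_lt he1pos)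
    _ = e1 * qr := by ring
  -- the per-pair base
  set B : ℝ := (2 * e1 / α') * (n:ℝ)^2 / qr with hB
  have hBpos : 0 ≤ B := by positivity
  have hstep1 : (((n^4).choose M) : ℝ) * (1/qr)^M ≤ B^M := by
    have h1 : (((n^4).choose M) : ℝ) ≤ (e1 * (n^4 : ℕ) / M) ^ M := choose_le_real hM1
    have hMpos : (0:ℝ) < M := by
      have : (1:ℝ) ≤ M := by exact_mod_cast hM1
      linarith
    have h2 : e1 * ((n:ℝ)^4) / (M:ℝ) / qr ≤ B := by
      rw [hB, div_le_div_iff₀ hqpos hqpos]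
      apply mul_le_mul_of_nonneg_right _ (le_of_lt hqpos)
      calc e1 * ((n:ℝ)^4) / (M:ℝ) ≤ e1 * ((n:ℝ)^4) / (α' * n^2 / 2) := by
            apply div_le_div_of_nonneg_left (by positivity) (by positivity) hMlow
      _ = (2 * e1 / α') * (n:ℝ)^2 := by
            field_simp
    calc (((n^4).choose M) : ℝ) * (1/qr)^M ≤ (e1 * (n^4 : ℕ) / M) ^ M * (1/qr)^M := by
          apply mul_le_mul_of_nonneg_right h1 (by positivity)
    _ = (e1 * ((n:ℝ)^4) / (M:ℝ) / qr) ^ M := by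
          rw [← mul_pow]
          congr 1
          push_cast
          field_simp
    _ ≤ B ^ M := pow_le_pow_left₀ (by positivity) h2 M
  have hstep2 : B ≤ (1/4) * (2:ℝ) ^ (-(2:ℝ)/α') := by
    have h1 : B ≤ (2 * e1 / α') * (e1 / K) := by
      rw [hB, mul_div_assoc]
      apply mul_le_mul_of_nonneg_left hq2 (by positivity)
    have hee : e1 * e1 = Real.exp 2 := by
      rw [he1, ← Real.exp_add]
      norm_num
    have hrpos : (0:ℝ) < (2:ℝ) ^ ((2:ℝ)/α') := Real.rpow_pos_of_pos (by norm_num) _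
    have hneg : (2:ℝ) ^ (-(2:ℝ)/α') = ((2:ℝ) ^ ((2:ℝ)/α'))⁻¹ := by
      rw [← Real.rpow_neg (by norm_num)]
      congr 1
      ring
    have hKalt : α' * K = 8 * Real.exp 2 * (2:ℝ) ^ ((2:ℝ)/α') := by
      rw [hK]
      field_simp
    have h2 : (2 * e1 / α') * (e1 / K) = (1/4) * (2:ℝ) ^ (-(2:ℝ)/α') := by
      have hstep : (2 * e1 / α') * (e1 / K) = (2 * (e1 * e1)) / (α' * K) := by
        field_simp
      rw [hstep, hee, hKalt, hneg]
      rw [div_eq_iff (by positivity)]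
      field_simp
      ring
    linarith
  have hstep3 : B ^ M ≤ (1/4)^M * ((2:ℝ)^(n^2))⁻¹ := by
    calc B ^ M ≤ ((1/4) * (2:ℝ) ^ (-(2:ℝ)/α'))^M := pow_le_pow_left₀ hBpos hstep2 M
    _ = (1/4)^M * ((2:ℝ) ^ (-(2:ℝ)/α'))^M := mul_pow _ _ _
    _ ≤ (1/4)^M * ((2:ℝ)^(n^2))⁻¹ := by
        apply mul_le_mul_of_nonneg_left _ (by positivity)
        have h1 : ((2:ℝ) ^ (-(2:ℝ)/α'))^M = (2:ℝ) ^ ((-(2:ℝ)/α') * M) := by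
          rw [← Real.rpow_natCast ((2:ℝ) ^ (-(2:ℝ)/α')) M, ← Real.rpow_mul (by norm_num)]
        have h2 : ((2:ℝ)^(n^2))⁻¹ = (2:ℝ) ^ (-(((n^2 : ℕ)):ℝ)) := by
          rw [Real.rpow_neg (by norm_num), Real.rpow_natCast]
        rw [h1, h2]
        apply Real.rpow_le_rpow_of_exponent_le (by norm_num)
        have hcast : (((n^2 : ℕ)):ℝ) = (n:ℝ)^2 := by push_cast; ring
        rw [hcast]
        have h3 : (n:ℝ)^2 ≤ (2/α') * M := by
          rw [div_mul_eq_mul_div, le_div_iff₀ hα0]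
          nlinarith [hMlow]
        have hMpos : (0:ℝ) ≤ M := by positivity
        calc (-(2:ℝ)/α') * M = -((2/α') * M) := by ring
        _ ≤ -((n:ℝ)^2) := by linarith
  calc (2:ℝ)^(n^2) * (((n^4).choose M) : ℝ) * (1/qr)^M
      = (2:ℝ)^(n^2) * ((((n^4).choose M) : ℝ) * (1/qr)^M) := by ring
  _ ≤ (2:ℝ)^(n^2) * ((1/4)^M * ((2:ℝ)^(n^2))⁻¹) := by
      apply mul_le_mul_of_nonneg_left (le_trans hstep1 hstep3) (by positivity)
  _ = (1/4)^M := by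
      field_simp
  _ ≤ (1/4)^n := by
      apply pow_le_pow_of_le_one (by norm_num) (by norm_num) hMnn
  _ ≤ (1/2)^n := by
      apply pow_le_pow_left₀ (by norm_num) (by norm_num) n

end MainNumeric
end QAux


namespace QAux
section BadEvent

variable {n q : ℕ}

def pairGood {n : ℕ} (F : Finset (V n × V n)) : Prop :=
  (∀ p ∈ F, p.1 ≠ p.2) ∧
  (∀ p ∈ F, ∀ p' ∈ F, p ≠ p' → p.1 ≠ p'.1 ∧ p.1 ≠ p'.2 ∧ p.2 ≠ p'.1 ∧ p.2 ≠ p'.2)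

instance : DecidablePred (pairGood (n := n)) := fun F => by
  unfold pairGood
  exact instDecidableAnd

def Cand (n M : ℕ) (t : Fin n → V n) : Finset (Finset (V n × V n)) :=
  Finset.filter pairGood ((regionF t ×ˢ regionF t).powersetCard M)

def BadSet (n q M : ℕ) : Set (V n → Fin q) :=
  ⋃ t : Fin n → V n, ⋃ F ∈ Cand n M t, {χ : V n → Fin q | ∀ p ∈ F, χ p.1 = χ p.2}

lemma card_Cand (M : ℕ) (t : Fin n → V n) : (Cand n M t).card ≤ (n^4).choose M := by
  calc (Cand n M t).card ≤ ((regionF t ×ˢ regionF t).powersetCard M).card :=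
        Finset.card_le_card (Finset.filter_subset _ _)
  _ = (regionF t ×ˢ regionF t).card.choose M := Finset.card_powersetCard _ _
  _ ≤ (n^4).choose M := by
      apply Nat.choose_le_choose
      rw [Finset.card_product]
      have h := card_regionF t
      calc (regionF t).card * (regionF t).card ≤ (n*n) * (n*n) :=
            Nat.mul_le_mul h h
      _ = n^4 := by ring

lemma measure_SF (hq : q ≠ 0) (hM2 : M ≤ 2^n) (F : Finset (V n × V n)) (hF : F.card = M)
    (hgood : pairGood F) :
    qColMeasure n q {χ : V n → Fin q | ∀ p ∈ F, χ p.1 = χ p.2} ≤ ((q : ENNReal)⁻¹)^M := by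
  calc qColMeasure n q {χ : V n → Fin q | ∀ p ∈ F, χ p.1 = χ p.2}
      ≤ (({χ : V n → Fin q | ∀ p ∈ F, χ p.1 = χ p.2}).ncard : ENNReal) *
          ((q : ENNReal)⁻¹) ^ (2 ^ n) := qCol_apply_le _
  _ ≤ ((q ^ (2^n - M) : ℕ) : ENNReal) * ((q : ENNReal)⁻¹) ^ (2 ^ n) := by
      apply mul_le_mul_of_nonneg_right _ (by positivity)
      exact_mod_cast card_SF F M hF hgood.1 hgood.2
  _ = ((q : ENNReal)⁻¹)^M := by
      rw [Nat.cast_pow]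
      set k := 2^n - M with hk
      have hsplit : (2:ℕ)^n = k + M := by omega
      rw [hsplit, pow_add, ← mul_assoc, ← mul_pow,
        ENNReal.mul_inv_cancel (by exact_mod_cast hq) (by simp), one_pow, one_mul]

lemma measure_BadSet (hq : q ≠ 0) {M : ℕ} (hM2 : M ≤ 2^n) :
    qColMeasure n q (BadSet n q M) ≤
      ((2:ENNReal)^(n^2)) * (((n^4).choose M : ℕ) : ENNReal) * ((q : ENNReal)⁻¹)^M := by
  have hterm : ∀ t : Fin n → V n,
      qColMeasure n q (⋃ F ∈ Cand n M t, {χ : V n → Fin q | ∀ p ∈ F, χ p.1 = χ p.2})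
        ≤ (((n^4).choose M : ℕ) : ENNReal) * ((q : ENNReal)⁻¹)^M := by
    intro t
    calc qColMeasure n q (⋃ F ∈ Cand n M t, {χ : V n → Fin q | ∀ p ∈ F, χ p.1 = χ p.2})
        ≤ ∑ F ∈ Cand n M t, qColMeasure n q {χ : V n → Fin q | ∀ p ∈ F, χ p.1 = χ p.2} :=
          measure_biUnion_finset_le _ _
    _ ≤ ∑ _F ∈ Cand n M t, ((q : ENNReal)⁻¹)^M := by
        apply Finset.sum_le_sum
        intro F hF
        have hmem := Finset.mem_filter.mp hF
        have hcard : F.card = M := (Finset.mem_powersetCard.mp hmem.1).2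
        exact measure_SF hq hM2 F hcard hmem.2
    _ = ((Cand n M t).card : ENNReal) * ((q : ENNReal)⁻¹)^M := by
        rw [Finset.sum_const, nsmul_eq_mul]
    _ ≤ (((n^4).choose M : ℕ) : ENNReal) * ((q : ENNReal)⁻¹)^M := by
        apply mul_le_mul_of_nonneg_right _ (by positivity)
        exact_mod_cast card_Cand M t
  calc qColMeasure n q (BadSet n q M)
      ≤ ∑' t : Fin n → V n,
          qColMeasure n q (⋃ F ∈ Cand n M t, {χ : V n → Fin q | ∀ p ∈ F, χ p.1 = χ p.2}) :=
        measure_iUnion_le _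
  _ ≤ ∑' _t : Fin n → V n, (((n^4).choose M : ℕ) : ENNReal) * ((q : ENNReal)⁻¹)^M := by
      exact ENNReal.tsum_le_tsum hterm
  _ = (Fintype.card (Fin n → V n) : ENNReal) *
        ((((n^4).choose M : ℕ) : ENNReal) * ((q : ENNReal)⁻¹)^M) := by
      rw [tsum_fintype, Finset.sum_const, Finset.card_univ, nsmul_eq_mul]
  _ = ((2:ENNReal)^(n^2)) * (((n^4).choose M : ℕ) : ENNReal) * ((q : ENNReal)⁻¹)^M := by
      have hcard : Fintype.card (Fin n → V n) = 2^(n^2) := by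
        rw [Fintype.card_fun, Fintype.card_fin, card_V, ← pow_mul]
        congr 1
        ring
      rw [hcard]
      push_cast
      ring

end BadEvent
end QAux


namespace QAux
section Incl

variable {n q : ℕ}

lemma choose_two_real (hn : 1 ≤ n) : ((n.choose 2 : ℕ) : ℝ) * 2 = (n:ℝ) * ((n:ℝ) - 1) := by
  have hdvd : 2 ∣ n * (n-1) := by
    rcases n with _ | m
    · simp
    · simpa [Nat.succ_sub_one, mul_comm] using (Nat.even_mul_succ_self m).two_dvd
  have h2 : (n.choose 2) * 2 = n * (n-1) := by
    rw [Nat.choose_two_right]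
    exact Nat.div_mul_cancel hdvd
  have := congrArg (fun k : ℕ => (k : ℝ)) h2
  push_cast [Nat.cast_sub hn] at this
  linarith

lemma sphere_subset_region (f : V n ≃ V n) (v : V n) :
    sphereSet n 1 (⇑f.symm '' nbhd n v) ⊆ ↑(regionF (fun i => f.symm (flip v i))) := by
  intro x hx
  obtain ⟨⟨a0, ha0, hd⟩, -⟩ := hx
  obtain ⟨u, hu, rfl⟩ := ha0
  have hadj_u : (Q n).Adj v u := hu
  obtain ⟨i, rfl⟩ := eq_flip_of_adj hadj_u
  apply Finset.mem_coe.mpr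
  apply Finset.mem_biUnion.mpr
  exact ⟨i, Finset.mem_univ _, mem_nbrF.mpr (adj_of_dist_eq_one hd)⟩

/-- When `ε ≥ (n+1)/(2n)` the cluster bound holds deterministically. -/
lemma cluster_trivial {ε : ℝ} (hn : 1 ≤ n) (hεbig : ((n:ℝ)+1)/(2*(n:ℝ)) ≤ ε)
    (f : V n ≃ V n) (v : V n) :
    ((sphereSet n 1 (⇑f.symm '' nbhd n v)).ncard : ℝ) ≤ ((n.choose 2 : ℕ) : ℝ) + ε * (n:ℝ)^2 := by
  have hnpos : (0:ℝ) < n := by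
    have : (1:ℝ) ≤ n := by exact_mod_cast hn
    linarith
  have h1 : (sphereSet n 1 (⇑f.symm '' nbhd n v)).ncard ≤ n * n := by
    calc (sphereSet n 1 (⇑f.symm '' nbhd n v)).ncard
        ≤ (↑(regionF (fun i => f.symm (flip v i))) : Set (V n)).ncard :=
          Set.ncard_le_ncard (sphere_subset_region f v) (Set.toFinite _)
    _ = (regionF (fun i => f.symm (flip v i))).card := Set.ncard_coe_finset _
    _ ≤ n * n := card_regionF _
  have h1' : ((sphereSet n 1 (⇑f.symm '' nbhd n v)).ncard : ℝ) ≤ (n:ℝ) * n := by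
    exact_mod_cast h1
  have h2 := choose_two_real hn
  have h3 : ((n:ℝ)+1)/(2*(n:ℝ)) * (n:ℝ)^2 ≤ ε * (n:ℝ)^2 := by
    apply mul_le_mul_of_nonneg_right hεbig (by positivity)
  have h4 : ((n:ℝ)+1)/(2*(n:ℝ)) * (n:ℝ)^2 = ((n:ℝ)+1) * n / 2 := by
    field_simp
  nlinarith

lemma compl_subset_bad (hn : 3 ≤ n) (ε : ℝ) (M : ℕ)
    (hMε : (M:ℝ) + (n:ℝ) ≤ ε * (n:ℝ)^2)
    (χ : V n → Fin q)
    (hbad : ¬ (∀ f ∈ IsomSet n 1 χ, f.symm ∈ ClusterSet n 1 (ε * (n:ℝ)^2))) :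
    χ ∈ BadSet n q M := by
  push_neg at hbad
  obtain ⟨f, hf, hcl⟩ := hbad
  have hcl' : ∃ v, ((n.choose 2 : ℕ) : ℝ) + ε * (n:ℝ)^2 <
      ((sphereSet n 1 (⇑f.symm '' nbhd n v)).ncard : ℝ) := by
    by_contra hcon
    push_neg at hcon
    exact hcl (fun v => by
      have := hcon v
      simpa using this)
  obtain ⟨v, hv⟩ := hcl'
  have hcore : n.choose 2 + n + M ≤ (sphereSet n 1 (⇑f.symm '' nbhd n v)).ncard := by
    have hr : ((n.choose 2 + n + M : ℕ) : ℝ) ≤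
        (((sphereSet n 1 (⇑f.symm '' nbhd n v)).ncard : ℕ) : ℝ) := by
      push_cast
      linarith
    exact_mod_cast hr
  obtain ⟨t, F, hFcard, hFprop, hFdisj⟩ := core hn χ f hf v M hcore
  obtain ⟨F', hF'sub, hF'card⟩ := Finset.exists_subset_card_eq hFcard
  apply Set.mem_iUnion.mpr
  refine ⟨t, Set.mem_iUnion₂.mpr ⟨F', ?_, ?_⟩⟩
  · rw [Cand, Finset.mem_filter]
    refine ⟨?_, ?_, ?_⟩
    · rw [Finset.mem_powersetCard]
      refine ⟨?_, hF'card⟩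
      intro p hp
      obtain ⟨h1, h2, -, -⟩ := hFprop p (hF'sub hp)
      exact Finset.mem_product.mpr ⟨h1, h2⟩
    · intro p hp
      exact (hFprop p (hF'sub hp)).2.2.1
    · intro p hp p' hp' hne
      exact hFdisj p (hF'sub hp) p' (hF'sub hp') hne
  · intro p hp
    exact (hFprop p (hF'sub hp)).2.2.2

lemma sq_le_two_pow : ∀ m : ℕ, 5 ≤ m → m^2 ≤ 2^m := by
  intro m hm
  induction m with
  | zero => omega
  | succ k ih =>
    rcases Nat.lt_or_ge k 5 with h | h
    · have hk4 : k = 4 := by omega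
      subst hk4
      norm_num
    · have h1 := ih h
      have h2 : 2*k+1 ≤ k^2 := by nlinarith
      have h3 : (k+1)^2 = k^2 + (2*k+1) := by ring
      have h4 : (2:ℕ)^(k+1) = 2^k + 2^k := by ring
      omega

end Incl
end QAux



open QAux

/-- Lemma 2.7 (1scott): with high probability every `f ∈ Isom^(1)(χ)` has
`f⁻¹ ∈ Cluster¹_{ε(n) n²}`. -/
theorem isom_one_inverse_cluster
    (α : ℝ) (hα : 0 < α) (ε : ℕ → ℝ) (hε : ∀ n, α ≤ ε n) :
    ∃ K : ℝ, 0 < K ∧ ∀ q : ℕ → ℕ,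
      (∀ n : ℕ, K * (n : ℝ) ^ (1 + 1 / (2 * ε n)) ≤ q n) →
      Tendsto (fun n => qColMeasure n (q n)
        {χ | ∀ f ∈ IsomSet n 1 χ,
          f.symm ∈ ClusterSet n 1 (ε n * (n : ℝ) ^ 2)}) atTop (𝓝 1) := by
  classical
  set α' : ℝ := min α 1 with hα'
  have hα'0 : 0 < α' := lt_min hα one_pos
  have hα'1 : α' ≤ 1 := min_le_right _ _
  set K : ℝ := 8 * Real.exp 2 / α' * (2:ℝ) ^ ((2:ℝ)/α') with hK
  have hKpos : 0 < K := by
    apply mul_pos (div_pos (by positivity) hα'0) (Real.rpow_pos_of_pos (by norm_num) _)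
  refine ⟨K, hKpos, ?_⟩
  intro q hqK
  set T : (n : ℕ) → Set (V n → Fin (q n)) := fun n => {χ | ∀ f ∈ IsomSet n 1 χ,
          f.symm ∈ ClusterSet n 1 (ε n * (n : ℝ) ^ 2)} with hT
  set b : ℕ → ENNReal := fun n => ENNReal.ofReal ((1/2:ℝ)^n) with hb
  set N₀ : ℕ := max 5 (Nat.ceil ((4:ℝ)/α')) with hN₀
  have hmain : ∀ n, N₀ ≤ n →
      (1 - b n ≤ qColMeasure n (q n) (T n) ∧ qColMeasure n (q n) (T n) ≤ 1) := by
    intro n hn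
    have hn5 : 5 ≤ n := le_trans (le_max_left _ _) hn
    have hn3 : 3 ≤ n := by omega
    have hn1 : 1 ≤ n := by omega
    have hna : (4:ℝ)/α' ≤ n := by
      have h1 : Nat.ceil ((4:ℝ)/α') ≤ n := le_trans (le_max_right _ _) hn
      calc (4:ℝ)/α' ≤ (Nat.ceil ((4:ℝ)/α') : ℝ) := Nat.le_ceil _
      _ ≤ n := by exact_mod_cast h1
    have hn1R : (1:ℝ) ≤ n := by exact_mod_cast hn1
    have hnposR : (0:ℝ) < n := by linarith
    have hεn0 : 0 < ε n := lt_of_lt_of_le hα (hε n)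
    have hα'ε : α' ≤ ε n := le_trans (min_le_left _ _) (hε n)
    have hqKn := hqK n
    have hrpow1 : (1:ℝ) ≤ (n : ℝ) ^ ((1:ℝ) + 1/(2*ε n)) := by
      calc (1:ℝ) = (n:ℝ) ^ (0:ℝ) := (Real.rpow_zero _).symm
      _ ≤ (n : ℝ) ^ ((1:ℝ) + 1/(2*ε n)) :=
        Real.rpow_le_rpow_of_exponent_le hn1R (by positivity)
    have hqposR : (0:ℝ) < q n := by
      have h1 : (0:ℝ) < K * (n : ℝ) ^ ((1:ℝ) + 1/(2*ε n)) := by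
        apply mul_pos hKpos
        linarith
      calc (0:ℝ) < K * (n : ℝ) ^ ((1:ℝ) + 1/(2*ε n)) := h1
      _ ≤ q n := by exact_mod_cast hqKn
    have hq0 : q n ≠ 0 := by
      intro hcon
      rw [hcon] at hqposR
      norm_num at hqposR
    have hupper : qColMeasure n (q n) (T n) ≤ 1 := by
      calc qColMeasure n (q n) (T n) ≤ qColMeasure n (q n) Set.univ :=
            measure_mono (Set.subset_univ _)
      _ = 1 := qCol_univ hq0
    refine ⟨?_, hupper⟩
    have hcompl : qColMeasure n (q n) ((T n)ᶜ) ≤ b n := by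
      by_cases hcase : ((n:ℝ)+1)/(2*(n:ℝ)) ≤ ε n
      · have hTuniv : T n = Set.univ := by
          apply Set.eq_univ_iff_forall.mpr
          intro χ f hf v
          exact cluster_trivial hn1 hcase f v
        rw [hTuniv, Set.compl_univ]
        simp
      · push_neg at hcase
        set M : ℕ := Nat.ceil (α' * (n:ℝ)^2 / 2) with hM
        have hMup : (M:ℝ) ≤ α' * (n:ℝ)^2/2 + 1 :=
          le_of_lt (Nat.ceil_lt_add_one (by positivity))
        have h4n : (4:ℝ) ≤ α' * n := by
          rw [div_le_iff₀ hα'0] at hna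
          linarith
        have h4nn : (4:ℝ) * n ≤ α' * (n:ℝ)^2 := by nlinarith
        have hεM : α' * (n:ℝ)^2 ≤ ε n * (n:ℝ)^2 :=
          mul_le_mul_of_nonneg_right hα'ε (by positivity)
        have hMε : (M:ℝ) + (n:ℝ) ≤ ε n * (n:ℝ)^2 := by nlinarith
        have hM2 : M ≤ 2^n := by
          have h1 : (M:ℝ) ≤ ((n^2 : ℕ) : ℝ) := by
            push_cast
            nlinarith
          have h2 : M ≤ n^2 := by exact_mod_cast h1
          exact le_trans h2 (sq_le_two_pow n hn5)
        have hsub : (T n)ᶜ ⊆ BadSet n (q n) M := by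
          intro χ hχ
          exact compl_subset_bad hn3 (ε n) M hMε χ hχ
        have hbound := measure_BadSet (n := n) (q := q n) hq0 hM2
        have hnum := main_numeric α' hα'0 hα'1 n hn3 hna (ε n) (q n) hα'ε hcase
          (by exact_mod_cast hqKn)
        have htrans : ((2:ENNReal)^(n^2)) * (((n^4).choose M : ℕ) : ENNReal) *
            (((q n) : ENNReal)⁻¹)^M ≤ b n := by
          have e1 : ((2:ENNReal)^(n^2)) = ENNReal.ofReal ((2:ℝ)^(n^2)) := by
            rw [ENNReal.ofReal_pow (by norm_num)]
            norm_num
          have e2 : (((n^4).choose M : ℕ) : ENNReal) =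
              ENNReal.ofReal ((((n^4).choose M : ℕ)) : ℝ) := (ENNReal.ofReal_natCast _).symm
          have e3 : (((q n) : ENNReal)⁻¹)^M = ENNReal.ofReal ((1/(q n : ℝ))^M) := by
            rw [ENNReal.ofReal_pow (by positivity)]
            congr 1
            rw [one_div, ENNReal.ofReal_inv_of_pos hqposR, ENNReal.ofReal_natCast]
          rw [e1, e2, e3, ← ENNReal.ofReal_mul (by positivity),
            ← ENNReal.ofReal_mul (by positivity)]
          exact ENNReal.ofReal_le_ofReal hnum
        exact le_trans (measure_mono hsub) (le_trans hbound htrans)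
    have h1 : (1:ENNReal) ≤ qColMeasure n (q n) (T n) + qColMeasure n (q n) ((T n)ᶜ) := by
      have he : (Set.univ : Set (V n → Fin (q n))) = T n ∪ (T n)ᶜ :=
        (Set.union_compl_self _).symm
      calc (1:ENNReal) = qColMeasure n (q n) Set.univ := (qCol_univ hq0).symm
      _ = qColMeasure n (q n) (T n ∪ (T n)ᶜ) := by rw [← he]
      _ ≤ _ := measure_union_le _ _
    have h2 : (1:ENNReal) ≤ qColMeasure n (q n) (T n) + b n :=
      le_trans h1 ((by gcongr))
    exact tsub_le_iff_right.mpr h2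
  have hb0 : Tendsto b atTop (𝓝 0) := by
    have h1 : Tendsto (fun m : ℕ => (1/2:ℝ)^m) atTop (𝓝 0) :=
      tendsto_pow_atTop_nhds_zero_of_lt_one (by norm_num) (by norm_num)
    have h2 := (ENNReal.continuous_ofReal.tendsto 0).comp h1
    rw [ENNReal.ofReal_zero] at h2; exact h2
  have hlow : Tendsto (fun n => 1 - b n) atTop (𝓝 1) := by
    have h1 := ENNReal.Tendsto.sub (tendsto_const_nhds (x := (1:ENNReal))
      (f := atTop)) hb0 (Or.inl (by norm_num))
    simpa using h1
  apply tendsto_of_tendsto_of_tendsto_of_le_of_le' hlow tendsto_const_nhds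
  · exact Filter.eventually_atTop.mpr ⟨N₀, fun n hn => (hmain n hn).1⟩
  · exact Filter.eventually_atTop.mpr ⟨N₀, fun n hn => (hmain n hn).2⟩

end
end

section
/- Let r ≥ 2 be an integer and let s : ℕ → ℕ be a function with s(n) → ∞ and s(n) = o(n) as n → ∞. Then there exists a constant C > 0 such that for all sufficiently large n the following holds: if A ⊆ V(Q_n) is such that |Γ(A)| ≤ binom(n,r) + n^(r−1)·s(n), then |A| ≤ binom(n,r−1) + C·n^(r−2)·s(n). -/
open MeasureTheory Filter Set Asymptotics Topology

noncomputable section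

set_option maxHeartbeats 1000000
namespace SmallShadow

def bal (n k : ℕ) : ℕ := ∑ i ∈ Finset.range k, n.choose i

lemma bal_succ (n k : ℕ) : bal n (k+1) = bal n k + n.choose k := by
  simp [bal, Finset.sum_range_succ]

lemma bal_zero (n : ℕ) : bal n 0 = 0 := rfl

lemma bal_mono (n : ℕ) : Monotone (bal n) := by
  intro a b hab
  exact Finset.sum_le_sum_of_subset (Finset.range_subset_range.2 hab)

lemma bal_top (n : ℕ) : bal n (n+1) = 2^n := Nat.sum_range_choose n

lemma bal_pascal (n k : ℕ) : bal (n+1) (k+1) = bal n (k+1) + bal n k := by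
  induction k with
  | zero => simp [bal]
  | succ k ih =>
      rw [bal_succ (n+1) (k+1), ih, Nat.choose_succ_succ, bal_succ n (k+1), bal_succ n k]
      ring

noncomputable def lin (n k : ℕ) (m : ℝ) : ℝ :=
  (n.choose k : ℝ) + (m - bal n k) * (((n.choose (k+1) : ℝ) - n.choose k) / n.choose k)

lemma choose_cast_pos {n k : ℕ} (h : k ≤ n) : (0:ℝ) < (n.choose k : ℝ) := by
  exact_mod_cast Nat.choose_pos h

lemma choose_succ_real (n k : ℕ) :
    (n.choose (k+1) : ℝ) * ((k:ℝ)+1) = (n.choose k : ℝ) * ((n:ℝ) - k) := by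
  rcases le_or_gt k n with h | h
  · have h2 : ((n.choose (k+1) * (k+1) : ℕ) : ℝ) = ((n.choose k * (n - k) : ℕ) : ℝ) := by
      rw [Nat.choose_succ_right_eq n k]
    push_cast [Nat.cast_sub h] at h2
    linarith
  · rw [Nat.choose_eq_zero_of_lt (by omega), Nat.choose_eq_zero_of_lt h]
    simp

lemma pascal_real (n k : ℕ) :
    ((n+1).choose (k+1) : ℝ) = (n.choose k : ℝ) + n.choose (k+1) := by
  rw [Nat.choose_succ_succ]; push_cast; ring

lemma choose_succ_left_real (n k : ℕ) (h : k ≤ n) :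
    ((n+1).choose k : ℝ) * ((n:ℝ)+1-k) = (n.choose k : ℝ) * ((n:ℝ)+1) := by
  have h2 : ((n.choose k * (n+1) : ℕ) : ℝ) = (((n+1).choose k * (n+1-k) : ℕ) : ℝ) := by
    rw [Nat.choose_mul_succ_eq n k]
  push_cast [Nat.cast_sub (by omega : k ≤ n+1)] at h2
  linarith

/-- the line in right-anchored form -/
lemma lin_alt (n k : ℕ) (h : k ≤ n) (m : ℝ) :
    lin n k m = (n.choose (k+1) : ℝ) +
      (m - bal n (k+1)) * (((n.choose (k+1) : ℝ) - n.choose k) / n.choose k) := by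
  have h0 := (choose_cast_pos h).ne'
  rw [lin, bal_succ]
  push_cast
  field_simp
  ring
lemma cast_le_real {k n : ℕ} (h : k ≤ n) : (k:ℝ) ≤ (n:ℝ) := by exact_mod_cast h

/-- slope of the line in closed form -/
lemma lin_slope (n k : ℕ) (hk : k ≤ n) (m : ℝ) :
    lin n k m = (n.choose k : ℝ) + (m - bal n k) * (((n:ℝ) - 2*k - 1)/((k:ℝ)+1)) := by
  have h0 := (choose_cast_pos hk).ne'
  have hk1 : ((k:ℝ)+1) ≠ 0 := by positivity
  have e1 := choose_succ_real n k
  rw [lin]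
  congr 1
  congr 1
  rw [div_eq_div_iff h0 hk1]
  linarith

lemma lin_alt_slope (n k : ℕ) (hk : k ≤ n) (m : ℝ) :
    lin n k m = (n.choose (k+1) : ℝ) +
      (m - bal n (k+1)) * (((n:ℝ) - 2*k - 1)/((k:ℝ)+1)) := by
  have h0 := (choose_cast_pos hk).ne'
  have hk1 : ((k:ℝ)+1) ≠ 0 := by positivity
  rw [lin_alt n k hk, bal_succ]
  have e1 := choose_succ_real n k
  congr 1
  congr 1
  rw [div_eq_div_iff h0 hk1]
  linarith

lemma choose_succ_div (n k : ℕ) :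
    (n.choose (k+1) : ℝ) = (n.choose k : ℝ) * ((n:ℝ)-k)/((k:ℝ)+1) := by
  rw [eq_div_iff (by positivity : ((k:ℝ)+1) ≠ 0)]; exact choose_succ_real n k

lemma bal_pascal_real (n k : ℕ) :
    ((bal (n+1) (k+1) : ℕ):ℝ) = 2*((bal n k : ℕ) : ℝ) + (n.choose k : ℝ) := by
  rw [bal_pascal n k, bal_succ n k]; push_cast; ring

lemma linI (n k : ℕ) (hk : k ≤ n) (u v : ℝ) :
    lin n k u + lin n k v - lin (n+1) k (u+v) =
      ((bal (n+1) (k+1) : ℝ) - (u+v)) / ((k:ℝ)+1) := by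
  have hk1 : ((k:ℝ)+1) ≠ 0 := by positivity
  rw [lin_slope n k hk, lin_slope n k hk, lin_alt_slope (n+1) k (by omega),
    pascal_real n k, choose_succ_div n k, bal_pascal_real n k]
  push_cast
  field_simp
  ring

lemma linIb (n k : ℕ) (hk : k ≤ n) (u v : ℝ) :
    lin n k u + lin n k v - lin (n+1) (k+1) (u+v) =
      ((u+v) - (bal (n+1) (k+1) : ℝ)) * ((n:ℝ)-k) / (((k:ℝ)+1)*((k:ℝ)+2)) := by
  have hk1 : ((k:ℝ)+1) ≠ 0 := by positivity
  have hk2 : ((k:ℝ)+2) ≠ 0 := by positivity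
  rw [lin_slope n k hk, lin_slope n k hk, lin_slope (n+1) (k+1) (by omega),
    pascal_real n k, choose_succ_div n k, bal_pascal_real n k]
  push_cast
  field_simp
  ring

lemma linB (n k : ℕ) (hk : k+1 ≤ n) (u v : ℝ) :
    lin n (k+1) u + lin n k v - lin (n+1) (k+1) (u+v) =
      (v + lin n k v - u)/((k:ℝ)+2) := by
  have hk1 : ((k:ℝ)+1) ≠ 0 := by positivity
  have hk2 : ((k:ℝ)+2) ≠ 0 := by positivity
  rw [lin_slope n (k+1) hk, lin_slope n k (by omega), lin_slope (n+1) (k+1) (by omega),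
    pascal_real n k, choose_succ_div n k, bal_pascal_real n k, bal_succ n k]
  push_cast
  field_simp
  ring

lemma linA (n k : ℕ) (hk : k+1 ≤ n) (u v : ℝ) :
    lin n (k+1) u + u - v - lin (n+1) (k+1) (u+v) =
      (u - (bal n (k+1) : ℝ))*((k:ℝ)+1)/((k:ℝ)+2)
        + ((bal n k : ℝ) - v)*((n:ℝ)-k)/((k:ℝ)+2) := by
  have hk1 : ((k:ℝ)+1) ≠ 0 := by positivity
  have hk2 : ((k:ℝ)+2) ≠ 0 := by positivity
  rw [lin_slope n (k+1) hk, lin_slope (n+1) (k+1) (by omega),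
    pascal_real n k, choose_succ_div n k, bal_pascal_real n k, bal_succ n k]
  push_cast
  field_simp
  ring

lemma linA0 (n : ℕ) (u v : ℝ) :
    lin n 0 u + u - v - lin (n+1) 0 (u+v) = -((n:ℝ)+1)*v := by
  simp only [lin, bal_zero, zero_add, Nat.choose_zero_right, Nat.choose_one_right]
  push_cast
  field_simp
  ring

lemma lin_adj (n k : ℕ) (hk : k+1 ≤ n) (m : ℝ) :
    lin n k m - lin n (k+1) m =
      (m - (bal n (k+1):ℝ)) * ((n:ℝ)+1) / (((k:ℝ)+1)*((k:ℝ)+2)) := by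
  have hk1 : ((k:ℝ)+1) ≠ 0 := by positivity
  have hk2 : ((k:ℝ)+2) ≠ 0 := by positivity
  rw [lin_slope n k (by omega), lin_slope n (k+1) hk, choose_succ_div n k, bal_succ n k]
  push_cast
  field_simp
  ring
/-! segments -/

def segOf (n m : ℕ) : ℕ := Nat.findGreatest (fun k => bal n k ≤ m) n

lemma segOf_le (n m : ℕ) : segOf n m ≤ n := Nat.findGreatest_le n

lemma bal_segOf_le (n m : ℕ) : bal n (segOf n m) ≤ m :=
  Nat.findGreatest_spec (P := fun k => bal n k ≤ m) (Nat.zero_le n) (by simp [bal_zero])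

lemma le_bal_segOf_succ (n m : ℕ) (h : m ≤ 2^n) : m ≤ bal n (segOf n m + 1) := by
  by_contra hcon
  push_neg at hcon
  have hP : bal n (segOf n m + 1) ≤ m := le_of_lt hcon
  rcases Nat.lt_or_ge (segOf n m) n with hlt | hge
  · have := Nat.le_findGreatest (P := fun k => bal n k ≤ m)
      (show segOf n m + 1 ≤ n by omega) hP
    simp only [segOf] at this
    omega
  · have he : segOf n m = n := le_antisymm (segOf_le n m) hge
    rw [he, bal_top] at hcon
    omega

lemma segOf_mono (n : ℕ) {v u : ℕ} (h : v ≤ u) : segOf n v ≤ segOf n u :=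
  Nat.findGreatest_mono (P := fun k => bal n k ≤ v) (Q := fun k => bal n k ≤ u)
    (fun _ hk => le_trans hk h) le_rfl

/-! comparing lines at a point in a given segment -/

lemma lin_le_of_seg (n t k : ℕ) (ht : t ≤ n) (hk : k ≤ n) (m : ℝ)
    (h1 : (bal n t : ℝ) ≤ m) (h2 : m ≤ (bal n (t+1) : ℝ)) :
    lin n t m ≤ lin n k m := by
  rcases le_or_gt k t with hkt | htk
  · -- climb down from t to k : lin n j m ≥ lin n t m for j ≤ t
    have step : ∀ j, j + 1 ≤ t → lin n (j+1) m ≤ lin n j m := by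
      intro j hj
      have hadj := lin_adj n j (by omega) m
      have hb : (bal n (j+1) : ℝ) ≤ m :=
        le_trans (by exact_mod_cast bal_mono n hj) h1
      have hpos : (0:ℝ) ≤ (m - (bal n (j+1):ℝ)) * ((n:ℝ)+1) / (((j:ℝ)+1)*((j:ℝ)+2)) := by
        apply div_nonneg
        · apply mul_nonneg (by linarith) (by positivity)
        · positivity
      linarith
    -- induction from k up to t
    have main : ∀ d, ∀ j, j + d = t → j ≥ k → lin n t m ≤ lin n j m := by
      intro d
      induction d with
      | zero => intro j hj _; simp [show j = t by omega]
      | succ d ih =>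
          intro j hj hjk
          have h1' := ih (j+1) (by omega) (by omega)
          have h2' := step j (by omega)
          linarith
    exact main (t - k) k (by omega) le_rfl
  · -- climb up from t to k
    have step : ∀ j, t ≤ j → j + 1 ≤ n → lin n j m ≤ lin n (j+1) m := by
      intro j hjt hjn
      have hadj := lin_adj n j hjn m
      have hb : m ≤ (bal n (j+1) : ℝ) :=
        le_trans h2 (by exact_mod_cast bal_mono n (by omega))
      have hneg : (m - (bal n (j+1):ℝ)) * ((n:ℝ)+1) / (((j:ℝ)+1)*((j:ℝ)+2)) ≤ 0 := by
        apply div_nonpos_of_nonpos_of_nonneg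
        · apply mul_nonpos_of_nonpos_of_nonneg (by linarith) (by positivity)
        · positivity
      linarith
    have main : ∀ d, ∀ j, t ≤ j → j ≤ n → j = t + d → lin n t m ≤ lin n j m := by
      intro d
      induction d with
      | zero => intro j _ _ hj; simp [show j = t by omega]
      | succ d ih =>
          intro j hjt hjn hj
          have h1' := ih (j-1) (by omega) (by omega) (by omega)
          have h2' := step (j-1) (by omega) (by omega)
          have : j - 1 + 1 = j := by omega
          rw [this] at h2'
          linarith
    exact main (k - t) k (by omega) hk (by omega)
/-- The key recursion step inequality. -/
lemma key (n t u v : ℕ) (ht : t ≤ n+1) (hvu : v ≤ u) (hu2 : u ≤ 2^n)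
    (X Z : ℝ)
    (hX : lin n (segOf n u) (u:ℝ) ≤ X)
    (hZ : 1 ≤ v → lin n (segOf n v) (v:ℝ) ≤ Z)
    (hb1 : bal (n+1) t ≤ u + v) (hb2 : u + v ≤ bal (n+1) (t+1)) :
    lin (n+1) t ((u:ℝ)+(v:ℝ)) ≤ X + max ((u:ℝ)-(v:ℝ)) Z := by
  have hfin : ∀ k', k' ≤ n+1 → lin (n+1) k' ((u:ℝ)+(v:ℝ)) ≤ X + max ((u:ℝ)-(v:ℝ)) Z →
      lin (n+1) t ((u:ℝ)+(v:ℝ)) ≤ X + max ((u:ℝ)-(v:ℝ)) Z := by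
    intro k' hk' hle
    refine le_trans (lin_le_of_seg (n+1) t k' ht hk' _ ?_ ?_) hle
    · push_cast; exact_mod_cast hb1
    · push_cast; exact_mod_cast hb2
  set k := segOf n u with hkdef
  have hkn : k ≤ n := segOf_le n u
  have hk1 : (bal n k : ℝ) ≤ (u:ℝ) := by exact_mod_cast bal_segOf_le n u
  have hk2 : (u:ℝ) ≤ (bal n (k+1) : ℝ) := by exact_mod_cast le_bal_segOf_succ n u hu2
  clear_value k
  have hmaxA : (u:ℝ)-(v:ℝ) ≤ max ((u:ℝ)-(v:ℝ)) Z := le_max_left _ _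
  have hmaxB : Z ≤ max ((u:ℝ)-(v:ℝ)) Z := le_max_right _ _
  rcases Nat.eq_zero_or_pos v with hv0 | hv1
  · -- v = 0 : use the A-branch
    subst hv0
    rcases Nat.eq_zero_or_pos k with hk0 | hkpos
    · apply hfin 0 (by omega)
      have hid := linA0 n (u:ℝ) 0
      rw [hk0] at hX
      push_cast at hid hmaxA hmaxB ⊢
      linarith [hid, hX, hmaxA]
    · obtain ⟨k', rfl⟩ : ∃ k', k = k'+1 := ⟨k-1, by omega⟩
      apply hfin (k'+1) (by omega)
      have hid := linA n k' (by omega) (u:ℝ) 0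
      have hr1 : (0:ℝ) ≤ ((u:ℝ) - (bal n (k'+1) : ℝ))*((k':ℝ)+1)/((k':ℝ)+2) := by
        apply div_nonneg (mul_nonneg (by linarith) (by positivity)) (by positivity)
      have hr2 : (0:ℝ) ≤ ((bal n k' : ℝ) - 0)*((n:ℝ)-(k':ℝ))/((k':ℝ)+2) := by
        have hc : ((k':ℝ)+1) ≤ (n:ℝ) := by exact_mod_cast (show k'+1 ≤ n by omega)
        have hb0 : (0:ℝ) ≤ (bal n k' : ℝ) := Nat.cast_nonneg _
        apply div_nonneg (mul_nonneg (by linarith) (by linarith)) (by positivity)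
      push_cast at hid hmaxA hmaxB hX ⊢
      linarith [hid, hX, hmaxA]
  · -- v ≥ 1
    set j := segOf n v with hjdef
    have hjk : j ≤ k := by rw [hjdef, hkdef]; exact segOf_mono n hvu
    have hjn : j ≤ n := segOf_le n v
    have hj1 : (bal n j : ℝ) ≤ (v:ℝ) := by exact_mod_cast bal_segOf_le n v
    have hj2 : (v:ℝ) ≤ (bal n (j+1) : ℝ) := by
      exact_mod_cast le_bal_segOf_succ n v (le_trans hvu hu2)
    clear_value j
    have hZ' : lin n j (v:ℝ) ≤ Z := hZ hv1
    rcases eq_or_lt_of_le hjk with hjeq | hjlt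
    · -- same segment
      rw [hjeq] at hZ'
      rcases le_total (u + v) (bal (n+1) (k+1)) with hc1 | hc2
      · apply hfin k (by omega)
        have hid := linI n k hkn (u:ℝ) (v:ℝ)
        have hnn : (0:ℝ) ≤ ((bal (n+1) (k+1) : ℝ) - ((u:ℝ)+(v:ℝ))) / ((k:ℝ)+1) := by
          apply div_nonneg _ (by positivity)
          have : ((u+v:ℕ):ℝ) ≤ ((bal (n+1) (k+1):ℕ):ℝ) := by exact_mod_cast hc1
          push_cast at this; linarith
        linarith [hid, hX, hZ', hmaxB]
      · apply hfin (k+1) (by omega)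
        have hid := linIb n k hkn (u:ℝ) (v:ℝ)
        have hnn : (0:ℝ) ≤ (((u:ℝ)+(v:ℝ)) - (bal (n+1) (k+1) : ℝ)) * ((n:ℝ)-(k:ℝ)) /
            (((k:ℝ)+1)*((k:ℝ)+2)) := by
          apply div_nonneg _ (by positivity)
          apply mul_nonneg
          · have : ((bal (n+1) (k+1):ℕ):ℝ) ≤ ((u+v:ℕ):ℝ) := by exact_mod_cast hc2
            push_cast at this; linarith
          · have : (k:ℝ) ≤ (n:ℝ) := by exact_mod_cast hkn
            linarith
        linarith [hid, hX, hZ', hmaxB]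
    · -- j < k
      obtain ⟨k', rfl⟩ : ∃ k', k = k'+1 := ⟨k-1, by omega⟩
      apply hfin (k'+1) (by omega)
      rcases eq_or_lt_of_le (show j ≤ k' by omega) with hjk' | hjk''
      · -- adjacent segments
        rw [hjk'] at hZ' hj1 hj2
        set L := lin n k' (v:ℝ) with hLdef
        have hid := linB n k' (by omega) (u:ℝ) (v:ℝ)
        rcases le_total L ((u:ℝ)-(v:ℝ)) with hbr | hbr
        · -- A branch
          have hw : (0:ℝ) ≤ ((u:ℝ)-(v:ℝ)) - L := by linarith
          have hdiv : (((u:ℝ)-(v:ℝ)) - L)/((k':ℝ)+2) ≤ ((u:ℝ)-(v:ℝ)) - L :=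
            div_le_self hw (by linarith)
          have heq : ((v:ℝ) + L - (u:ℝ))/((k':ℝ)+2) = -((((u:ℝ)-(v:ℝ)) - L)/((k':ℝ)+2)) := by
            rw [← neg_div]; ring_nf
          rw [heq] at hid
          linarith [hid, hX, hmaxA, hdiv]
        · -- B branch
          have hnn : (0:ℝ) ≤ ((v:ℝ) + L - (u:ℝ))/((k':ℝ)+2) := by
            apply div_nonneg (by linarith) (by positivity)
          linarith [hid, hX, hZ', hmaxB]
      · -- far segments : A branch only
        have hid := linA n k' (by omega) (u:ℝ) (v:ℝ)
        have hr1 : (0:ℝ) ≤ ((u:ℝ) - (bal n (k'+1) : ℝ))*((k':ℝ)+1)/((k':ℝ)+2) := by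
          apply div_nonneg (mul_nonneg (by linarith) (by positivity)) (by positivity)
        have hr2 : (0:ℝ) ≤ ((bal n k' : ℝ) - (v:ℝ))*((n:ℝ)-(k':ℝ))/((k':ℝ)+2) := by
          have hvk : (v:ℝ) ≤ (bal n k' : ℝ) := by
            refine le_trans hj2 ?_
            exact_mod_cast bal_mono n (show j+1 ≤ k' by omega)
          have hc : ((k':ℝ)+1) ≤ (n:ℝ) := by exact_mod_cast (show k'+1 ≤ n by omega)
          apply div_nonneg (mul_nonneg (by linarith) (by linarith)) (by positivity)
        linarith [hid, hX, hmaxA, hr1, hr2]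

/-! ### The boundary in the cube of subsets of `U` -/

variable {α : Type*} [DecidableEq α]

/-- sets outside `A` at Hamming distance one from `A`, within the cube on `U`. -/
def bdF (U : Finset α) (A : Finset (Finset α)) : Finset (Finset α) :=
  U.powerset.filter (fun T => T ∉ A ∧ ∃ S ∈ A, (symmDiff S T).card = 1)

lemma mem_bdF {U : Finset α} {A : Finset (Finset α)} {T : Finset α} :
    T ∈ bdF U A ↔ T ⊆ U ∧ T ∉ A ∧ ∃ S ∈ A, (symmDiff S T).card = 1 := by
  simp [bdF, Finset.mem_filter, Finset.mem_powerset, and_assoc]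

lemma symmDiff_insert_self {a : α} {S : Finset α} (ha : a ∉ S) :
    symmDiff S (insert a S) = {a} := by
  ext x
  simp only [Finset.mem_symmDiff, Finset.mem_insert, Finset.mem_singleton]
  constructor
  · rintro (⟨h1, h2⟩ | ⟨h1, h2⟩)
    · exact absurd (Or.inr h1) h2
    · rcases h1 with h | h
      · exact h
      · exact absurd h h2
  · rintro rfl
    exact Or.inr ⟨Or.inl rfl, ha⟩

lemma symmDiff_insert_insert {a : α} {S T : Finset α} (hS : a ∉ S) (hT : a ∉ T) :
    symmDiff (insert a S) (insert a T) = symmDiff S T := by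
  ext x
  simp only [Finset.mem_symmDiff, Finset.mem_insert]
  constructor
  · rintro (⟨h1 | h1, h2⟩ | ⟨h1 | h1, h2⟩)
    · subst h1; exact absurd (Or.inl rfl) h2
    · exact Or.inl ⟨h1, fun h => h2 (Or.inr h)⟩
    · subst h1; exact absurd (Or.inl rfl) h2
    · exact Or.inr ⟨h1, fun h => h2 (Or.inr h)⟩
  · rintro (⟨h1, h2⟩ | ⟨h1, h2⟩)
    · exact Or.inl ⟨Or.inr h1, fun h => by
        rcases h with h | h
        · subst h; exact hS h1
        · exact h2 h⟩
    · exact Or.inr ⟨Or.inr h1, fun h => by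
        rcases h with h | h
        · subst h; exact hT h1
        · exact h2 h⟩

section Sections

variable (a : α) (A : Finset (Finset α))

/-- sets of `A` not containing `a` -/
def sec0 : Finset (Finset α) := A.filter (fun S => a ∉ S)

/-- links of sets of `A` containing `a` -/
def sec1 : Finset (Finset α) := (A.filter (fun S => a ∈ S)).image (fun S => S.erase a)

variable {a A}

lemma not_mem_of_mem_sec0 {S : Finset α} (h : S ∈ sec0 a A) : a ∉ S :=
  (Finset.mem_filter.1 h).2

lemma mem_sec0 {S : Finset α} : S ∈ sec0 a A ↔ S ∈ A ∧ a ∉ S := Finset.mem_filter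

lemma mem_sec1 {S : Finset α} : S ∈ sec1 a A ↔ a ∉ S ∧ insert a S ∈ A := by
  constructor
  · intro h
    obtain ⟨S', hS', rfl⟩ := Finset.mem_image.1 h
    have h1 := (Finset.mem_filter.1 hS').1
    have h2 := (Finset.mem_filter.1 hS').2
    refine ⟨Finset.notMem_erase a S', ?_⟩
    rwa [Finset.insert_erase h2]
  · rintro ⟨h1, h2⟩
    refine Finset.mem_image.2 ⟨insert a S, Finset.mem_filter.2 ⟨h2, Finset.mem_insert_self a S⟩, ?_⟩
    rw [Finset.erase_insert h1]

lemma card_sec (a : α) (A : Finset (Finset α)) :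
    (sec0 a A).card + (sec1 a A).card = A.card := by
  have h1 : (sec1 a A).card = (A.filter (fun S => a ∈ S)).card := by
    apply Finset.card_image_of_injOn
    intro S hS T hT hST
    have haS : a ∈ S := (Finset.mem_filter.1 hS).2
    have haT : a ∈ T := (Finset.mem_filter.1 hT).2
    have := congrArg (insert a) hST
    rwa [Finset.insert_erase haS, Finset.insert_erase haT] at this
  rw [h1, sec0]
  have := Finset.card_filter_add_card_filter_not (s := A) (p := fun S => a ∉ S)
  simp only [not_not] at this
  exact this

end Sections

lemma bdF_section (U : Finset α) (A : Finset (Finset α)) (hA : A ⊆ U.powerset)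
    (a : α) (ha : a ∈ U) :
    (max (bdF (U.erase a) (sec0 a A)).card ((sec1 a A \ sec0 a A)).card)
      + (max (bdF (U.erase a) (sec1 a A)).card ((sec0 a A \ sec1 a A)).card)
      ≤ (bdF U A).card := by
  classical
  set B := bdF U A with hB
  set P0 := B.filter (fun T => a ∉ T) with hP0
  set P1 := B.filter (fun T => a ∈ T) with hP1
  have hsplit : P0.card + P1.card = B.card := by
    rw [hP0, hP1]
    have := Finset.card_filter_add_card_filter_not (s := B) (p := fun T => a ∉ T)
    simp only [not_not] at this
    exact this
  have hSU : ∀ S ∈ A, S ⊆ U := fun S hS => Finset.mem_powerset.1 (hA hS)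
  -- sub1
  have sub1 : bdF (U.erase a) (sec0 a A) ⊆ P0 := by
    intro T hT
    rw [mem_bdF] at hT
    obtain ⟨hTU, hTA, S, hS, hcard⟩ := hT
    have haT : a ∉ T := fun h => (Finset.mem_erase.1 (hTU h)).1 rfl
    refine Finset.mem_filter.2 ⟨mem_bdF.2 ⟨hTU.trans (Finset.erase_subset a U), ?_,
      S, (mem_sec0.1 hS).1, hcard⟩, haT⟩
    intro hTA'
    exact hTA (mem_sec0.2 ⟨hTA', haT⟩)
  -- sub2
  have sub2 : (sec1 a A \ sec0 a A) ⊆ P0 := by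
    intro T hT
    obtain ⟨hT1, hT0⟩ := Finset.mem_sdiff.1 hT
    obtain ⟨haT, hins⟩ := mem_sec1.1 hT1
    have hTA : T ∉ A := fun h => hT0 (mem_sec0.2 ⟨h, haT⟩)
    refine Finset.mem_filter.2 ⟨mem_bdF.2 ⟨?_, hTA, insert a T, hins, ?_⟩, haT⟩
    · exact (Finset.subset_insert a T).trans (hSU _ hins)
    · rw [symmDiff_comm, symmDiff_insert_self haT, Finset.card_singleton]
  -- sub3
  have inj : Set.InjOn (insert a) {T : Finset α | a ∉ T} := by
    intro S hS T hT h
    have := congrArg (fun X => Finset.erase X a) h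
    simpa [Finset.erase_insert hS, Finset.erase_insert hT] using this
  have sub3 : (bdF (U.erase a) (sec1 a A)).image (insert a) ⊆ P1 := by
    intro T hT
    obtain ⟨T', hT', rfl⟩ := Finset.mem_image.1 hT
    rw [mem_bdF] at hT'
    obtain ⟨hTU, hTA, S', hS', hcard⟩ := hT'
    have haT' : a ∉ T' := fun h => (Finset.mem_erase.1 (hTU h)).1 rfl
    obtain ⟨haS', hinsS⟩ := mem_sec1.1 hS'
    refine Finset.mem_filter.2 ⟨mem_bdF.2 ⟨?_, ?_, insert a S', hinsS, ?_⟩,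
      Finset.mem_insert_self a T'⟩
    · exact Finset.insert_subset ha (hTU.trans (Finset.erase_subset a U))
    · intro h
      exact hTA (mem_sec1.2 ⟨haT', h⟩)
    · rw [symmDiff_insert_insert haS' haT']
      exact hcard
  -- sub4
  have sub4 : ((sec0 a A \ sec1 a A)).image (insert a) ⊆ P1 := by
    intro T hT
    obtain ⟨T', hT', rfl⟩ := Finset.mem_image.1 hT
    obtain ⟨hT0, hT1⟩ := Finset.mem_sdiff.1 hT'
    obtain ⟨hT'A, haT'⟩ := mem_sec0.1 hT0
    refine Finset.mem_filter.2 ⟨mem_bdF.2 ⟨?_, ?_, T', hT'A, ?_⟩,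
      Finset.mem_insert_self a T'⟩
    · exact Finset.insert_subset ha (hSU _ hT'A)
    · intro h
      exact hT1 (mem_sec1.2 ⟨haT', h⟩)
    · rw [symmDiff_insert_self haT', Finset.card_singleton]
  -- conclude
  have c1 : (bdF (U.erase a) (sec0 a A)).card ≤ P0.card := Finset.card_le_card sub1
  have c2 : (sec1 a A \ sec0 a A).card ≤ P0.card := Finset.card_le_card sub2
  have c3 : (bdF (U.erase a) (sec1 a A)).card ≤ P1.card := by
    rw [← Finset.card_image_of_injOn (fun S hS _ hT h => inj
      (fun hc => (Finset.mem_erase.1 ((mem_bdF.1 hS).1 hc)).1 rfl)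
      (fun hc => (Finset.mem_erase.1 ((mem_bdF.1 hT).1 hc)).1 rfl) h)]
    exact Finset.card_le_card sub3
  have c4 : (sec0 a A \ sec1 a A).card ≤ P1.card := by
    rw [← Finset.card_image_of_injOn (f := insert a) ?inj]
    · exact Finset.card_le_card sub4
    case inj =>
      intro S hS T hT h
      have haS : a ∉ S := (mem_sec0.1 (Finset.mem_sdiff.1 hS).1).2
      have haT : a ∉ T := (mem_sec0.1 (Finset.mem_sdiff.1 hT).1).2
      exact inj haS haT h
  have m1 : max (bdF (U.erase a) (sec0 a A)).card ((sec1 a A \ sec0 a A)).card ≤ P0.card :=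
    max_le c1 c2
  have m2 : max (bdF (U.erase a) (sec1 a A)).card ((sec0 a A \ sec1 a A)).card ≤ P1.card :=
    max_le c3 c4
  omega

/-- Linearized Harper inequality for the cube on `U`, by induction on `U`. -/
theorem harper (n : ℕ) : ∀ (U : Finset α), U.card = n → ∀ (A : Finset (Finset α)),
    A ⊆ U.powerset → 1 ≤ A.card → ∀ t, t ≤ n → bal n t ≤ A.card → A.card ≤ bal n (t+1) →
    lin n t (A.card : ℝ) ≤ ((bdF U A).card : ℝ) := by
  induction n with
  | zero =>
    intro U hU A hA hA1 t ht hb1 hb2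
    have ht0 : t = 0 := by omega
    subst ht0
    have hU0 : U = ∅ := Finset.card_eq_zero.1 hU
    subst hU0
    have hle : A.card ≤ 1 := by
      have := Finset.card_le_card hA
      simpa using this
    have hcard : A.card = 1 := le_antisymm hle hA1
    rw [hcard]
    have : lin 0 0 ((1:ℕ):ℝ) = 0 := by
      simp [lin, bal]
    rw [this]
    positivity
  | succ n ih =>
    intro U hU A hA hA1 t ht hb1 hb2
    obtain ⟨a, ha⟩ : U.Nonempty := Finset.card_pos.1 (by omega)
    have hU' : (U.erase a).card = n := by
      rw [Finset.card_erase_of_mem ha, hU]; omega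
    have hA0P : sec0 a A ⊆ (U.erase a).powerset := by
      intro S hS
      rw [Finset.mem_powerset]
      exact Finset.subset_erase.2 ⟨Finset.mem_powerset.1 (hA (mem_sec0.1 hS).1),
        (mem_sec0.1 hS).2⟩
    have hA1P : sec1 a A ⊆ (U.erase a).powerset := by
      intro S hS
      rw [Finset.mem_powerset]
      obtain ⟨haS, hins⟩ := mem_sec1.1 hS
      refine Finset.subset_erase.2 ⟨?_, haS⟩
      exact (Finset.subset_insert a S).trans (Finset.mem_powerset.1 (hA hins))
    have hcards : (sec0 a A).card + (sec1 a A).card = A.card := card_sec a A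
    have hsec := bdF_section U A hA a ha
    have hpow0 : (sec0 a A).card ≤ 2^n := by
      have := Finset.card_le_card hA0P
      rwa [Finset.card_powerset, hU'] at this
    have hpow1 : (sec1 a A).card ≤ 2^n := by
      have := Finset.card_le_card hA1P
      rwa [Finset.card_powerset, hU'] at this
    set b0 : ℕ := (bdF (U.erase a) (sec0 a A)).card with hb0
    set b1 : ℕ := (bdF (U.erase a) (sec1 a A)).card with hb1'
    set s10 : ℕ := (sec1 a A \ sec0 a A).card with hs10
    set s01 : ℕ := (sec0 a A \ sec1 a A).card with hs01
    have hd01 : (sec0 a A).card - (sec1 a A).card ≤ s01 := Finset.le_card_sdiff _ _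
    have hd10 : (sec1 a A).card - (sec0 a A).card ≤ s10 := Finset.le_card_sdiff _ _
    have hIH0 : 1 ≤ (sec0 a A).card →
        lin n (segOf n (sec0 a A).card) ((sec0 a A).card : ℝ) ≤ (b0 : ℝ) :=
      fun h1 => ih (U.erase a) hU' (sec0 a A) hA0P h1 (segOf n _) (segOf_le n _)
        (bal_segOf_le n _) (le_bal_segOf_succ n _ hpow0)
    have hIH1 : 1 ≤ (sec1 a A).card →
        lin n (segOf n (sec1 a A).card) ((sec1 a A).card : ℝ) ≤ (b1 : ℝ) :=
      fun h1 => ih (U.erase a) hU' (sec1 a A) hA1P h1 (segOf n _) (segOf_le n _)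
        (bal_segOf_le n _) (le_bal_segOf_succ n _ hpow1)
    rcases le_total (sec1 a A).card (sec0 a A).card with hbig | hbig
    · -- A0 is the big side
      have hu1 : 1 ≤ (sec0 a A).card := by omega
      have hkey := key n t (sec0 a A).card (sec1 a A).card ht hbig hpow0
        (b0 : ℝ) (b1 : ℝ) (hIH0 hu1) hIH1 (by omega) (by omega)
      have hcast : ((A.card : ℕ):ℝ) = ((sec0 a A).card : ℝ) + ((sec1 a A).card : ℝ) := by
        rw [← hcards]; push_cast; ring
      rw [hcast]
      refine le_trans hkey ?_
      have e1 : (b0:ℝ) ≤ ((max b0 s10 : ℕ) : ℝ) := by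
        push_cast [Nat.cast_max]; exact le_max_left _ _
      have e2 : max (((sec0 a A).card : ℝ) - ((sec1 a A).card : ℝ)) (b1:ℝ)
          ≤ ((max b1 s01 : ℕ) : ℝ) := by
        push_cast [Nat.cast_max]
        apply max_le
        · refine le_trans ?_ (le_max_right _ _)
          have : ((sec0 a A).card - (sec1 a A).card : ℕ) ≤ s01 := hd01
          have h2 : (((sec0 a A).card - (sec1 a A).card : ℕ):ℝ) ≤ (s01:ℝ) := by
            exact_mod_cast this
          have h3 : ((sec0 a A).card : ℝ) - ((sec1 a A).card : ℝ) ≤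
              (((sec0 a A).card - (sec1 a A).card : ℕ):ℝ) := by
            push_cast
            rcases le_total ((sec1 a A).card) ((sec0 a A).card) with h | h
            · rw [Nat.cast_sub h]
            · have : ((sec1 a A).card:ℝ) ≥ ((sec0 a A).card:ℝ) := by exact_mod_cast h
              have h0 : (0:ℝ) ≤ (((sec0 a A).card - (sec1 a A).card : ℕ):ℝ) :=
                Nat.cast_nonneg _
              linarith
          linarith
        · exact le_max_left _ _
      have efin : ((max b0 s10 : ℕ) : ℝ) + ((max b1 s01 : ℕ) : ℝ) ≤ ((bdF U A).card : ℝ) := by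
        exact_mod_cast hsec
      linarith
    · -- A1 is the big side
      have hu1 : 1 ≤ (sec1 a A).card := by omega
      have hkey := key n t (sec1 a A).card (sec0 a A).card ht hbig hpow1
        (b1 : ℝ) (b0 : ℝ) (hIH1 hu1) hIH0 (by omega) (by omega)
      have hcast : ((A.card : ℕ):ℝ) = ((sec1 a A).card : ℝ) + ((sec0 a A).card : ℝ) := by
        rw [← hcards]; push_cast; ring
      rw [hcast]
      refine le_trans hkey ?_
      have e1 : (b1:ℝ) ≤ ((max b1 s01 : ℕ) : ℝ) := by
        push_cast [Nat.cast_max]; exact le_max_left _ _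
      have e2 : max (((sec1 a A).card : ℝ) - ((sec0 a A).card : ℝ)) (b0:ℝ)
          ≤ ((max b0 s10 : ℕ) : ℝ) := by
        push_cast [Nat.cast_max]
        apply max_le
        · refine le_trans ?_ (le_max_right _ _)
          have : ((sec1 a A).card - (sec0 a A).card : ℕ) ≤ s10 := hd10
          have h2 : (((sec1 a A).card - (sec0 a A).card : ℕ):ℝ) ≤ (s10:ℝ) := by
            exact_mod_cast this
          have h3 : ((sec1 a A).card : ℝ) - ((sec0 a A).card : ℝ) ≤
              (((sec1 a A).card - (sec0 a A).card : ℕ):ℝ) := by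
            rw [Nat.cast_sub hbig]
          linarith
        · exact le_max_left _ _
      have efin : ((max b0 s10 : ℕ) : ℝ) + ((max b1 s01 : ℕ) : ℝ) ≤ ((bdF U A).card : ℝ) := by
        exact_mod_cast hsec
      linarith

/-! ### Bridge between the hypercube graph and the cube of finsets -/

def toSet (n : ℕ) (v : Fin n → Bool) : Finset (Fin n) :=
  Finset.univ.filter (fun i => v i = true)

def ofSet (n : ℕ) (S : Finset (Fin n)) : Fin n → Bool := fun i => decide (i ∈ S)

lemma toSet_ofSet (n : ℕ) (S : Finset (Fin n)) : toSet n (ofSet n S) = S := by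
  ext i
  simp [toSet, ofSet]

lemma ofSet_inj (n : ℕ) : Function.Injective (ofSet n) := by
  intro S T h
  have := congrArg (toSet n) h
  rwa [toSet_ofSet, toSet_ofSet] at this

lemma toSet_inj (n : ℕ) : Function.Injective (toSet n) := by
  intro v w h
  funext i
  have hi : (v i = true) ↔ (w i = true) := by
    constructor
    · intro hv
      have : i ∈ toSet n v := by simp [toSet, hv]
      rw [h] at this
      simpa [toSet] using this
    · intro hw
      have : i ∈ toSet n w := by simp [toSet, hw]
      rw [← h] at this
      simpa [toSet] using this
  cases hv : v i <;> cases hw : w i <;> simp_all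

lemma hamming_symmDiff (n : ℕ) (v w : Fin n → Bool) :
    hammingDist v w = (symmDiff (toSet n v) (toSet n w)).card := by
  unfold hammingDist
  congr 1
  ext i
  simp only [Finset.mem_filter, Finset.mem_univ, true_and, Finset.mem_symmDiff, toSet]
  cases hv : v i <;> cases hw : w i <;> simp

lemma adj_iff (n : ℕ) (v w : Fin n → Bool) :
    (Q n).Adj v w ↔ (symmDiff (toSet n v) (toSet n w)).card = 1 := by
  rw [Q, SimpleGraph.fromRel_adj, ← hamming_symmDiff]
  constructor
  · rintro ⟨-, h | h⟩
    · exact h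
    · rwa [hammingDist_comm]
  · intro h
    refine ⟨?_, Or.inl h⟩
    rintro rfl
    rw [hammingDist_self] at h
    omega

lemma mem_nbhdSetQ {n : ℕ} {A : Set (Fin n → Bool)} {w : Fin n → Bool} :
    w ∈ nbhdSet n A ↔ ∃ v ∈ A, (Q n).Adj v w := by
  simp [nbhdSet, nbhd, SimpleGraph.mem_neighborSet]

lemma bdF_card_le (n : ℕ) (A : Set (Fin n → Bool)) (𝒜 : Finset (Finset (Fin n)))
    (h𝒜 : ∀ S ∈ 𝒜, ∃ v ∈ A, toSet n v = S) :
    ((bdF (Finset.univ : Finset (Fin n)) 𝒜).card : ℝ) ≤ ((nbhdSet n A).ncard : ℝ) := by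
  classical
  have hfin : (nbhdSet n A).Finite := Set.toFinite _
  rw [Set.ncard_eq_toFinset_card _ hfin]
  have hle : (bdF (Finset.univ : Finset (Fin n)) 𝒜).card ≤ hfin.toFinset.card := by
    apply Finset.card_le_card_of_injOn (ofSet n)
    · intro T hT
      rw [Finset.mem_coe, mem_bdF] at hT
      obtain ⟨-, -, S, hS, hd⟩ := hT
      obtain ⟨v, hvA, hvS⟩ := h𝒜 S hS
      rw [Finset.mem_coe, Set.Finite.mem_toFinset, mem_nbhdSetQ]
      refine ⟨v, hvA, ?_⟩
      rw [adj_iff, toSet_ofSet, hvS]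
      exact hd
    · intro x _ y _ h
      exact ofSet_inj n h
  exact_mod_cast hle

lemma nbhd_lower (n m t : ℕ) (A : Set (Fin n → Bool)) (hm : m ≤ A.ncard) (hm1 : 1 ≤ m)
    (ht : t ≤ n) (h1 : bal n t ≤ m) (h2 : m ≤ bal n (t+1)) :
    lin n t ((m:ℕ):ℝ) ≤ ((nbhdSet n A).ncard : ℝ) := by
  classical
  have hAfin : A.Finite := Set.toFinite _
  set 𝒜 : Finset (Finset (Fin n)) := hAfin.toFinset.image (toSet n) with h𝒜def
  have hcard𝒜 : 𝒜.card = A.ncard := by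
    rw [h𝒜def, Finset.card_image_of_injective _ (toSet_inj n),
      Set.ncard_eq_toFinset_card _ hAfin]
  obtain ⟨𝒜', hsub, hcard'⟩ := Finset.exists_subset_card_eq
    (show m ≤ 𝒜.card by rw [hcard𝒜]; exact hm)
  have hmem : ∀ S ∈ 𝒜', ∃ v ∈ A, toSet n v = S := by
    intro S hS
    obtain ⟨v, hv, rfl⟩ := Finset.mem_image.1 (hsub hS)
    exact ⟨v, (Set.Finite.mem_toFinset hAfin).1 hv, rfl⟩
  have huniv : (Finset.univ : Finset (Fin n)).card = n := by simp
  have hh := harper n Finset.univ huniv 𝒜'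
    (fun S _ => Finset.mem_powerset.2 (Finset.subset_univ S))
    (by omega) t ht (by omega) (by omega)
  rw [hcard'] at hh
  exact le_trans hh (bdF_card_le n A 𝒜' hmem)

open Filter Asymptotics in
theorem final_dev (r : ℕ) (hr : 2 ≤ r)
    (s : ℕ → ℕ) (hs : Tendsto s atTop atTop)
    (hso : (fun n => (s n : ℝ)) =o[atTop] fun n => (n : ℝ)) :
    ∃ C : ℝ, 0 < C ∧ ∀ᶠ n : ℕ in atTop, ∀ A : Set (Fin n → Bool),
      ((nbhdSet n A).ncard : ℝ) ≤ (n.choose r : ℝ) + (n : ℝ) ^ (r - 1) * s n →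
      (A.ncard : ℝ) ≤ (n.choose (r - 1) : ℝ) + (6*(r:ℝ)+6) * (n : ℝ) ^ (r - 2) * s n := by
  classical
  obtain ⟨q, rfl⟩ : ∃ q, r = q + 2 := ⟨r - 2, by omega⟩
  set r := q + 2 with hrdef
  set C : ℝ := 6*(r:ℝ)+6 with hC
  have hCpos : (0:ℝ) < C := by positivity
  refine ⟨C, hCpos, ?_⟩
  set ε : ℝ := 1/(2^r * r.factorial * C) with hε
  have hfacpos : (0:ℝ) < (r.factorial : ℝ) := by exact_mod_cast r.factorial_pos
  have hεpos : 0 < ε := by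
    rw [hε]; positivity
  have h1 : ∀ᶠ n : ℕ in atTop, (s n : ℝ) ≤ ε * n := by
    filter_upwards [hso.bound hεpos] with n hn
    have : |(s n : ℝ)| ≤ ε * |(n:ℝ)| := by simpa [Real.norm_eq_abs] using hn
    rwa [abs_of_nonneg (Nat.cast_nonneg _), abs_of_nonneg (Nat.cast_nonneg _)] at this
  have h2 : ∀ᶠ n : ℕ in atTop, 1 ≤ s n := hs.eventually_ge_atTop 1
  have h3 : ∀ᶠ n : ℕ in atTop, 4*r+4 ≤ n := eventually_ge_atTop _
  filter_upwards [h1, h2, h3] with n hεn hs1 hn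
  intro A hΓ
  by_contra hcon
  push_neg at hcon
  have er1 : r - 1 = q + 1 := by omega
  have er2 : r - 2 = q := by omega
  rw [er1] at hΓ
  rw [er1, er2] at hcon
  -- basic real facts
  have hn1 : (1:ℝ) ≤ (n:ℝ) := by exact_mod_cast (by omega : 1 ≤ n)
  have hnr : (2*(r:ℝ)+2) ≤ (n:ℝ) := by exact_mod_cast (by omega : 2*r+2 ≤ n)
  have hs1' : (1:ℝ) ≤ (s n : ℝ) := by exact_mod_cast hs1
  set X : ℝ := (n:ℝ)^q * (s n : ℝ) with hX
  have hXpos : (0:ℝ) < X := by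
    rw [hX]; positivity
  have hX1 : (1:ℝ) ≤ X := by
    rw [hX]
    have : (1:ℝ) ≤ (n:ℝ)^q := one_le_pow₀ hn1
    nlinarith
  set E : ℕ := ⌊(C/2) * X⌋₊ with hE
  have hCX0 : (0:ℝ) ≤ (C/2)*X := by positivity
  have hEle : (E:ℝ) ≤ (C/2)*X := Nat.floor_le hCX0
  have hEgt : (C/2)*X - 1 < (E:ℝ) := Nat.sub_one_lt_floor _
  have hEX : (3*(r:ℝ)+2)*X ≤ (E:ℝ) := by
    have : (C/2)*X - 1 ≥ (C/2)*X - X := by linarith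
    have h4 : (C/2)*X - X = (3*(r:ℝ)+2)*X := by rw [hC]; ring
    linarith
  set m : ℕ := bal n r + E with hm
  -- (bal n (q+1) : ℝ) is small
  have hbal_small : (bal n (q+1) : ℝ) ≤ ((q:ℝ)+1) * (n:ℝ)^q := by
    have hN : bal n (q+1) ≤ (q+1) * n^q := by
      have : ∀ i ∈ Finset.range (q+1), n.choose i ≤ n^q := by
        intro i hi
        calc n.choose i ≤ n^i := Nat.choose_le_pow n i
        _ ≤ n^q := Nat.pow_le_pow_right (by omega) (by
            simp only [Finset.mem_range] at hi; omega)
      calc bal n (q+1) ≤ (Finset.range (q+1)).card • n^q := Finset.sum_le_card_nsmul _ _ _ this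
      _ = (q+1) * n^q := by simp [Finset.card_range]
    calc (bal n (q+1) : ℝ) ≤ (((q+1) * n^q : ℕ):ℝ) := by exact_mod_cast hN
    _ = ((q:ℝ)+1) * (n:ℝ)^q := by push_cast; ring
  have hbal_smallX : (bal n (q+1) : ℝ) ≤ ((q:ℝ)+1) * X := by
    refine le_trans hbal_small ?_
    rw [hX]
    have hp : (0:ℝ) ≤ ((q:ℝ)+1) * (n:ℝ)^q := by positivity
    nlinarith [pow_nonneg (le_trans zero_le_one hn1) q]
  -- (a) : m ≤ A.ncard
  have hbalr : (bal n r : ℝ) = (bal n (q+1) : ℝ) + (n.choose (q+1) : ℝ) := by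
    have : bal n r = bal n (q+1) + n.choose (q+1) := bal_succ n (q+1)
    exact_mod_cast this
  have hmlt : ((m:ℕ):ℝ) < (A.ncard : ℝ) := by
    have : ((m:ℕ):ℝ) = (bal n r : ℝ) + E := by rw [hm]; push_cast; ring
    rw [this, hbalr]
    have hq1C : ((q:ℝ)+1) + (C/2) ≤ C := by rw [hC, hrdef]; push_cast; linarith
    have : (bal n (q+1):ℝ) + (E:ℝ) ≤ C * X := by nlinarith
    calc (bal n (q+1) : ℝ) + (n.choose (q+1):ℝ) + E
        ≤ (n.choose (q+1):ℝ) + C * X := by linarith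
    _ < (A.ncard : ℝ) := by
        have hfold : C * X = C * (n:ℝ)^q * (s n : ℝ) := by rw [hX]; ring
        linarith [hcon]
  have hmA : m ≤ A.ncard := by exact_mod_cast le_of_lt hmlt
  -- (b) : 1 ≤ m
  have hm1 : 1 ≤ m := by
    have : 1 ≤ bal n r := by
      have : bal n 1 ≤ bal n r := bal_mono n (by omega)
      have h1' : bal n 1 = 1 := by simp [bal]
      omega
    omega
  -- (c) : r ≤ n
  have hrn : r ≤ n := by omega
  -- (e) : m ≤ bal n (r+1), i.e. E ≤ choose n r
  have hEchoose : E ≤ n.choose r := by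
    have hXε : X ≤ ε * (n:ℝ)^(q+1) := by
      rw [hX, pow_succ]
      have h0 : (0:ℝ) ≤ (n:ℝ)^q := by positivity
      nlinarith [hεn]
    have hcε : (C/2) * ε = 1/(2 * 2^r * r.factorial) := by
      rw [hε, hC]
      field_simp
    have hEup : (E:ℝ) ≤ (n:ℝ)^(q+1)/(2 * 2^r * r.factorial) := by
      have : (E:ℝ) ≤ (C/2) * (ε * (n:ℝ)^(q+1)) := by
        refine le_trans hEle ?_
        have : (0:ℝ) < C/2 := by positivity
        nlinarith
      calc (E:ℝ) ≤ (C/2) * ε * (n:ℝ)^(q+1) := by linarith [this]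
      _ = (n:ℝ)^(q+1)/(2 * 2^r * r.factorial) := by rw [hcε]; field_simp
    have hchoose_low : (n:ℝ)^r/(2^r * r.factorial) ≤ (n.choose r : ℝ) := by
      have hple := Nat.pow_le_choose (α := ℝ) r n
      have hcast : ((n + 1 - r : ℕ):ℝ) = (n:ℝ) + 1 - r := by
        rw [Nat.cast_sub (by omega : r ≤ n+1)]; push_cast; ring
      have hhalf : (n:ℝ)/2 ≤ ((n + 1 - r : ℕ):ℝ) := by
        rw [hcast]
        have : (r:ℝ) ≤ (n:ℝ)/2 + 1 := by
          have : (2*(r:ℝ)) ≤ (n:ℝ) + 2 := by linarith [hnr]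
          linarith
        linarith
      have hpw : ((n:ℝ)/2)^r ≤ ((n + 1 - r : ℕ):ℝ)^r := by
        apply pow_le_pow_left₀ (by positivity) hhalf
      have : ((n:ℝ)/2)^r / r.factorial ≤ (n.choose r : ℝ) := by
        refine le_trans ?_ hple
        exact (div_le_div_iff_of_pos_right hfacpos).2 hpw
      calc (n:ℝ)^r/(2^r * r.factorial) = ((n:ℝ)/2)^r / r.factorial := by
            rw [div_pow]; ring
      _ ≤ (n.choose r : ℝ) := this
    have hfin : (E:ℝ) ≤ (n.choose r:ℝ) := by
      refine le_trans hEup (le_trans ?_ hchoose_low)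
      have hrw : (n:ℝ)^r = (n:ℝ) * (n:ℝ)^(q+1) := by
        rw [hrdef, pow_succ]; ring
      rw [hrw]
      rw [div_le_div_iff₀ (by positivity) (by positivity)]
      have h0 : (0:ℝ) ≤ (n:ℝ)^(q+1) := by positivity
      have h2' : (0:ℝ) < 2^r * (r.factorial:ℝ) := by positivity
      have hmono := mul_le_mul_of_nonneg_right hn1 (mul_nonneg h0 (le_of_lt h2'))
      nlinarith [hmono, mul_nonneg h0 (le_of_lt h2')]
    exact_mod_cast hfin
  have hmbal : m ≤ bal n (r+1) := by
    rw [hm, bal_succ n r]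
    omega
  -- apply the isoperimetric bound
  have hlow := nbhd_lower n m r A hmA hm1 hrn (by omega) hmbal
  have hlin := lin_slope n r hrn ((m:ℕ):ℝ)
  have hmbE : ((m:ℕ):ℝ) - (bal n r : ℝ) = (E:ℝ) := by rw [hm]; push_cast; ring
  rw [hlin] at hlow
  have hEs : (E:ℝ) * (((n:ℝ) - 2*(r:ℝ) - 1)/((r:ℝ)+1)) ≤ (n:ℝ)^(q+1) * (s n : ℝ) := by
    have h5 := le_trans hlow hΓ
    rw [hmbE] at h5
    linarith
  -- contradiction
  have hslope : (n:ℝ) < (3*(r:ℝ)+2) * (((n:ℝ) - 2*r - 1)/((r:ℝ)+1)) := by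
    rw [← mul_div_assoc, lt_div_iff₀ (by positivity : (0:ℝ) < (r:ℝ)+1)]
    have hn3 : (3*(r:ℝ)+3) ≤ (n:ℝ) := by exact_mod_cast (by omega : 3*r+3 ≤ n)
    nlinarith
  have hSpos : (0:ℝ) < ((n:ℝ) - 2*r - 1)/((r:ℝ)+1) := by
    apply div_pos _ (by positivity)
    linarith
  have : (n:ℝ)^(q+1) * (s n:ℝ) < (E:ℝ) * (((n:ℝ) - 2*r - 1)/((r:ℝ)+1)) := by
    calc (n:ℝ)^(q+1) * (s n:ℝ) = X * (n:ℝ) := by rw [hX, pow_succ]; ring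
    _ < X * ((3*(r:ℝ)+2) * (((n:ℝ) - 2*r - 1)/((r:ℝ)+1))) := by
        exact mul_lt_mul_of_pos_left hslope hXpos
    _ = ((3*(r:ℝ)+2)*X) * (((n:ℝ) - 2*r - 1)/((r:ℝ)+1)) := by ring
    _ ≤ (E:ℝ) * (((n:ℝ) - 2*r - 1)/((r:ℝ)+1)) := by
        exact mul_le_mul_of_nonneg_right hEX (le_of_lt hSpos)
  linarith

end SmallShadow


/-- Corollary 3.4 (harper): if `|Γ(A)| ≤ binom(n,r) + n^(r-1) s(n)` then
`|A| ≤ binom(n,r-1) + C n^(r-2) s(n)`. -/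
theorem small_shadow_of_small_nbhd
    (r : ℕ) (hr : 2 ≤ r)
    (s : ℕ → ℕ) (hs : Tendsto s atTop atTop)
    (hso : (fun n => (s n : ℝ)) =o[atTop] fun n => (n : ℝ)) :
    ∃ C : ℝ, 0 < C ∧ ∀ᶠ n : ℕ in atTop, ∀ A : Set (V n),
      ((nbhdSet n A).ncard : ℝ) ≤ (n.choose r : ℝ) + (n : ℝ) ^ (r - 1) * s n →
      (A.ncard : ℝ) ≤ (n.choose (r - 1) : ℝ) + C * (n : ℝ) ^ (r - 2) * s n := by
  obtain ⟨C, hC, h2⟩ := SmallShadow.final_dev r hr s hs hso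
  exact ⟨6*(r:ℝ)+6, by positivity, h2⟩

end
end

section
/- Let t : ℕ → ℕ with t(n) ≥ 5, t(n) → ∞ and t(n) = o(n) as n → ∞, and let s : ℕ → ℝ be a function such that 1 − 2·s(n)/n − 14·√(t(n)/n) ≥ 0. Then for all sufficiently large n the following holds: if A ⊆ V(Q_n) with |A| = n and |Γ(A)| ≤ binom(n,2) + s(n)·n, and there do not exist distinct vertices w₁, w₂ ∈ V(Q_n) such that |A ∩ Γ(w_i)| > t(n) for both i = 1, 2, then there exists a vertex w ∈ V(Q_n) for which |Γ(w) ∩ A| ≥ n·(1 − 2·s(n)/n − 14·√(t(n)/n))^(1/2). -/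
open MeasureTheory Filter Set Asymptotics Topology

noncomputable section

section OneStabAuxSec
open Finset
open scoped symmDiff

namespace OneStabAux

variable {n : ℕ}

/-- set of coordinates where two vertices differ -/
def dF (u v : V n) : Finset (Fin n) := Finset.univ.filter fun i => u i ≠ v i

/-- flip a set of coordinates -/
def flipF (p : Finset (Fin n)) (b : V n) : V n := fun j => if j ∈ p then !b j else b j

lemma hd_eq (u v : V n) : hammingDist u v = (dF u v).card := rfl

lemma mem_dF {u v : V n} {i : Fin n} : i ∈ dF u v ↔ u i ≠ v i := by
  simp [dF]

lemma dF_comm (u v : V n) : dF u v = dF v u := by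
  ext i; simp [mem_dF]; tauto

lemma dF_flipF (p : Finset (Fin n)) (b : V n) : dF b (flipF p b) = p := by
  ext i
  by_cases h : i ∈ p <;> simp [mem_dF, flipF, h] <;> cases (b i) <;> simp

lemma flipF_dF (b c : V n) : flipF (dF b c) b = c := by
  funext j
  by_cases h : j ∈ dF b c
  · rw [mem_dF] at h
    simp only [flipF, if_pos (mem_dF.2 h)]
    cases hb : b j <;> cases hc : c j <;> simp_all
  · simp only [flipF, if_neg h]
    rw [mem_dF, not_not] at h
    exact h

lemma dF_trans (u v w : V n) : dF u w = dF u v ∆ dF v w := by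
  ext i
  simp only [mem_dF, Finset.mem_symmDiff, mem_dF]
  cases hu : u i <;> cases hv : v i <;> cases hw : w i <;> simp

lemma hd_flipF (p : Finset (Fin n)) (b : V n) : hammingDist b (flipF p b) = p.card := by
  rw [hd_eq, dF_flipF]

lemma dF_eq_empty {u v : V n} : dF u v = ∅ ↔ u = v := by
  rw [← Finset.card_eq_zero, ← hd_eq, hammingDist_eq_zero]

lemma adj_iff {u v : V n} : (Q n).Adj u v ↔ hammingDist u v = 1 := by
  constructor
  · rintro ⟨hne, h | h⟩
    · exact h
    · rwa [hammingDist_comm]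
  · intro h
    exact ⟨fun he => by simp [he, hammingDist_self] at h, Or.inl h⟩

lemma mem_nbhd {x v : V n} : x ∈ nbhd n v ↔ hammingDist v x = 1 := by
  simp only [nbhd, SimpleGraph.mem_neighborSet]
  exact adj_iff


/-- Finset of neighbours -/
def nbrF (b : V n) : Finset (V n) := Finset.univ.filter fun x => hammingDist b x = 1

lemma mem_nbrF {b x : V n} : x ∈ nbrF b ↔ hammingDist b x = 1 := by simp [nbrF]

lemma card_nbrF (b : V n) : (nbrF b).card = n := by
  have himg : nbrF b = Finset.univ.image (fun i : Fin n => flipF {i} b) := by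
    ext x
    simp only [mem_nbrF, Finset.mem_image, Finset.mem_univ, true_and]
    constructor
    · intro hx
      rw [hd_eq, Finset.card_eq_one] at hx
      obtain ⟨i, hi⟩ := hx
      exact ⟨i, by rw [← flipF_dF b x, hi]⟩
    · rintro ⟨i, rfl⟩
      rw [hd_flipF]; simp
  rw [himg, Finset.card_image_of_injective _ (fun i j hij => ?_), Finset.card_univ,
    Fintype.card_fin]
  have : ({i} : Finset (Fin n)) = {j} := by
    rw [← dF_flipF {i} b, ← dF_flipF {j} b, hij]
  simpa using this

lemma card_symmDiff' (p q : Finset (Fin n)) :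
    (p ∆ q).card + 2 * (p ∩ q).card = p.card + q.card := by
  rw [symmDiff_eq_sup_sdiff_inf]
  have h1 : (p ⊔ q) \ (p ⊓ q) = (p ∪ q) \ (p ∩ q) := rfl
  rw [h1, Finset.card_sdiff_of_subset (Finset.inter_subset_union), two_mul]
  have := Finset.card_union_add_card_inter p q
  have h2 : (p ∩ q).card ≤ (p ∪ q).card := Finset.card_le_card Finset.inter_subset_union
  omega

/-- common neighbours of distinct vertices: at most 2, and 0 unless at Hamming distance 2 -/
lemma card_common {b c : V n} (hbc : b ≠ c) :
    (nbrF b ∩ nbrF c).card ≤ if hammingDist b c = 2 then 2 else 0 := by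
  have hsub : ∀ x ∈ nbrF b ∩ nbrF c, dF b x ∈ (dF b c).powersetCard 1 := by
    intro x hx
    rw [Finset.mem_inter, mem_nbrF, mem_nbrF] at hx
    rw [Finset.mem_powersetCard]
    refine ⟨?_, by rw [← hd_eq]; exact hx.1⟩
    intro i hi
    by_contra hic
    rw [mem_dF] at hi hic
    push_neg at hic
    have hix : i ∈ dF c x := by rw [mem_dF, ← hic]; exact hi
    -- dF c x is a singleton {i} since card 1 and i ∈ it
    have h1 : dF c x = {i} := by
      have : (dF c x).card = 1 := by rw [← hd_eq]; exact hx.2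
      rw [Finset.card_eq_one] at this
      obtain ⟨j, hj⟩ := this
      rw [hj] at hix ⊢
      simp at hix; rw [hix]
    have h2 : dF b x = {i} := by
      have : (dF b x).card = 1 := by rw [← hd_eq]; exact hx.1
      rw [Finset.card_eq_one] at this
      obtain ⟨j, hj⟩ := this
      have : i ∈ dF b x := by rw [mem_dF, hic]; exact (mem_dF.1 hix)
      rw [hj] at this ⊢
      simp at this; rw [this]
    have : b = c := by
      rw [← flipF_dF x b, ← flipF_dF x c, dF_comm x b, dF_comm x c, h1, h2]
    exact hbc this
  by_cases h2 : hammingDist b c = 2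
  · rw [if_pos h2]
    calc (nbrF b ∩ nbrF c).card ≤ ((dF b c).powersetCard 1).card := by
          apply Finset.card_le_card_of_injOn _ hsub
          intro x hx y hy hxy
          rw [← flipF_dF b x, ← flipF_dF b y, hxy]
        _ = (dF b c).card.choose 1 := Finset.card_powersetCard 1 _
        _ = 2 := by rw [← hd_eq, h2]; rfl
  · rw [if_neg h2]
    rw [Nat.le_zero, Finset.card_eq_zero, Finset.eq_empty_iff_forall_notMem]
    intro x hx
    have hmem := hsub x hx
    rw [Finset.mem_inter, mem_nbrF, mem_nbrF] at hx
    -- hd b c = card (dF b x ∆ dF x c) ∈ {0,2}; ≠0 since b≠c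
    have htr := dF_trans b x c
    have hcard := card_symmDiff' (dF b x) (dF x c)
    have hb1 : (dF b x).card = 1 := by rw [← hd_eq]; exact hx.1
    have hc1 : (dF x c).card = 1 := by rw [← hd_eq, hammingDist_comm]; exact hx.2
    have hbc' : (dF b c).card ≠ 0 := by
      rw [← hd_eq]
      simp only [ne_eq, hammingDist_eq_zero]
      exact hbc
    have : (dF b c).card = 2 - 2 * ((dF b x) ∩ (dF x c)).card := by
      rw [htr]; omega
    have h02 : (dF b c).card = 0 ∨ (dF b c).card = 2 := by omega
    rcases h02 with h | h
    · exact hbc' h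
    · exact h2 (by rw [hd_eq]; exact h)


/-- flipping a coordinate changes distance by exactly one -/
lemma hd_flip_mem {w b : V n} {i : Fin n} (h : i ∈ dF b w) :
    hammingDist w (flipF {i} b) + 1 = hammingDist w b := by
  have : dF w (flipF {i} b) = dF w b ∆ dF b (flipF {i} b) := dF_trans w b (flipF {i} b)
  rw [dF_flipF] at this
  have hi : i ∈ dF w b := by rw [dF_comm]; exact h
  have hset : dF w b ∆ {i} = (dF w b).erase i := by
    ext j
    by_cases hj : j = i <;> simp [Finset.mem_symmDiff, hj, hi]
  rw [hd_eq, hd_eq, this, hset, Finset.card_erase_of_mem hi]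
  have : i ∈ dF w b := hi
  have hpos : 0 < (dF w b).card := Finset.card_pos.2 ⟨i, hi⟩
  omega

lemma hd_flip_not_mem {w b : V n} {i : Fin n} (h : i ∉ dF b w) :
    hammingDist w (flipF {i} b) = hammingDist w b + 1 := by
  have : dF w (flipF {i} b) = dF w b ∆ dF b (flipF {i} b) := dF_trans w b (flipF {i} b)
  rw [dF_flipF] at this
  have hi : i ∉ dF w b := by rw [dF_comm]; exact h
  have hset : dF w b ∆ {i} = insert i (dF w b) := by
    ext j
    by_cases hj : j = i <;> simp [Finset.mem_symmDiff, hj, hi]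
  rw [hd_eq, hd_eq, this, hset, Finset.card_insert_of_notMem hi]

/-- neighbours of b within Hamming-ball of radius 2 around w: at most 3 when b ∉ Γ(w) ∪ {w} -/
lemma card_nbr_ball {w b : V n} (h0 : b ≠ w) (h1 : hammingDist w b ≠ 1) :
    ((nbrF b) ∩ (Finset.univ.filter fun x => hammingDist w x ≤ 2)).card ≤ 3 := by
  set T := (nbrF b) ∩ (Finset.univ.filter fun x => hammingDist w x ≤ 2) with hT
  rcases Finset.eq_empty_or_nonempty T with he | hne
  · rw [he]; simp
  -- every x in T is flipF {i} b with i ∈ dF b w, and then hd w b ≤ 3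
  have key : ∀ x ∈ T, dF b x ∈ (dF b w).powersetCard 1 := by
    intro x hx
    rw [hT, Finset.mem_inter, mem_nbrF, Finset.mem_filter] at hx
    rw [Finset.mem_powersetCard]
    have hcard1 : (dF b x).card = 1 := by rw [← hd_eq]; exact hx.1
    refine ⟨?_, hcard1⟩
    rw [Finset.card_eq_one] at hcard1
    obtain ⟨i, hi⟩ := hcard1
    rw [hi]
    intro j hj
    simp only [Finset.mem_singleton] at hj
    subst hj
    by_contra hic
    have hx' : x = flipF {j} b := by rw [← flipF_dF b x, hi]
    have := hd_flip_not_mem (w := w) hic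
    rw [← hx'] at this
    have h2 := hx.2.2
    -- hd w x = hd w b + 1, hd w x ≤ 2, hd w b ≥ 2
    have hwb : 2 ≤ hammingDist w b := by
      have hne0 : hammingDist w b ≠ 0 := by
        simp only [ne_eq, hammingDist_eq_zero]
        exact fun hh => h0 hh.symm
      omega
    omega
  obtain ⟨x0, hx0⟩ := hne
  have hwb3 : hammingDist w b ≤ 3 := by
    have := key x0 hx0
    rw [Finset.mem_powersetCard] at this
    have hx0' := hx0
    rw [hT, Finset.mem_inter, mem_nbrF, Finset.mem_filter] at hx0'
    have hcard1 : (dF b x0).card = 1 := by rw [← hd_eq]; exact hx0'.1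
    rw [Finset.card_eq_one] at hcard1
    obtain ⟨i, hi⟩ := hcard1
    have hiw : i ∈ dF b w := this.1 (by rw [hi]; simp)
    have := hd_flip_mem (w := w) hiw
    have hx' : x0 = flipF {i} b := by rw [← flipF_dF b x0, hi]
    rw [← hx'] at this
    have h2 := hx0'.2.2
    omega
  calc T.card ≤ ((dF b w).powersetCard 1).card := by
        apply Finset.card_le_card_of_injOn _ key
        intro x hx y hy hxy
        rw [← flipF_dF b x, ← flipF_dF b y, hxy]
    _ = (dF b w).card.choose 1 := Finset.card_powersetCard 1 _
    _ ≤ 3 := by rw [Nat.choose_one_right, ← hd_eq, hammingDist_comm]; exact hwb3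

/-- at most 6 vertices at Hamming distance 2 from both endpoints of a distance-4 pair -/
lemma card_six {c c' : V n} (h4 : hammingDist c c' = 4) :
    (Finset.univ.filter fun b : V n => hammingDist c b = 2 ∧ hammingDist c' b = 2).card ≤ 6 := by
  have key : ∀ b ∈ (Finset.univ.filter fun b : V n =>
      hammingDist c b = 2 ∧ hammingDist c' b = 2), dF c b ∈ (dF c c').powersetCard 2 := by
    intro b hb
    rw [Finset.mem_filter] at hb
    rw [Finset.mem_powersetCard]
    have h2 : (dF c b).card = 2 := by rw [← hd_eq]; exact hb.2.1
    have h2' : (dF b c').card = 2 := by rw [← hd_eq, hammingDist_comm]; exact hb.2.2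
    refine ⟨?_, h2⟩
    have htr : dF c c' = dF c b ∆ dF b c' := dF_trans c b c'
    have hcs := card_symmDiff' (dF c b) (dF b c')
    have h4' : (dF c c').card = 4 := by rw [← hd_eq]; exact h4
    rw [← htr] at hcs
    have hint : (dF c b ∩ dF b c').card = 0 := by omega
    rw [Finset.card_eq_zero] at hint
    rw [htr]
    intro i hi
    rw [Finset.mem_symmDiff]
    left
    refine ⟨hi, ?_⟩
    intro hmem
    have : i ∈ dF c b ∩ dF b c' := Finset.mem_inter.2 ⟨hi, hmem⟩
    rw [hint] at this
    exact absurd this (Finset.notMem_empty i)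
  calc _ ≤ ((dF c c').powersetCard 2).card := by
        apply Finset.card_le_card_of_injOn _ key
        intro x hx y hy hxy
        rw [← flipF_dF c x, ← flipF_dF c y, hxy]
    _ = (dF c c').card.choose 2 := Finset.card_powersetCard 2 _
    _ ≤ 6 := by
        rw [← hd_eq, h4]
        decide

/-- Bonferroni inequality -/
lemma bonferroni {α β : Type*} [DecidableEq α] [DecidableEq β] (I : Finset α) (F : α → Finset β) :
    (∑ a ∈ I, ((F a).card : ℝ)) - (1/2) * ∑ p ∈ I.offDiag, ((F p.1 ∩ F p.2).card : ℝ)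
      ≤ ((I.biUnion F).card : ℝ) := by
  induction I using Finset.induction_on with
  | empty => simp
  | @insert a I ha ih =>
    rw [Finset.biUnion_insert, Finset.sum_insert ha, Finset.offDiag_insert ha]
    have hdisj1 : Disjoint (I.offDiag ∪ {a} ×ˢ I) (I ×ˢ {a}) := by
      rw [Finset.disjoint_left]
      rintro ⟨p1, p2⟩ hp hq
      rw [Finset.mem_product, Finset.mem_singleton] at hq
      rcases Finset.mem_union.1 hp with h | h
      · exact ha (hq.2 ▸ (Finset.mem_offDiag.1 h).2.1)
      · rw [Finset.mem_product, Finset.mem_singleton] at h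
        exact ha (hq.2 ▸ h.2)
    have hdisj2 : Disjoint I.offDiag ({a} ×ˢ I) := by
      rw [Finset.disjoint_left]
      rintro ⟨p1, p2⟩ hp hq
      rw [Finset.mem_product, Finset.mem_singleton] at hq
      exact ha (hq.1 ▸ (Finset.mem_offDiag.1 hp).1)
    rw [Finset.sum_union hdisj1, Finset.sum_union hdisj2]
    have hsum1 : ∑ p ∈ {a} ×ˢ I, ((F p.1 ∩ F p.2).card : ℝ)
        = ∑ b ∈ I, ((F a ∩ F b).card : ℝ) := by
      rw [Finset.sum_product]
      simp
    have hsum2 : ∑ p ∈ I ×ˢ {a}, ((F p.1 ∩ F p.2).card : ℝ)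
        = ∑ b ∈ I, ((F a ∩ F b).card : ℝ) := by
      rw [Finset.sum_product]
      simp [Finset.inter_comm]
    rw [hsum1, hsum2]
    have hcap : ((F a ∩ I.biUnion F).card : ℝ) ≤ ∑ b ∈ I, ((F a ∩ F b).card : ℝ) := by
      rw [Finset.inter_biUnion]
      calc ((I.biUnion fun b => F a ∩ F b).card : ℝ)
          ≤ ((∑ b ∈ I, (F a ∩ F b).card : ℕ) : ℝ) := by
            exact_mod_cast Nat.cast_le.2 Finset.card_biUnion_le
        _ = _ := by push_cast; ring
    have hu : ((F a ∪ I.biUnion F).card : ℝ)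
        = (F a).card + ((I.biUnion F).card : ℝ) - ((F a ∩ I.biUnion F).card : ℝ) := by
      exact_mod_cast Finset.cast_card_union
    rw [hu]
    linarith


section PairBound

variable {n : ℕ} (tt : ℕ) (BF : Finset (V n))

/-- number of ordered pairs at Hamming distance 2 in BF -/
def PP (BF : Finset (V n)) : ℕ := (((BF ×ˢ BF)).filter fun p => hammingDist p.1 p.2 = 2).card

def eB (BF : Finset (V n)) (b : V n) : ℕ := (BF.filter fun c => hammingDist b c = 2).card

lemma sum_eB : PP BF = ∑ b ∈ BF, eB BF b := by
  rw [PP, Finset.card_eq_sum_card_fiberwise (f := Prod.fst) (t := BF)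
    (fun p hp => (Finset.mem_product.1 (Finset.mem_filter.1 hp).1).1)]
  apply Finset.sum_congr rfl
  intro b hb
  rw [eB]
  apply Finset.card_bij (fun p _ => p.2)
  · intro p hp
    simp only [Finset.mem_filter, Finset.mem_product] at hp ⊢
    exact ⟨hp.1.1.2, hp.2 ▸ hp.1.2⟩
  · rintro ⟨p1, p2⟩ hp ⟨q1, q2⟩ hq h
    simp only [Finset.mem_filter] at hp hq
    simp only at h
    rw [Prod.mk.injEq]
    exact ⟨hp.2.trans hq.2.symm, h⟩
  · intro c hc
    simp only [Finset.mem_filter] at hc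
    exact ⟨(b, c), by simp [Finset.mem_filter, Finset.mem_product, hb, hc.1, hc.2], rfl⟩

/-- the triple-counting Finset -/
def XT (BF : Finset (V n)) : Finset (V n × V n × V n) :=
  (BF ×ˢ (BF ×ˢ BF)).filter fun q =>
    hammingDist q.1 q.2.1 = 2 ∧ hammingDist q.1 q.2.2 = 2 ∧ hammingDist q.2.1 q.2.2 = 4

lemma XT_le : (XT BF).card ≤ 6 * BF.card ^ 2 := by
  rw [XT, Finset.card_eq_sum_card_fiberwise (f := fun q => q.2) (t := BF ×ˢ BF)
    (fun q hq => (Finset.mem_product.1 (Finset.mem_filter.1 hq).1).2)]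
  calc _ ≤ ∑ _p ∈ BF ×ˢ BF, 6 := by
        apply Finset.sum_le_sum
        intro p _hp
        set Fib := ((BF ×ˢ (BF ×ˢ BF)).filter fun q =>
            hammingDist q.1 q.2.1 = 2 ∧ hammingDist q.1 q.2.2 = 2 ∧
            hammingDist q.2.1 q.2.2 = 4).filter (fun q => q.2 = p) with hFib
        rcases Finset.eq_empty_or_nonempty Fib with he | hne
        · rw [he, Finset.card_empty]; norm_num
        · obtain ⟨q0, hq0⟩ := hne
          rw [hFib, Finset.mem_filter, Finset.mem_filter] at hq0
          have h4 : hammingDist p.1 p.2 = 4 := by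
            have := hq0.1.2.2.2
            rwa [hq0.2] at this
          calc Fib.card ≤ (Finset.univ.filter fun b : V n =>
                hammingDist p.1 b = 2 ∧ hammingDist p.2 b = 2).card := by
                apply Finset.card_le_card_of_injOn (fun q => q.1)
                · intro q hq
                  rw [hFib, Finset.mem_coe, Finset.mem_filter, Finset.mem_filter] at hq
                  obtain ⟨⟨_, h1, h2, _⟩, hq2⟩ := hq
                  subst hq2
                  simp only [Finset.mem_coe, Finset.mem_filter, Finset.mem_univ, true_and]
                  exact ⟨by rwa [hammingDist_comm], by rwa [hammingDist_comm]⟩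
                · rintro ⟨a1, a2⟩ haa ⟨b1, b2⟩ hbb h
                  rw [hFib] at haa hbb
                  simp only [Finset.mem_coe, Finset.mem_filter] at haa hbb
                  simp only at h
                  rw [Prod.mk.injEq]
                  exact ⟨h, haa.2.trans hbb.2.symm⟩
            _ ≤ 6 := card_six h4
    _ = 6 * BF.card ^ 2 := by
        rw [Finset.sum_const, Finset.card_product, smul_eq_mul]
        ring

set_option maxHeartbeats 1000000 in
lemma XT_eq_sum : (XT BF).card = ∑ b ∈ BF, ((XT BF).filter fun q => q.1 = b).card := by
  exact Finset.card_eq_sum_card_fiberwise (f := Prod.fst) (s := XT BF) (t := BF)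
    (fun q hq => (Finset.mem_product.1 (Finset.mem_filter.1 hq).1).1)

lemma eB_sq_le (hspread : ∀ x : V n, (BF.filter fun c => hammingDist x c = 1).card ≤ tt)
    {b : V n} (hb : b ∈ BF) :
    eB BF b ^ 2 + 2 * eB BF b ≤ ((XT BF).filter fun q => q.1 = b).card + 2 * tt * eB BF b := by
  classical
  set Pb := BF.filter fun c => hammingDist b c = 2 with hPb
  set deg := fun i : Fin n => (Pb.filter fun c => i ∈ dF b c).card with hdeg
  have heB : eB BF b = Pb.card := rfl
  -- each coordinate degree is < tt
  have hdegle : ∀ i : Fin n, deg i + 1 ≤ tt := by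
    intro i
    have hbP : b ∉ Pb.filter fun c => i ∈ dF b c := by
      intro hcon
      rw [Finset.mem_filter, hPb, Finset.mem_filter] at hcon
      simp [hammingDist_self] at hcon
    have hsub : insert b (Pb.filter fun c => i ∈ dF b c)
        ⊆ BF.filter fun c => hammingDist (flipF {i} b) c = 1 := by
      intro c hc
      rcases Finset.mem_insert.1 hc with rfl | hc
      · exact Finset.mem_filter.2 ⟨hb, by rw [hammingDist_comm, hd_flipF]; simp⟩
      · rw [Finset.mem_filter] at hc
        obtain ⟨hcPb, hci⟩ := hc
        rw [hPb, Finset.mem_filter] at hcPb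
        refine Finset.mem_filter.2 ⟨hcPb.1, ?_⟩
        have htr : dF (flipF {i} b) c = dF (flipF {i} b) b ∆ dF b c := dF_trans _ _ _
        have h1 : dF (flipF {i} b) b = {i} := by rw [dF_comm, dF_flipF]
        rw [h1] at htr
        have hset : ({i} : Finset (Fin n)) ∆ dF b c = (dF b c).erase i := by
          ext j
          by_cases hj : j = i <;> simp [Finset.mem_symmDiff, hj, hci]
        have hc2 : (dF b c).card = 2 := by rw [← hd_eq]; exact hcPb.2
        rw [hd_eq, htr, hset, Finset.card_erase_of_mem hci, hc2]
    calc deg i + 1 = (insert b (Pb.filter fun c => i ∈ dF b c)).card := by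
          rw [Finset.card_insert_of_notMem hbP]
      _ ≤ (BF.filter fun c => hammingDist (flipF {i} b) c = 1).card :=
          Finset.card_le_card hsub
      _ ≤ tt := hspread _
  -- sum of degrees
  have hsumdeg : ∑ i : Fin n, deg i = 2 * eB BF b := by
    calc ∑ i : Fin n, deg i = ∑ i : Fin n, ∑ c ∈ Pb, if i ∈ dF b c then 1 else 0 := by
          apply Finset.sum_congr rfl
          intro i _
          rw [hdeg]
          exact Finset.card_filter _ _
      _ = ∑ c ∈ Pb, ∑ i : Fin n, if i ∈ dF b c then 1 else 0 := Finset.sum_comm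
      _ = ∑ c ∈ Pb, (dF b c).card := by
          apply Finset.sum_congr rfl
          intro c _
          rw [← Finset.card_filter]
          congr 1
          ext j
          simp
      _ = ∑ c ∈ Pb, 2 := by
          apply Finset.sum_congr rfl
          intro c hc
          rw [hPb, Finset.mem_filter] at hc
          rw [← hd_eq]
          exact hc.2
      _ = 2 * eB BF b := by
          rw [Finset.sum_const, smul_eq_mul, heB, mul_comm]
  -- Σ deg² + Σ deg ≤ tt Σ deg
  have hsq : (∑ i : Fin n, deg i ^ 2) + (∑ i : Fin n, deg i) ≤ tt * ∑ i : Fin n, deg i := by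
    rw [← Finset.sum_add_distrib, Finset.mul_sum]
    apply Finset.sum_le_sum
    intro i _
    calc deg i ^ 2 + deg i = deg i * (deg i + 1) := by ring
      _ ≤ deg i * tt := Nat.mul_le_mul_left _ (hdegle i)
      _ = tt * deg i := mul_comm _ _
  -- main: e² ≤ Fb + Σ deg²
  have hmain : eB BF b ^ 2 ≤ ((XT BF).filter fun q => q.1 = b).card + ∑ i : Fin n, deg i ^ 2 := by
    have hsplit := Finset.card_filter_add_card_filter_not
      (s := Pb ×ˢ Pb) (p := fun p => Disjoint (dF b p.1) (dF b p.2))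
    have hprod : (Pb ×ˢ Pb).card = eB BF b ^ 2 := by
      rw [Finset.card_product, heB]; ring
    -- disjoint part injects into the triple fiber
    have h1 : ((Pb ×ˢ Pb).filter fun p => Disjoint (dF b p.1) (dF b p.2)).card
        ≤ ((XT BF).filter fun q => q.1 = b).card := by
      apply Finset.card_le_card_of_injOn (fun p => (b, p))
      · intro p hp
        simp only [Finset.mem_coe, Finset.mem_filter, Finset.mem_product] at hp
        obtain ⟨⟨hp1, hp2⟩, hdisj⟩ := hp
        rw [hPb, Finset.mem_filter] at hp1 hp2
        refine Finset.mem_filter.2 ⟨Finset.mem_filter.2 ⟨?_, hp1.2, hp2.2, ?_⟩, rfl⟩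
        · exact Finset.mem_product.2 ⟨hb, Finset.mem_product.2 ⟨hp1.1, hp2.1⟩⟩
        · -- hd p.1 p.2 = 4
          have htr : dF p.1 p.2 = dF p.1 b ∆ dF b p.2 := dF_trans _ _ _
          have hcs := card_symmDiff' (dF p.1 b) (dF b p.2)
          have hint : (dF p.1 b ∩ dF b p.2).card = 0 := by
            rw [Finset.card_eq_zero, ← Finset.disjoint_iff_inter_eq_empty, dF_comm]
            exact hdisj
          have hc1 : (dF p.1 b).card = 2 := by
            rw [dF_comm, ← hd_eq]; exact hp1.2
          have hc2 : (dF b p.2).card = 2 := by rw [← hd_eq]; exact hp2.2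
          rw [hd_eq, htr]
          omega
      · intro p _ q _ hpq
        simpa using hpq
    -- non-disjoint part is at most Σ deg²
    have h2 : ((Pb ×ˢ Pb).filter fun p => ¬ Disjoint (dF b p.1) (dF b p.2)).card
        ≤ ∑ i : Fin n, deg i ^ 2 := by
      have hsub : ((Pb ×ˢ Pb).filter fun p => ¬ Disjoint (dF b p.1) (dF b p.2))
          ⊆ Finset.univ.biUnion fun i : Fin n =>
            (Pb.filter fun c => i ∈ dF b c) ×ˢ (Pb.filter fun c => i ∈ dF b c) := by
        intro p hp
        rw [Finset.mem_filter] at hp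
        obtain ⟨hpmem, hnd⟩ := hp
        rw [Finset.not_disjoint_iff] at hnd
        obtain ⟨i, hi1, hi2⟩ := hnd
        apply Finset.mem_biUnion.2
        refine ⟨i, Finset.mem_univ i, ?_⟩
        rw [Finset.mem_product] at hpmem
        exact Finset.mem_product.2 ⟨Finset.mem_filter.2 ⟨hpmem.1, hi1⟩,
          Finset.mem_filter.2 ⟨hpmem.2, hi2⟩⟩
      calc _ ≤ _ := Finset.card_le_card hsub
        _ ≤ ∑ i : Fin n, ((Pb.filter fun c => i ∈ dF b c) ×ˢ
              (Pb.filter fun c => i ∈ dF b c)).card := Finset.card_biUnion_le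
        _ = ∑ i : Fin n, deg i ^ 2 := by
            apply Finset.sum_congr rfl
            intro i _
            rw [Finset.card_product, hdeg]
            ring
    omega
  have hfin : (∑ i : Fin n, deg i ^ 2) + 2 * eB BF b ≤ 2 * tt * eB BF b := by
    have := hsq
    rw [hsumdeg] at this
    calc (∑ i : Fin n, deg i ^ 2) + 2 * eB BF b ≤ tt * (2 * eB BF b) := this
      _ = 2 * tt * eB BF b := by ring
  omega

/-- The key clustering bound, in ℝ. -/
lemma PP_bound (hspread : ∀ x : V n, (BF.filter fun c => hammingDist x c = 1).card ≤ tt) :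
    ((PP BF : ℝ)) ^ 2 ≤ 6 * (BF.card : ℝ) ^ 3 + 2 * tt * BF.card * PP BF := by
  have hsum : (PP BF : ℝ) ^ 2 ≤ (BF.card : ℝ) * ∑ b ∈ BF, ((eB BF b : ℝ)) ^ 2 := by
    have := sq_sum_le_card_mul_sum_sq (s := BF) (f := fun b => ((eB BF b : ℝ)))
    calc (PP BF : ℝ) ^ 2 = (∑ b ∈ BF, ((eB BF b : ℝ))) ^ 2 := by
          rw [sum_eB (BF := BF)]
          push_cast
          ring
      _ ≤ _ := this
  have hsum2 : ∑ b ∈ BF, (eB BF b) ^ 2 + 2 * PP BF ≤ (XT BF).card + 2 * tt * PP BF := by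
    have h1 : ∑ b ∈ BF, ((eB BF b) ^ 2 + 2 * eB BF b)
        ≤ ∑ b ∈ BF, (((XT BF).filter fun q => q.1 = b).card + 2 * tt * eB BF b) := by
      apply Finset.sum_le_sum
      intro b hb
      exact eB_sq_le tt BF hspread hb
    rw [Finset.sum_add_distrib, Finset.sum_add_distrib, ← Finset.mul_sum, ← Finset.mul_sum,
      ← sum_eB, ← XT_eq_sum] at h1
    exact h1
  have hXT := XT_le (BF := BF)
  have hcast : (∑ b ∈ BF, (eB BF b) ^ 2 : ℝ) ≤ 6 * (BF.card : ℝ) ^ 2 + 2 * tt * PP BF := by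
    have : (∑ b ∈ BF, (eB BF b) ^ 2) ≤ 6 * BF.card ^ 2 + 2 * tt * PP BF := by omega
    exact_mod_cast this
  have hc2 : (∑ b ∈ BF, ((eB BF b : ℝ)) ^ 2) = ((∑ b ∈ BF, (eB BF b) ^ 2 : ℕ) : ℝ) := by
    push_cast
    ring
  nlinarith [Nat.cast_nonneg (α := ℝ) BF.card, Nat.cast_nonneg (α := ℝ) (PP BF)]

end PairBound

lemma symmDiff_singleton_erase {n : ℕ} {i : Fin n} {p : Finset (Fin n)} (hi : i ∈ p) :
    ({i} : Finset (Fin n)) ∆ p = p.erase i := by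
  ext j
  by_cases hj : j = i <;> simp [Finset.mem_symmDiff, hj, hi]

lemma card_X1 {n : ℕ} (w : V n) (S : Finset (Fin n)) :
    (Finset.univ.filter fun x : V n =>
        hammingDist w x = 2 ∧ ((dF w x) ∩ S).Nonempty).card
      + (n - S.card).choose 2 = n.choose 2 := by
  classical
  have hbij : (Finset.univ.filter fun x : V n =>
      hammingDist w x = 2 ∧ ((dF w x) ∩ S).Nonempty).card
      = (((Finset.univ : Finset (Fin n)).powersetCard 2).filter
          fun p => (p ∩ S).Nonempty).card := by
    apply Finset.card_bij (fun x _ => dF w x)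
    · intro x hx
      rw [Finset.mem_filter] at hx
      refine Finset.mem_filter.2 ⟨Finset.mem_powersetCard.2 ⟨Finset.subset_univ _, ?_⟩, hx.2.2⟩
      rw [← hd_eq]; exact hx.2.1
    · intro x hx y hy hxy
      rw [← flipF_dF w x, ← flipF_dF w y, hxy]
    · intro p hp
      rw [Finset.mem_filter, Finset.mem_powersetCard] at hp
      refine ⟨flipF p w, ?_, dF_flipF p w⟩
      rw [Finset.mem_filter]
      refine ⟨Finset.mem_univ _, ?_, ?_⟩
      · rw [hd_flipF, hp.1.2]
      · rw [dF_flipF]; exact hp.2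
  have hneg : (((Finset.univ : Finset (Fin n)).powersetCard 2).filter
      fun p => ¬ (p ∩ S).Nonempty) = Sᶜ.powersetCard 2 := by
    ext p
    rw [Finset.mem_filter, Finset.mem_powersetCard, Finset.mem_powersetCard]
    constructor
    · rintro ⟨⟨-, hcard⟩, hns⟩
      refine ⟨?_, hcard⟩
      intro j hj
      rw [Finset.mem_compl]
      intro hjS
      exact hns ⟨j, Finset.mem_inter.2 ⟨hj, hjS⟩⟩
    · rintro ⟨hsub, hcard⟩
      refine ⟨⟨Finset.subset_univ _, hcard⟩, ?_⟩
      rintro ⟨j, hj⟩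
      rw [Finset.mem_inter] at hj
      exact (Finset.mem_compl.1 (hsub hj.1)) hj.2
  have hsplit := Finset.card_filter_add_card_filter_not
    (s := (Finset.univ : Finset (Fin n)).powersetCard 2)
    (p := fun p => (p ∩ S).Nonempty)
  rw [hneg] at hsplit
  rw [hbij]
  have h1 : (((Finset.univ : Finset (Fin n)).powersetCard 2)).card = n.choose 2 := by
    rw [Finset.card_powersetCard, Finset.card_univ, Fintype.card_fin]
  have h2 : (Sᶜ.powersetCard 2).card = (n - S.card).choose 2 := by
    rw [Finset.card_powersetCard, Finset.card_compl, Fintype.card_fin]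
  omega

lemma mem_nbhdSet' {n : ℕ} {A : Set (V n)} {x : V n} :
    x ∈ nbhdSet n A ↔ ∃ a ∈ A, hammingDist a x = 1 := by
  simp only [nbhdSet, Set.mem_iUnion, exists_prop]
  constructor
  · rintro ⟨a, ha, hx⟩
    exact ⟨a, ha, mem_nbhd.1 hx⟩
  · rintro ⟨a, ha, hx⟩
    exact ⟨a, ha, mem_nbhd.2 hx⟩

end OneStabAux

end OneStabAuxSec

open OneStabAux
open scoped symmDiff

set_option maxHeartbeats 2000000

/-- Lemma 3.7 (1-stab): a weaker stability result for sets whose neighbourhood can be large,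
assuming the set does not cluster around two different vertices. -/
theorem one_stab
    (t : ℕ → ℕ) (ht5 : ∀ n, 5 ≤ t n) (ht : Tendsto t atTop atTop)
    (hto : (fun n => (t n : ℝ)) =o[atTop] fun n => (n : ℝ))
    (s : ℕ → ℝ)
    (hst : ∀ n : ℕ, 0 ≤ 1 - 2 * s n / n - 14 * Real.sqrt (t n / n)) :
    ∀ᶠ n : ℕ in atTop, ∀ A : Set (V n),
      A.ncard = n →
      ((nbhdSet n A).ncard : ℝ) ≤ (n.choose 2 : ℝ) + s n * n →
      (¬ ∃ w₁ w₂ : V n, w₁ ≠ w₂ ∧ (t n : ℝ) < ((A ∩ nbhd n w₁).ncard : ℝ) ∧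
          (t n : ℝ) < ((A ∩ nbhd n w₂).ncard : ℝ)) →
      ∃ w : V n,
        (n : ℝ) * Real.sqrt (1 - 2 * s n / n - 14 * Real.sqrt (t n / n)) ≤
          ((nbhd n w ∩ A).ncard : ℝ) := by
  have h1 : ∀ᶠ n : ℕ in atTop, (t n : ℝ) ≤ (n : ℝ) := by
    filter_upwards [hto.def one_pos] with n hn
    simpa using hn
  filter_upwards [h1, Filter.eventually_ge_atTop 13] with n htn hn13
  intro A hAcard hNbig hmono
  classical
  have hn0 : (0:ℝ) < (n:ℝ) := by
    have : 0 < n := by omega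
    exact_mod_cast this
  have hT5 : (5:ℝ) ≤ ((t n:ℝ)) := by exact_mod_cast ht5 n
  have hAfin : A.Finite := Set.toFinite A
  set AF := hAfin.toFinset with hAFdef
  have hAF : AF.card = n := by
    rw [← Set.ncard_eq_toFinset_card]; exact hAcard
  have hddx : ∀ x : V n, (A ∩ nbhd n x).ncard
      = (AF.filter fun c => hammingDist x c = 1).card := by
    intro x
    rw [← Set.ncard_coe_finset]
    congr 1
    ext c
    simp only [Finset.coe_filter, Set.mem_setOf_eq, Set.mem_inter_iff, hAFdef,
      Set.Finite.mem_toFinset, mem_nbhd]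
    try tauto
  -- choice of the possibly-heavy vertex
  have hwch : ∃ w : V n, ∀ x : V n, x ≠ w →
      (AF.filter fun c => hammingDist x c = 1).card ≤ t n := by
    by_cases hex : ∃ x : V n, (t n : ℝ) < ((A ∩ nbhd n x).ncard : ℝ)
    · obtain ⟨w0, hw0⟩ := hex
      refine ⟨w0, fun x hx => ?_⟩
      by_contra hgt
      push_neg at hgt
      apply hmono
      refine ⟨x, w0, hx, ?_, hw0⟩
      rw [hddx x]
      exact_mod_cast hgt
    · push_neg at hex
      refine ⟨fun _ => false, fun x _ => ?_⟩
      have := hex x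
      rw [hddx x] at this
      exact_mod_cast this
  obtain ⟨w, hsp⟩ := hwch
  set BF := AF.filter (fun b => ¬ (hammingDist w b = 1)) with hBFdef
  set m := BF.card with hmdef
  have hDm : (AF.filter fun b => hammingDist w b = 1).card + m = n := by
    rw [hmdef, hBFdef, Finset.card_filter_add_card_filter_not, hAF]
  have hmn : m ≤ n := by omega
  have hBsp : ∀ x : V n, (BF.filter fun c => hammingDist x c = 1).card ≤ t n := by
    intro x
    by_cases hxw : x = w
    · subst hxw
      have hempty : BF.filter (fun c => hammingDist x c = 1) = ∅ := by
        rw [Finset.filter_eq_empty_iff]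
        intro c hc
        rw [hBFdef, Finset.mem_filter] at hc
        exact hc.2
      rw [hempty]
      simp
    · calc (BF.filter fun c => hammingDist x c = 1).card
          ≤ (AF.filter fun c => hammingDist x c = 1).card := by
            apply Finset.card_le_card
            intro c hc
            rw [Finset.mem_filter] at hc ⊢
            rw [hBFdef, Finset.mem_filter] at hc
            exact ⟨hc.1.1, hc.2⟩
        _ ≤ t n := hsp x hxw
  -- the clustering bound
  have hPb := PP_bound (t n) BF hBsp
  set P := PP BF with hPdef
  set M : ℝ := (m : ℝ) with hMdef
  set sm : ℝ := Real.sqrt M with hsmdef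
  have hM0 : (0:ℝ) ≤ M := Nat.cast_nonneg m
  have hsm2 : sm * sm = M := Real.mul_self_sqrt hM0
  have hsmnn : 0 ≤ sm := Real.sqrt_nonneg M
  have hP0 : (0:ℝ) ≤ (P:ℝ) := Nat.cast_nonneg P
  have hT0 : (0:ℝ) ≤ ((t n : ℝ)) := by linarith
  have hPle : (P:ℝ) ≤ 4*((t n : ℝ))*M + 4*M*sm := by
    rcases le_or_gt (P:ℝ) (4*((t n : ℝ))*M) with h | h
    · have : 0 ≤ 4*M*sm := by positivity
      linarith
    · by_contra hcon
      push_neg at hcon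
      have hMsm : 0 ≤ 4*M*sm := by positivity
      have hTM : 0 ≤ 4*((t n : ℝ))*M := by positivity
      have h4Msm : 4*M*sm < (P:ℝ) := by linarith
      have h4TM : 4*((t n : ℝ))*M < (P:ℝ) := by linarith
      have h1 : 2*((t n : ℝ))*M*(P:ℝ) ≤ (P:ℝ)*(P:ℝ)/2 := by
        have : 2*((t n : ℝ))*M ≤ (P:ℝ)/2 := by linarith
        have := mul_le_mul_of_nonneg_right this hP0
        linarith
      have h2 : (P:ℝ)^2 ≤ 12*M^3 := by
        have hPb' : ((PP BF : ℝ)) ^ 2 ≤ 6 * M ^ 3 + 2 * ((t n : ℝ)) * M * (PP BF : ℝ) := hPb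
        nlinarith [hPb', h1]
      have h3 : 16*M^3 ≤ (P:ℝ)^2 := by
        have hle : 4*M*sm ≤ (P:ℝ) := le_of_lt h4Msm
        have hsqle : (4*M*sm)^2 ≤ (P:ℝ)^2 := by
          apply pow_le_pow_left₀ hMsm hle
        have hid : (4*M*sm)^2 = 16*(M*M*(sm*sm)) := by ring
        rw [hid, hsm2] at hsqle
        calc 16*M^3 = 16*(M*M*M) := by ring
          _ ≤ (P:ℝ)^2 := hsqle
      have hM3 : 0 ≤ M^3 := by positivity
      have hPpos : (0:ℝ) < (P:ℝ) := lt_of_le_of_lt (by positivity) hcon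
      have hPsq : (0:ℝ) < (P:ℝ)^2 := by positivity
      linarith
  -- the Γ-set and its pieces
  have hGfin : (nbhdSet n A).Finite := Set.toFinite _
  have hNcard : (nbhdSet n A).ncard = hGfin.toFinset.card := Set.ncard_eq_toFinset_card _ _
  set GF := hGfin.toFinset with hGFdef
  set S := Finset.univ.filter (fun i : Fin n => flipF {i} w ∈ AF) with hSdef
  have hScard : S.card + m = n := by
    have hSD : S.card = (AF.filter fun b => hammingDist w b = 1).card := by
      apply Finset.card_bij (fun i _ => flipF {i} w)
      · intro i hi
        rw [hSdef, Finset.mem_filter] at hi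
        refine Finset.mem_filter.2 ⟨hi.2, ?_⟩
        rw [hd_flipF]
        simp
      · intro i hi j hj hij
        have : ({i} : Finset (Fin n)) = {j} := by
          rw [← dF_flipF {i} w, ← dF_flipF {j} w, hij]
        simpa using this
      · intro b hb
        rw [Finset.mem_filter] at hb
        have h1 : (dF w b).card = 1 := by rw [← hd_eq]; exact hb.2
        rw [Finset.card_eq_one] at h1
        obtain ⟨i, hi⟩ := h1
        have hbi : flipF {i} w = b := by rw [← hi, flipF_dF]
        refine ⟨i, ?_, hbi⟩
        rw [hSdef, Finset.mem_filter]
        exact ⟨Finset.mem_univ _, by rw [hbi]; exact hb.1⟩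
    omega
  set X1 := Finset.univ.filter
    (fun x : V n => hammingDist w x = 2 ∧ ((dF w x) ∩ S).Nonempty) with hX1def
  have hX1card : X1.card + m.choose 2 = n.choose 2 := by
    have hc := card_X1 w S
    have hns : n - S.card = m := by omega
    rw [hns] at hc
    exact hc
  set ballF := Finset.univ.filter (fun x : V n => hammingDist w x ≤ 2) with hballdef
  set I := BF.erase w with hIdef
  set F : V n → Finset (V n) := fun b => nbrF b \ ballF with hFdef
  set X2 := I.biUnion F with hX2def
  -- memberships
  have hIprop : ∀ b ∈ I, b ∈ A ∧ b ≠ w ∧ ¬ (hammingDist w b = 1) := by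
    intro b hb
    rw [hIdef, Finset.mem_erase] at hb
    have hb2 := hb.2
    rw [hBFdef, Finset.mem_filter] at hb2
    exact ⟨(hAfin.mem_toFinset).1 hb2.1, hb.1, hb2.2⟩
  have hsubG : X1 ∪ X2 ⊆ GF := by
    intro x hx
    rw [hGFdef, Set.Finite.mem_toFinset, mem_nbhdSet']
    rcases Finset.mem_union.1 hx with hx | hx
    · rw [hX1def, Finset.mem_filter] at hx
      obtain ⟨-, h2, ⟨i, hi⟩⟩ := hx
      rw [Finset.mem_inter] at hi
      have hiS := hi.2
      rw [hSdef, Finset.mem_filter] at hiS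
      refine ⟨flipF {i} w, (hAfin.mem_toFinset).1 hiS.2, ?_⟩
      have hdw : dF (flipF {i} w) w = {i} := by rw [dF_comm, dF_flipF]
      have htr : dF (flipF {i} w) x = dF (flipF {i} w) w ∆ dF w x := dF_trans _ _ _
      rw [hdw, symmDiff_singleton_erase hi.1] at htr
      rw [hd_eq, htr, Finset.card_erase_of_mem hi.1, ← hd_eq, h2]
    · rw [hX2def] at hx
      obtain ⟨b, hb, hxb⟩ := Finset.mem_biUnion.1 hx
      refine ⟨b, (hIprop b hb).1, ?_⟩
      rw [hFdef] at hxb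
      have := (Finset.mem_sdiff.1 hxb).1
      exact mem_nbrF.1 this
  have hdisj : Disjoint X1 X2 := by
    rw [Finset.disjoint_left]
    intro x hx1 hx2
    rw [hX1def, Finset.mem_filter] at hx1
    rw [hX2def] at hx2
    obtain ⟨b, hb, hxb⟩ := Finset.mem_biUnion.1 hx2
    rw [hFdef] at hxb
    have hnot := (Finset.mem_sdiff.1 hxb).2
    apply hnot
    rw [hballdef, Finset.mem_filter]
    exact ⟨Finset.mem_univ _, by rw [hx1.2.1]⟩
  have hcardle : X1.card + X2.card ≤ GF.card := by
    rw [← Finset.card_union_of_disjoint hdisj]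
    exact Finset.card_le_card hsubG
  -- lower bound on X2 via Bonferroni
  have hFcard : ∀ b ∈ I, (n:ℝ) - 3 ≤ ((F b).card : ℝ) := by
    intro b hb
    obtain ⟨-, hbw, hbd⟩ := hIprop b hb
    have h3 := card_nbr_ball (w := w) hbw hbd
    rw [← hballdef] at h3
    have hsplit := Finset.card_sdiff_add_card_inter (nbrF b) ballF
    rw [card_nbrF] at hsplit
    have : n ≤ (F b).card + 3 := by
      simp only [hFdef]
      omega
    have := (Nat.cast_le (α := ℝ)).2 this
    push_cast at this
    linarith
  have hpairs : ∑ p ∈ I.offDiag, ((F p.1 ∩ F p.2).card : ℝ) ≤ 2 * (P:ℝ) := by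
    have hsplit := Finset.sum_filter_add_sum_filter_not I.offDiag
      (fun p => hammingDist p.1 p.2 = 2) (fun p => ((F p.1 ∩ F p.2).card : ℝ))
    have hzero : ∑ p ∈ I.offDiag.filter (fun p => ¬ hammingDist p.1 p.2 = 2),
        ((F p.1 ∩ F p.2).card : ℝ) = 0 := by
      apply Finset.sum_eq_zero
      intro p hp
      rw [Finset.mem_filter] at hp
      have hne : p.1 ≠ p.2 := (Finset.mem_offDiag.1 hp.1).2.2
      have hcc := card_common hne
      rw [if_neg hp.2] at hcc
      have h0 : (F p.1 ∩ F p.2).card = 0 := by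
        have hsub : F p.1 ∩ F p.2 ⊆ nbrF p.1 ∩ nbrF p.2 := by
          apply Finset.inter_subset_inter <;>
            (rw [hFdef]; exact Finset.sdiff_subset)
        have := Finset.card_le_card hsub
        omega
      rw [h0]
      norm_num
    have htwo : ∑ p ∈ I.offDiag.filter (fun p => hammingDist p.1 p.2 = 2),
        ((F p.1 ∩ F p.2).card : ℝ)
        ≤ 2 * (I.offDiag.filter (fun p => hammingDist p.1 p.2 = 2)).card := by
      calc _ ≤ ∑ _p ∈ I.offDiag.filter (fun p => hammingDist p.1 p.2 = 2), (2:ℝ) := by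
            apply Finset.sum_le_sum
            intro p hp
            rw [Finset.mem_filter] at hp
            have hne : p.1 ≠ p.2 := (Finset.mem_offDiag.1 hp.1).2.2
            have hcc := card_common hne
            rw [if_pos hp.2] at hcc
            have hsub : F p.1 ∩ F p.2 ⊆ nbrF p.1 ∩ nbrF p.2 := by
              apply Finset.inter_subset_inter <;>
                (rw [hFdef]; exact Finset.sdiff_subset)
            have := (Finset.card_le_card hsub).trans hcc
            exact_mod_cast this
        _ = _ := by
            rw [Finset.sum_const, nsmul_eq_mul, mul_comm]
    have hsubP : (I.offDiag.filter (fun p => hammingDist p.1 p.2 = 2)).card ≤ P := by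
      rw [hPdef, PP]
      apply Finset.card_le_card
      intro p hp
      rw [Finset.mem_filter] at hp
      have hmem := Finset.mem_offDiag.1 hp.1
      have hsubI : I ⊆ BF := by rw [hIdef]; exact Finset.erase_subset _ _
      exact Finset.mem_filter.2 ⟨Finset.mem_product.2 ⟨hsubI hmem.1, hsubI hmem.2.1⟩, hp.2⟩
    have : ((I.offDiag.filter (fun p => hammingDist p.1 p.2 = 2)).card : ℝ) ≤ (P:ℝ) := by
      exact_mod_cast hsubP
    linarith
  have hIcard : (M:ℝ) - 1 ≤ (I.card : ℝ) := by
    have h1 : m - 1 ≤ I.card := by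
      rw [hIdef, hmdef]
      exact Finset.pred_card_le_card_erase
    have h2 : ((m - 1 : ℕ) : ℝ) ≤ (I.card : ℝ) := by exact_mod_cast h1
    rcases Nat.eq_zero_or_pos m with h | h
    · rw [hMdef, h]
      have := Nat.cast_nonneg (α := ℝ) I.card
      simp only [Nat.cast_zero]
      linarith
    · have : ((m - 1 : ℕ) : ℝ) = M - 1 := by
        rw [hMdef]
        have : (1:ℕ) ≤ m := h
        push_cast [Nat.cast_sub this]
        ring
      rwa [this] at h2
  have hX2ge : (M - 1) * ((n:ℝ) - 3) - (P:ℝ) ≤ (X2.card : ℝ) := by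
    have hb := bonferroni I F
    have hsum : (I.card : ℝ) * ((n:ℝ) - 3) ≤ ∑ b ∈ I, ((F b).card : ℝ) := by
      calc (I.card : ℝ) * ((n:ℝ) - 3) = ∑ _b ∈ I, ((n:ℝ) - 3) := by
            rw [Finset.sum_const, nsmul_eq_mul]
        _ ≤ _ := Finset.sum_le_sum hFcard
    have hn3 : (0:ℝ) ≤ (n:ℝ) - 3 := by
      have : (13:ℝ) ≤ (n:ℝ) := by exact_mod_cast hn13
      linarith
    have hmul : (M - 1) * ((n:ℝ) - 3) ≤ (I.card : ℝ) * ((n:ℝ) - 3) :=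
      mul_le_mul_of_nonneg_right hIcard hn3
    rw [hX2def]
    linarith
  -- assemble
  have hX1cast : (X1.card : ℝ) = (n.choose 2 : ℝ) - (m.choose 2 : ℝ) := by
    have h : ((X1.card : ℝ)) + ((m.choose 2 : ℕ) : ℝ) = ((n.choose 2 : ℕ) : ℝ) := by
      exact_mod_cast hX1card
    linarith
  have hNle : (GF.card : ℝ) ≤ (n.choose 2 : ℝ) + s n * n := by
    rw [← hNcard]
    exact hNbig
  have hkey : (M - 1) * ((n:ℝ) - 3) - (P:ℝ) - (m.choose 2 : ℝ) ≤ s n * n := by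
    have h1 : (X1.card : ℝ) + (X2.card : ℝ) ≤ (GF.card : ℝ) := by exact_mod_cast hcardle
    linarith
  have hch2 : (m.choose 2 : ℝ) = M * (M - 1) / 2 := by
    rw [Nat.cast_choose_two]
  -- square-root bookkeeping
  set sn : ℝ := Real.sqrt (n:ℝ) with hsndef
  set st : ℝ := Real.sqrt ((t n : ℝ)) with hstdef
  have hsn2 : sn * sn = (n:ℝ) := Real.mul_self_sqrt (le_of_lt hn0)
  have hst2 : st * st = ((t n : ℝ)) := Real.mul_self_sqrt hT0
  have hstsn : st ≤ sn := Real.sqrt_le_sqrt htn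
  have hst5 : (2.236:ℝ) ≤ st := by
    rw [hstdef]
    rw [show ((2.236:ℝ)) = √(2.236^2) by rw [Real.sqrt_sq]; norm_num]
    apply Real.sqrt_le_sqrt
    nlinarith
  have hsn13 : (3.6:ℝ) ≤ sn := by
    rw [hsndef]
    rw [show ((3.6:ℝ)) = √(3.6^2) by rw [Real.sqrt_sq]; norm_num]
    apply Real.sqrt_le_sqrt
    have : (13:ℝ) ≤ (n:ℝ) := by exact_mod_cast hn13
    nlinarith
  have hsmsn : sm ≤ sn := by
    rw [hsmdef, hsndef]
    apply Real.sqrt_le_sqrt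
    rw [hMdef]
    exact_mod_cast hmn
  have hsnnn : 0 ≤ sn := Real.sqrt_nonneg _
  have hstnn : 0 ≤ st := Real.sqrt_nonneg _
  have hMn : M ≤ (n:ℝ) := by rw [hMdef]; exact_mod_cast hmn
  have hEbound : 2*(P:ℝ) + 5*M + 2*(n:ℝ) ≤ 14 * st * (n:ℝ) * sn := by
    have hnsn : (0:ℝ) ≤ (n:ℝ)*sn := by positivity
    have hTst : ((t n : ℝ)) ≤ st*sn := by
      rw [← hst2]
      exact mul_le_mul_of_nonneg_left hstsn hstnn
    have h8T : 8*(((t n : ℝ))*M) ≤ 8*((st*sn)*(n:ℝ)) := by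
      have : ((t n : ℝ))*M ≤ (st*sn)*(n:ℝ) :=
        mul_le_mul hTst hMn hM0 (by positivity)
      linarith
    have h8M : 8*(M*sm) ≤ 8*((n:ℝ)*sn) := by
      have : M*sm ≤ (n:ℝ)*sn := mul_le_mul hMn hsmsn hsmnn (le_of_lt hn0)
      linarith
    have h83 : (8:ℝ) ≤ 3.6*st := by linarith
    have h8n : 8*((n:ℝ)*sn) ≤ 3.6*st*((n:ℝ)*sn) :=
      mul_le_mul_of_nonneg_right h83 hnsn
    have hstsn8 : (2.236:ℝ)*3.6 ≤ st*sn :=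
      mul_le_mul hst5 hsn13 (by norm_num) hstnn
    have h74 : (7:ℝ) ≤ 2.4*(st*sn) := by linarith
    have h7n : 7*(n:ℝ) ≤ 2.4*(st*sn)*(n:ℝ) :=
      mul_le_mul_of_nonneg_right h74 (le_of_lt hn0)
    have hM7 : 5*M ≤ 5*(n:ℝ) := by linarith
    linarith [hPle, h8T, h8M, h8n, h7n, hM7]
  have hsq : (n:ℝ)^2 - 2*(s n)*(n:ℝ) - 14*st*(n:ℝ)*sn ≤ ((n:ℝ) - M)^2 := by
    have hexp : ((n:ℝ) - M)^2 = (n:ℝ)^2 - 2*((n:ℝ)*M) + M^2 := by ring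
    have hkey2 : M*(n:ℝ) - 3*M - (n:ℝ) + 3 - (P:ℝ) - (M*(M-1)/2) ≤ s n * (n:ℝ) := by
      have e1 : (M-1)*((n:ℝ)-3) = M*(n:ℝ) - 3*M - (n:ℝ) + 3 := by ring
      linarith [hkey, hch2]
    linarith [hkey2, hEbound, hexp]
  have hnM0 : (0:ℝ) ≤ (n:ℝ) - M := by linarith
  have hsqrtdiv : Real.sqrt (((t n : ℝ)) / (n:ℝ)) = st / sn := by
    rw [hstdef, hsndef]
    exact Real.sqrt_div hT0 _
  have hsn0 : sn ≠ 0 := by positivity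
  have hθexp : (n:ℝ)^2 * (1 - 2 * s n / (n:ℝ) - 14 * Real.sqrt (((t n : ℝ)) / (n:ℝ)))
      = (n:ℝ)^2 - 2*(s n)*(n:ℝ) - 14*st*(n:ℝ)*sn := by
    rw [hsqrtdiv]
    have hnn : (n:ℝ) ≠ 0 := ne_of_gt hn0
    have e1 : 2*s n/(n:ℝ)*(n:ℝ)^2 = 2*(s n)*(n:ℝ) := by
      field_simp
    have e2 : 14*(st/sn)*(n:ℝ)^2 = 14*st*(n:ℝ)*sn := by
      rw [show (n:ℝ)^2 = (n:ℝ)*(sn*sn) by rw [hsn2]; ring]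
      field_simp
    calc (n:ℝ)^2 * (1 - 2 * s n / (n:ℝ) - 14 * (st/sn))
        = (n:ℝ)^2 - 2*s n/(n:ℝ)*(n:ℝ)^2 - 14*(st/sn)*(n:ℝ)^2 := by ring
      _ = (n:ℝ)^2 - 2*(s n)*(n:ℝ) - 14*st*(n:ℝ)*sn := by rw [e1, e2]
  have hfin : (n:ℝ) * Real.sqrt (1 - 2 * s n / (n:ℝ) - 14 * Real.sqrt (((t n : ℝ)) / (n:ℝ)))
      ≤ (n:ℝ) - M := by
    have h2 : (n:ℝ)^2 * (1 - 2 * s n / (n:ℝ) - 14 * Real.sqrt (((t n : ℝ)) / (n:ℝ)))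
        ≤ ((n:ℝ) - M)^2 := by
      rw [hθexp]
      exact hsq
    calc (n:ℝ) * Real.sqrt (1 - 2 * s n / (n:ℝ) - 14 * Real.sqrt (((t n : ℝ)) / (n:ℝ)))
        = Real.sqrt ((n:ℝ)^2 * (1 - 2 * s n / (n:ℝ) - 14 * Real.sqrt (((t n : ℝ)) / (n:ℝ)))) := by
          rw [Real.sqrt_mul (sq_nonneg _), Real.sqrt_sq (le_of_lt hn0)]
      _ ≤ Real.sqrt (((n:ℝ) - M)^2) := Real.sqrt_le_sqrt h2
      _ = (n:ℝ) - M := Real.sqrt_sq hnM0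
  refine ⟨w, ?_⟩
  have hfinal : ((nbhd n w ∩ A).ncard : ℝ) = (n:ℝ) - M := by
    rw [Set.inter_comm, hddx w]
    have h1 : (AF.filter fun c => hammingDist w c = 1).card = n - m := by omega
    rw [h1]
    rw [hMdef]
    push_cast [Nat.cast_sub hmn]
    ring
  rw [hfinal]
  exact hfin

end
end
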